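/- arXiv:1609.04884 — 15 statements merged into one kernel-verified Lean document; each statement's English description precedes it below -/
import Mathlib

section
/- Let T be a bounded operator on a complex Hilbert space H with closed range, and write T = [[A, B],[0,0]] with respect to the decomposition H = R(T) ⊕ N(T*), where A : R(T) → R(T) and B : N(T*) → R(T). Then R(T) ∩ R(T*) = {0} if and only if the closure of R(B) equals R(T). -/
open ContinuousLinearMap

variable {H : Type*} [NormedAddCommGroup H] [InnerProductSpace ℂ H] [CompleteSpace H]

noncomputable def opB (T : H →L[ℂ] H) (K N : Submodule ℂ H) [CompleteSpace K] :
    N →L[ℂ] K :=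
  (K.orthogonalProjectionOnto) ∘L (T ∘L N.subtypeL)

lemma ker_adjoint_eq (T : H →L[ℂ] H) :
    LinearMap.ker (adjoint T).toLinearMap = (LinearMap.range T.toLinearMap)ᗮ := by
  ext x
  simp only [LinearMap.mem_ker, Submodule.mem_orthogonal, ContinuousLinearMap.coe_coe,
    LinearMap.mem_range]
  constructor
  · rintro hx u ⟨y, rfl⟩
    rw [← adjoint_inner_right, hx, inner_zero_right]
  · intro hx
    have h0 : inner ℂ (T ((adjoint T) x)) x = (0 : ℂ) := hx _ ⟨_, rfl⟩
    rw [← adjoint_inner_right, inner_self_eq_zero] at h0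
    exact h0

theorem stmt0 (T : H →L[ℂ] H) (hT : IsClosed (LinearMap.range T.toLinearMap : Set H)) :
    haveI : CompleteSpace (LinearMap.range T.toLinearMap) := by exact hT.completeSpace_coe
    (LinearMap.range T.toLinearMap ⊓ LinearMap.range (adjoint T).toLinearMap = ⊥ ↔
      (LinearMap.range (opB T (LinearMap.range T.toLinearMap) (LinearMap.ker (adjoint T).toLinearMap)).toLinearMap).topologicalClosure = ⊤) := by
  haveI : CompleteSpace (LinearMap.range T.toLinearMap) := hT.completeSpace_coe
  set K := LinearMap.range T.toLinearMap with hK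
  set N := LinearMap.ker (adjoint T).toLinearMap with hN
  have hNK : N = Kᗮ := ker_adjoint_eq T
  have hKN : K = Nᗮ := by
    rw [hNK, Submodule.orthogonal_orthogonal_eq_closure, hT.submodule_topologicalClosure_eq]
  rw [Submodule.topologicalClosure_eq_top_iff]
  constructor
  · intro h
    rw [Submodule.eq_bot_iff]
    rintro y hy
    have hmem : adjoint T (y : H) ∈ Nᗮ := by
      rw [Submodule.mem_orthogonal]
      rintro n hn
      have h1 : inner ℂ ((opB T K N) ⟨n, hn⟩) y = (0 : ℂ) := hy _ ⟨_, rfl⟩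
      simp only [opB, ContinuousLinearMap.comp_apply, Submodule.subtypeL_apply,
        Submodule.inner_orthogonalProjectionOnto_eq_of_mem_right] at h1
      rwa [← adjoint_inner_right] at h1
    have hTy : adjoint T (y : H) ∈ K ⊓ LinearMap.range (adjoint T).toLinearMap :=
      Submodule.mem_inf.mpr ⟨by rw [hKN]; exact hmem, ⟨_, rfl⟩⟩
    rw [h, Submodule.mem_bot] at hTy
    have hyN : (y : H) ∈ N := hTy
    have hyK : (y : H) ∈ Nᗮ := hKN ▸ y.2
    have : (y : H) = 0 := by
      have := Submodule.mem_orthogonal _ (y : H) |>.mp hyK _ hyN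
      rwa [inner_self_eq_zero] at this
    exact Subtype.ext this
  · intro h
    rw [Submodule.eq_bot_iff]
    rintro x ⟨hxK, z, rfl⟩
    set z₁ : K := K.orthogonalProjectionOnto z with hz₁
    have hz2 : z - (z₁ : H) ∈ Kᗮ := K.sub_starProjection_mem_orthogonal z
    have hz2' : z - (z₁ : H) ∈ N := hNK ▸ hz2
    have heq : adjoint T z = adjoint T (z₁ : H) := by
      have h0 : adjoint T (z - (z₁ : H)) = 0 := hz2'
      rw [map_sub, sub_eq_zero] at h0
      exact h0
    have hz₁0 : z₁ = 0 := by
      have hz₁mem : z₁ ∈ (LinearMap.range (opB T K N).toLinearMap)ᗮ := by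
        rw [Submodule.mem_orthogonal]
        rintro u ⟨n, rfl⟩
        have h1 : (inner ℂ ((opB T K N) n) z₁ : ℂ) = inner ℂ (T (n : H)) (z₁ : H) := by
          simp only [opB, ContinuousLinearMap.comp_apply, Submodule.subtypeL_apply,
            Submodule.inner_orthogonalProjectionOnto_eq_of_mem_right]
        rw [ContinuousLinearMap.coe_coe, h1, ← adjoint_inner_right, ← heq]
        have hn : (n : H) ∈ Kᗮ := hNK ▸ n.2
        have h2 := Submodule.mem_orthogonal _ (n : H) |>.mp hn _ hxK
        rw [ContinuousLinearMap.coe_coe] at h2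
        rw [← inner_conj_symm, h2, map_zero]
      rw [h, Submodule.mem_bot] at hz₁mem
      exact hz₁mem
    rw [ContinuousLinearMap.coe_coe, heq, hz₁0]
    simp
end

section
/- Let T be a bounded operator on a complex Hilbert space H with closed range, and write T = [[A, B],[0,0]] with respect to H = R(T) ⊕ N(T*). Then R(T) + R(T*) = H if and only if R(B*) = N(T*). -/
open ContinuousLinearMap

variable {H : Type*} [NormedAddCommGroup H] [InnerProductSpace ℂ H] [CompleteSpace H]

theorem stmt1 (T : H →L[ℂ] H) (hT : IsClosed (LinearMap.range (T : H →ₗ[ℂ] H) : Set H)) :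
    haveI : CompleteSpace (LinearMap.range (T : H →ₗ[ℂ] H)) := hT.completeSpace_coe
    haveI : CompleteSpace (LinearMap.ker (adjoint T : H →ₗ[ℂ] H)) :=
      (ContinuousLinearMap.isClosed_ker (adjoint T)).completeSpace_coe
    (LinearMap.range (T : H →ₗ[ℂ] H) ⊔ LinearMap.range (adjoint T : H →ₗ[ℂ] H) = ⊤ ↔
      LinearMap.range (adjoint (opB T (LinearMap.range (T : H →ₗ[ℂ] H))
        (LinearMap.ker (adjoint T : H →ₗ[ℂ] H)))).toLinearMap = ⊤) := by
  haveI : CompleteSpace (LinearMap.range (T : H →ₗ[ℂ] H)) := hT.completeSpace_coe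
  haveI : CompleteSpace (LinearMap.ker (adjoint T : H →ₗ[ℂ] H)) :=
    (ContinuousLinearMap.isClosed_ker (adjoint T)).completeSpace_coe
  set M := LinearMap.range (T : H →ₗ[ℂ] H) with hMdef
  set N := LinearMap.ker (adjoint T : H →ₗ[ℂ] H) with hNdef
  have hN : N = Mᗮ := by
    ext x
    simp only [hNdef, LinearMap.mem_ker, Submodule.mem_orthogonal, ContinuousLinearMap.coe_coe]
    constructor
    · intro h u hu
      obtain ⟨y, rfl⟩ := hu
      rw [ContinuousLinearMap.coe_coe, ← adjoint_inner_right T y x, h, inner_zero_right]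
    · intro h
      have h2 : inner ℂ (T ((adjoint T) x)) x = (0 : ℂ) :=
        h (T ((adjoint T) x)) ⟨(adjoint T) x, rfl⟩
      rw [← adjoint_inner_right T ((adjoint T) x) x] at h2
      rwa [inner_self_eq_zero] at h2
  have hNo : Nᗮ = M := by
    rw [hN, Submodule.orthogonal_orthogonal]
  have hadj : adjoint (opB T M N) =
      (N.orthogonalProjectionOnto) ∘L ((adjoint T) ∘L M.subtypeL) := by
    rw [opB, adjoint_comp, adjoint_comp, Submodule.adjoint_subtypeL,
      Submodule.adjoint_orthogonalProjectionOnto, comp_assoc]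
  rw [hadj]
  constructor
  · intro h
    rw [LinearMap.range_eq_top]
    rintro ⟨y, hy⟩
    have hyT : y ∈ M ⊔ LinearMap.range (adjoint T : H →ₗ[ℂ] H) := h ▸ Submodule.mem_top
    obtain ⟨m, hm, w, hw, hmw⟩ := Submodule.mem_sup.mp hyT
    obtain ⟨x, rfl⟩ := hw
    have hx : x ∈ M ⊔ N := by
      rw [hN, Submodule.sup_orthogonal_of_hasOrthogonalProjection]; trivial
    obtain ⟨m', hm', n', hn', rfl⟩ := Submodule.mem_sup.mp hx
    have hTn' : (adjoint T) n' = 0 := hn'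
    refine ⟨⟨m', hm'⟩, ?_⟩
    apply Subtype.ext
    have hPm : N.orthogonalProjectionOnto m = 0 := by
      apply Submodule.orthogonalProjectionOnto_eq_zero_iff.mpr
      rw [hNo]; exact hm
    have e1 : (adjoint T) (m' + n') = (adjoint T) m' := by rw [map_add, hTn', add_zero]
    have e2 := congrArg (N.orthogonalProjectionOnto) hmw
    rw [map_add, ContinuousLinearMap.coe_coe, e1, hPm, zero_add] at e2
    show ((N.orthogonalProjectionOnto) ((adjoint T) m') : H) = y
    rw [e2]
    exact Submodule.starProjection_eq_self_iff.mpr hy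
  · intro h
    rw [eq_top_iff]
    rintro x -
    have hx : x ∈ M ⊔ N := by
      rw [hN, Submodule.sup_orthogonal_of_hasOrthogonalProjection]; trivial
    obtain ⟨m, hm, n, hn, rfl⟩ := Submodule.mem_sup.mp hx
    have hsurj := LinearMap.range_eq_top.mp h
    obtain ⟨⟨m', hm'⟩, hmn⟩ := hsurj ⟨n, hn⟩
    have hmn' : N.orthogonalProjectionOnto ((adjoint T) m') = ⟨n, hn⟩ := hmn
    have hPm : N.orthogonalProjectionOnto m = 0 := by
      apply Submodule.orthogonalProjectionOnto_eq_zero_iff.mpr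
      rw [hNo]; exact hm
    have hPn : N.orthogonalProjectionOnto n = ⟨n, hn⟩ := Subtype.ext (Submodule.starProjection_eq_self_iff.mpr hn)
    have hdiff : m + n - (adjoint T) m' ∈ M := by
      rw [← hNo]
      refine Submodule.orthogonalProjectionOnto_eq_zero_iff.mp ?_
      rw [map_sub, map_add, hPm, hPn, hmn', zero_add, sub_self]
    have hsum : m + n = m + n - (adjoint T) m' + (adjoint T) m' := by abel
    rw [hsum]
    exact Submodule.add_mem_sup hdiff ⟨m', rfl⟩
end

section
/- Let T be a bounded operator on a complex Hilbert space H with closed range, and write T = [[A, B],[0,0]] with respect to H = R(T) ⊕ N(T*). Then R(T) ⊕ R(T*) = H (a direct, not necessarily orthogonal, sum with trivial intersection) if and only if B is invertible (a bounded bijection from N(T*) onto R(T)). -/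
open ContinuousLinearMap

open scoped InnerProductSpace

variable {H : Type*} [NormedAddCommGroup H] [InnerProductSpace ℂ H] [CompleteSpace H]

lemma opB_coe (T : H →L[ℂ] H) (K N : Submodule ℂ H) [CompleteSpace K] (n : N)
    (h : T n ∈ K) : (opB T K N n : H) = T n := by
  have h2 : K.orthogonalProjectionOnto (T (n : H)) = ⟨T n, h⟩ :=
    Submodule.orthogonalProjectionOnto_mem_subspace_eq_self ⟨T n, h⟩
  show (K.orthogonalProjectionOnto (T (N.subtypeL n)) : H) = T n
  rw [show T (N.subtypeL n) = T (n : H) from rfl, h2]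

lemma ker_adjoint (T : H →L[ℂ] H) :
    LinearMap.ker (adjoint T : H →ₗ[ℂ] H) = (LinearMap.range (T : H →ₗ[ℂ] H))ᗮ := by
  ext x
  rw [LinearMap.mem_ker, Submodule.mem_orthogonal']
  constructor
  · rintro h u ⟨y, rfl⟩
    rw [ContinuousLinearMap.coe_coe] at h ⊢; rw [← ContinuousLinearMap.adjoint_inner_left, h, inner_zero_left]
  · intro h
    rw [ContinuousLinearMap.coe_coe, ← inner_self_eq_zero (𝕜 := ℂ), ContinuousLinearMap.adjoint_inner_left]
    exact h _ ⟨_, rfl⟩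

lemma ker_self (T : H →L[ℂ] H) :
    LinearMap.ker (T : H →ₗ[ℂ] H) = (LinearMap.range (adjoint T : H →ₗ[ℂ] H))ᗮ := by
  conv_lhs => rw [← ContinuousLinearMap.adjoint_adjoint T]
  exact ker_adjoint (adjoint T)

set_option maxHeartbeats 1000000 in
/-- Closed range theorem (Hilbert space case): if `T` has closed range, so does `adjoint T`. -/
lemma isClosed_range_adjoint (T : H →L[ℂ] H)
    (hT : IsClosed (LinearMap.range (T : H →ₗ[ℂ] H) : Set H)) :
    IsClosed (LinearMap.range (adjoint T : H →ₗ[ℂ] H) : Set H) := by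
  haveI : CompleteSpace (LinearMap.range (T : H →ₗ[ℂ] H)) := hT.completeSpace_coe
  set M : Submodule ℂ H := (LinearMap.ker (T : H →ₗ[ℂ] H))ᗮ with hM
  haveI : CompleteSpace M := (LinearMap.ker (T : H →ₗ[ℂ] H)).isClosed_orthogonal.completeSpace_coe
  haveI : CompleteSpace (LinearMap.ker (T : H →ₗ[ℂ] H)) :=
    (ContinuousLinearMap.isClosed_ker T).completeSpace_coe
  set T1 : M →L[ℂ] LinearMap.range (T : H →ₗ[ℂ] H) := opB T (LinearMap.range (T : H →ₗ[ℂ] H)) M with hT1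
  have key1 : ∀ m : M, (T1 m : H) = T m := fun m =>
    opB_coe T _ _ m (LinearMap.mem_range_self _ _)
  have hker : LinearMap.ker (T1 : M →ₗ[ℂ] LinearMap.range (T : H →ₗ[ℂ] H)) = ⊥ := by
    rw [Submodule.eq_bot_iff]
    rintro m hm
    rw [LinearMap.mem_ker, ContinuousLinearMap.coe_coe] at hm
    have h1 : T (m : H) = 0 := by rw [← key1 m, hm]; rfl
    have h2 : (m : H) ∈ LinearMap.ker (T : H →ₗ[ℂ] H) ⊓ (LinearMap.ker (T : H →ₗ[ℂ] H))ᗮ := ⟨h1, m.2⟩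
    rw [Submodule.inf_orthogonal_eq_bot] at h2
    exact Subtype.ext h2
  have hsurj : LinearMap.range (T1 : M →ₗ[ℂ] LinearMap.range (T : H →ₗ[ℂ] H)) = ⊤ := by
    rw [Submodule.eq_top_iff']
    rintro ⟨y, x, rfl⟩
    have hx : x ∈ LinearMap.ker (T : H →ₗ[ℂ] H) ⊔ (LinearMap.ker (T : H →ₗ[ℂ] H))ᗮ := by
      rw [Submodule.sup_orthogonal_of_hasOrthogonalProjection]; trivial
    obtain ⟨k, hk, m, hm, rfl⟩ := Submodule.mem_sup.mp hx
    refine ⟨⟨m, hm⟩, ?_⟩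
    apply Subtype.ext
    rw [ContinuousLinearMap.coe_coe, key1]
    simp [show T k = 0 from LinearMap.mem_ker.mp hk]
  set e := ContinuousLinearEquiv.ofBijective T1 hker hsurj with he
  have hbound : ∀ u : LinearMap.range (T : H →ₗ[ℂ] H), ‖(u : H)‖ ≤ ‖e.symm.toContinuousLinearMap‖ * ‖adjoint T u‖ := by
    intro u
    set m : M := e.symm u with hm
    have h4 : T1 m = u := by
      have h5 := e.apply_symm_apply u
      rw [he, ContinuousLinearEquiv.coeFn_ofBijective] at h5
      exact h5
    have hTm : T (m : H) = (u : H) := by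
      rw [← key1 m, h4]
    have h1 : (‖(u : H)‖ : ℝ) * ‖(u : H)‖ = ‖⟪(m : H), adjoint T (u : H)⟫_ℂ‖ := by
      rw [ContinuousLinearMap.adjoint_inner_right, hTm,
        inner_self_eq_norm_sq_to_K (𝕜 := ℂ)]
      rw [norm_pow]
      simp [abs_of_nonneg (norm_nonneg _), pow_two]
    have h2 : ‖⟪(m : H), adjoint T (u : H)⟫_ℂ‖ ≤ ‖(m : H)‖ * ‖adjoint T (u : H)‖ :=
      norm_inner_le_norm _ _
    have h3 : ‖(m : H)‖ ≤ ‖e.symm.toContinuousLinearMap‖ * ‖u‖ := by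
      have := e.symm.toContinuousLinearMap.le_opNorm u
      simpa using this
    rcases eq_or_ne (u : H) 0 with h0 | h0
    · simp [h0]
    · have hu : 0 < ‖(u : H)‖ := norm_pos_iff.mpr h0
      have hnu : ‖u‖ = ‖(u : H)‖ := rfl
      nlinarith [norm_nonneg (adjoint T (u : H)), norm_nonneg (m : H),
        mul_le_mul_of_nonneg_right h3 (norm_nonneg (adjoint T (u : H))), h1 ▸ h2]
  set g : (LinearMap.range (T : H →ₗ[ℂ] H)) →L[ℂ] H := (adjoint T) ∘L (LinearMap.range (T : H →ₗ[ℂ] H)).subtypeL with hg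
  have hanti : AntilipschitzWith ‖e.symm.toContinuousLinearMap‖₊ g := by
    apply g.antilipschitz_of_bound
    intro u
    simpa [hg] using hbound u
  have hcr : IsClosed (Set.range g) := hanti.isClosed_range g.uniformContinuous
  have hEq : (LinearMap.range (adjoint T : H →ₗ[ℂ] H) : Set H) = Set.range g := by
    ext y
    constructor
    · rintro ⟨x, rfl⟩
      refine ⟨(LinearMap.range (T : H →ₗ[ℂ] H)).orthogonalProjectionOnto x, ?_⟩
      have hmem : x - (LinearMap.range (T : H →ₗ[ℂ] H)).orthogonalProjectionOnto x ∈ LinearMap.ker (adjoint T : H →ₗ[ℂ] H) := by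
        rw [ker_adjoint]
        exact Submodule.sub_starProjection_mem_orthogonal x
      have : adjoint T (x - (LinearMap.range (T : H →ₗ[ℂ] H)).orthogonalProjectionOnto x) = 0 :=
        LinearMap.mem_ker.mp hmem
      simp only [map_sub] at this
      have := sub_eq_zero.mp this
      simp only [Submodule.coe_orthogonalProjectionOnto_apply] at this
      simp [hg, ← this]
    · rintro ⟨u, rfl⟩
      exact ⟨u, rfl⟩
  rw [hEq]
  exact hcr

/-- If `P` and `Q` are closed complementary subspaces, the orthogonal complements sum to `⊤`. -/
lemma dual_sup {P Q : Submodule ℂ H} (hP : IsClosed (P : Set H)) (hQ : IsClosed (Q : Set H))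
    (h : IsCompl P Q) : Pᗮ ⊔ Qᗮ = ⊤ := by
  set f := P.linearProjOfClosedCompl Q h hP hQ with hf
  set Qp : H →L[ℂ] H := P.subtypeL ∘L f with hQp
  have hleft : ∀ x ∈ P, Qp x = x := by
    intro x hx
    simp only [hQp, comp_apply, P.coe_subtypeL', Submodule.coe_subtype, hf,
      Submodule.coe_continuous_linearProjOfClosedCompl']
    exact congrArg Subtype.val (Submodule.projectionOnto_apply_left h ⟨x, hx⟩)
  have hright : ∀ x ∈ Q, Qp x = 0 := by
    intro x hx
    simp only [hQp, comp_apply, P.coe_subtypeL', Submodule.coe_subtype, hf,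
      Submodule.coe_continuous_linearProjOfClosedCompl']
    rw [Submodule.projectionOnto_apply_right h ⟨x, hx⟩]
    rfl
  rw [Submodule.eq_top_iff']
  intro x
  have h1 : adjoint Qp x ∈ Qᗮ := by
    rw [Submodule.mem_orthogonal']
    intro q hq
    rw [ContinuousLinearMap.adjoint_inner_left, hright q hq, inner_zero_right]
  have h2 : x - adjoint Qp x ∈ Pᗮ := by
    rw [Submodule.mem_orthogonal']
    intro p hp
    rw [inner_sub_left, ContinuousLinearMap.adjoint_inner_left, hleft p hp, sub_self]
  have : x = (x - adjoint Qp x) + adjoint Qp x := by abel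
  rw [this]
  exact Submodule.add_mem_sup h2 h1

theorem stmt2 (T : H →L[ℂ] H) (hT : IsClosed (LinearMap.range (T : H →ₗ[ℂ] H) : Set H)) :
    haveI : CompleteSpace (LinearMap.range (T : H →ₗ[ℂ] H)) := by exact hT.completeSpace_coe
    (LinearMap.range (T : H →ₗ[ℂ] H) ⊓ LinearMap.range (adjoint T : H →ₗ[ℂ] H) = ⊥ ∧
        LinearMap.range (T : H →ₗ[ℂ] H) ⊔ LinearMap.range (adjoint T : H →ₗ[ℂ] H) = ⊤ ↔
      Function.Bijective (opB T (LinearMap.range (T : H →ₗ[ℂ] H)) (LinearMap.ker (adjoint T : H →ₗ[ℂ] H)))) := by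
  haveI : CompleteSpace (LinearMap.range (T : H →ₗ[ℂ] H)) := hT.completeSpace_coe
  set U := LinearMap.range (T : H →ₗ[ℂ] H) with hU
  set W := LinearMap.range (adjoint T : H →ₗ[ℂ] H) with hWdef
  set N := LinearMap.ker (adjoint T : H →ₗ[ℂ] H) with hN
  set B := opB T U N with hB
  have hW : IsClosed (W : Set H) := isClosed_range_adjoint T hT
  haveI : CompleteSpace W := hW.completeSpace_coe
  have hNU : N = Uᗮ := ker_adjoint T
  have hKW : LinearMap.ker (T : H →ₗ[ℂ] H) = Wᗮ := ker_self T
  have hUN : Uᗮᗮ = U := by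
    rw [Submodule.orthogonal_orthogonal]
  have hWW : Wᗮᗮ = W := by
    rw [Submodule.orthogonal_orthogonal]
  -- B n = T n as elements of H
  have key : ∀ n : N, (B n : H) = T n := fun n =>
    opB_coe T _ _ n (LinearMap.mem_range_self _ _)
  have hBzero : ∀ n : N, B n = 0 ↔ T (n : H) = 0 := by
    intro n
    constructor
    · intro hn
      rw [← key n, hn]; rfl
    · intro hn
      apply Subtype.ext
      rw [key n, hn]; rfl
  have hinj : Function.Injective B ↔ N ⊓ LinearMap.ker (T : H →ₗ[ℂ] H) = ⊥ := by
    constructor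
    · intro hi
      rw [Submodule.eq_bot_iff]
      rintro x ⟨hx1, hx2⟩
      have : B ⟨x, hx1⟩ = 0 := (hBzero _).mpr hx2
      have := hi (a₁ := ⟨x, hx1⟩) (a₂ := 0) (by simpa using this)
      simpa using congrArg Subtype.val this
    · intro hi
      rw [injective_iff_map_eq_zero]
      intro n hn
      have : (n : H) ∈ N ⊓ LinearMap.ker (T : H →ₗ[ℂ] H) := ⟨n.2, (hBzero n).mp hn⟩
      rw [hi] at this
      exact Subtype.ext this
  have hsurj : Function.Surjective B ↔ N ⊔ LinearMap.ker (T : H →ₗ[ℂ] H) = ⊤ := by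
    constructor
    · intro hs
      rw [Submodule.eq_top_iff']
      intro x
      obtain ⟨n, hn⟩ := hs ⟨T x, LinearMap.mem_range_self _ _⟩
      have hTn : T (n : H) = T x := by
        rw [← key n, hn]
      have hker : x - (n : H) ∈ LinearMap.ker (T : H →ₗ[ℂ] H) := by
        rw [LinearMap.mem_ker, ContinuousLinearMap.coe_coe, map_sub, hTn, sub_self]
      have : x = (n : H) + (x - (n : H)) := by abel
      rw [this]
      exact Submodule.add_mem_sup n.2 hker
    · intro hs u
      obtain ⟨y, x, rfl⟩ := u
      have hx : x ∈ N ⊔ LinearMap.ker (T : H →ₗ[ℂ] H) := by rw [hs]; trivial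
      obtain ⟨a, ha, b, hb, rfl⟩ := Submodule.mem_sup.mp hx
      refine ⟨⟨a, ha⟩, ?_⟩
      apply Subtype.ext
      rw [key]
      simp [show T b = 0 from LinearMap.mem_ker.mp hb]
  constructor
  · rintro ⟨h1, h2⟩
    constructor
    · rw [hinj, hNU, hKW]
      have : Uᗮ ⊓ Wᗮ = (U ⊔ W)ᗮ := Submodule.inf_orthogonal U W
      rw [this, h2, Submodule.top_orthogonal_eq_bot]
    · rw [hsurj, hNU, hKW]
      exact dual_sup hT hW ⟨disjoint_iff.mpr h1, codisjoint_iff.mpr h2⟩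
  · intro hb
    have hi := hinj.mp hb.1
    have hs := hsurj.mp hb.2
    constructor
    · have hle : U ⊓ W ≤ Uᗮᗮ ⊓ Wᗮᗮ :=
        inf_le_inf (Submodule.le_orthogonal_orthogonal U) (Submodule.le_orthogonal_orthogonal W)
      have : Uᗮᗮ ⊓ Wᗮᗮ = (Uᗮ ⊔ Wᗮ)ᗮ := Submodule.inf_orthogonal _ _
      rw [this, ← hNU, ← hKW, hs, Submodule.top_orthogonal_eq_bot] at hle
      exact le_bot_iff.mp hle
    · have hNc : IsClosed (N : Set H) := by
        rw [hNU]; exact U.isClosed_orthogonal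
      have hKc : IsClosed ((LinearMap.ker (T : H →ₗ[ℂ] H) : Submodule ℂ H) : Set H) := by
        rw [hKW]; exact W.isClosed_orthogonal
      have := dual_sup hNc hKc ⟨disjoint_iff.mpr hi, codisjoint_iff.mpr hs⟩
      rw [hNU, hKW, hUN, hWW] at this
      exact this
end

section
/- Let T be a bounded operator on a complex Hilbert space H with closed range. Then R(TT† − T†T) is closed if and only if R(T) + R(T*) is closed, where T† is the Moore–Penrose inverse of T. -/
open ContinuousLinearMap

variable {H : Type*} [NormedAddCommGroup H] [InnerProductSpace ℂ H] [CompleteSpace H]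

local notation "⟪" x ", " y "⟫" => @inner ℂ _ _ x y

lemma proj_contraction (Q : H →L[ℂ] H) (hQ2 : ∀ x, Q (Q x) = Q x)
    (hQa : adjoint Q = Q) (x : H) : ‖Q x‖ ≤ ‖x‖ := by
  have h : ⟪Q x, Q x⟫ = ⟪x, Q x⟫ := by
    have h0 := ContinuousLinearMap.adjoint_inner_left Q (Q x) x
    rw [hQa, hQ2] at h0
    exact h0
  have h2 : ‖Q x‖ ^ 2 = RCLike.re ⟪x, Q x⟫ := by
    rw [← h, inner_self_eq_norm_sq]
  have h3 : RCLike.re ⟪x, Q x⟫ ≤ ‖x‖ * ‖Q x‖ := by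
    calc RCLike.re ⟪x, Q x⟫ ≤ ‖⟪x, Q x⟫‖ := RCLike.re_le_norm _
    _ ≤ ‖x‖ * ‖Q x‖ := norm_inner_le_norm _ _
  nlinarith [norm_nonneg (Q x), norm_nonneg x]


/-- If `M ⊔ N` is closed, every element of `M ⊔ N` admits a norm-controlled decomposition
with the `M`-part orthogonal to `M ⊓ N`. -/
lemma decomp_bound (M N : Submodule ℂ H) (hMc : IsClosed (M : Set H))
    (hNc : IsClosed (N : Set H))
    (h : IsClosed ((M ⊔ N : Submodule ℂ H) : Set H)) :
    ∃ C : ℝ, 0 < C ∧ ∀ w ∈ M ⊔ N, ∃ u v : H,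
      u ∈ M ⊓ (M ⊓ N)ᗮ ∧ v ∈ N ∧ w = u + v ∧ ‖u‖ ≤ C * ‖w‖ ∧ ‖v‖ ≤ C * ‖w‖ := by
  set L : Submodule ℂ H := M ⊓ N with hL
  have hLc : IsClosed (L : Set H) := hMc.inter hNc
  haveI : CompleteSpace L := hLc.completeSpace_coe
  haveI : CompleteSpace ↥(M ⊔ N) := h.completeSpace_coe
  set K₁ : Submodule ℂ H := M ⊓ Lᗮ with hK₁
  have hK₁c : IsClosed (K₁ : Set H) := hMc.inter (Submodule.isClosed_orthogonal L)
  haveI : CompleteSpace K₁ := hK₁c.completeSpace_coe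
  haveI : CompleteSpace N := hNc.completeSpace_coe
  set Φ : (K₁ × N) →L[ℂ] H := K₁.subtypeL.coprod N.subtypeL with hΦ
  have hΦapp : ∀ p : K₁ × N, Φ p = (p.1 : H) + (p.2 : H) := fun p => rfl
  have hΦmem : ∀ p : K₁ × N, Φ p ∈ M ⊔ N := by
    intro p
    rw [hΦapp]
    exact Submodule.add_mem _ (Submodule.mem_sup_left p.1.2.1)
      (Submodule.mem_sup_right p.2.2)
  set Φ' : (K₁ × N) →L[ℂ] ↥(M ⊔ N) := Φ.codRestrict (M ⊔ N) hΦmem with hΦ'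
  have hΦ'app : ∀ p : K₁ × N, ((Φ' p : H)) = (p.1 : H) + (p.2 : H) := fun p => rfl
  have hsup_eq : K₁ ⊔ N = M ⊔ N := by
    apply le_antisymm
    · exact sup_le (le_trans inf_le_left le_sup_left) le_sup_right
    · refine sup_le ?_ le_sup_right
      intro m hm
      have hp : (Submodule.orthogonalProjectionOnto L m : H) ∈ L := (Submodule.orthogonalProjectionOnto L m).2
      have h1 : m - (Submodule.orthogonalProjectionOnto L m : H) ∈ K₁ :=
        ⟨Submodule.sub_mem M hm ((inf_le_left : M ⊓ N ≤ M) hp),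
          Submodule.sub_starProjection_mem_orthogonal (K := L) m⟩
      have h2 : m = (m - (Submodule.orthogonalProjectionOnto L m : H)) + (Submodule.orthogonalProjectionOnto L m : H) := by
        abel
      rw [h2]
      exact Submodule.add_mem _ (Submodule.mem_sup_left h1)
        (Submodule.mem_sup_right ((inf_le_right : M ⊓ N ≤ N) hp))
  have hsurj : Function.Surjective Φ' := by
    rintro ⟨w, hw⟩
    have hw' : w ∈ K₁ ⊔ N := by rw [hsup_eq]; exact hw
    rcases Submodule.mem_sup.1 hw' with ⟨u, hu, v, hv, huv⟩
    exact ⟨(⟨u, hu⟩, ⟨v, hv⟩), Subtype.ext (by rw [hΦ'app]; exact huv)⟩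
  obtain ⟨C, hC0, hC⟩ := Φ'.exists_preimage_norm_le hsurj
  refine ⟨C, hC0, ?_⟩
  intro w hw
  obtain ⟨p, hp1, hp2⟩ := hC ⟨w, hw⟩
  refine ⟨(p.1 : H), (p.2 : H), p.1.2, p.2.2, ?_, ?_, ?_⟩
  · have := congrArg (fun z : ↥(M ⊔ N) => (z : H)) hp1
    simpa [hΦ'app] using this.symm
  · exact le_trans (norm_fst_le p) hp2
  · exact le_trans (norm_snd_le p) hp2

set_option maxHeartbeats 1000000 in
theorem keyPQ (P Q : H →L[ℂ] H) (hP2 : ∀ x, P (P x) = P x) (hQ2 : ∀ x, Q (Q x) = Q x)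
    (hPa : adjoint P = P) (hQa : adjoint Q = Q) :
    IsClosed (LinearMap.range ((P - Q : H →L[ℂ] H) : H →ₗ[ℂ] H) : Set H) ↔
      IsClosed ((LinearMap.range (P : H →ₗ[ℂ] H) ⊔ LinearMap.range (Q : H →ₗ[ℂ] H) : Submodule ℂ H) : Set H) := by
  set M : Submodule ℂ H := LinearMap.range (P : H →ₗ[ℂ] H) with hM
  set N : Submodule ℂ H := LinearMap.range (Q : H →ₗ[ℂ] H) with hN
  set L : Submodule ℂ H := M ⊓ N with hL
  set D : H →L[ℂ] H := P - Q with hD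
  have hDapp : ∀ x, D x = P x - Q x := fun x => rfl
  have hMfix : ∀ x, x ∈ M ↔ P x = x := by
    intro x
    constructor
    · rintro ⟨y, rfl⟩; exact hP2 y
    · intro h; exact ⟨x, h⟩
  have hNfix : ∀ x, x ∈ N ↔ Q x = x := by
    intro x
    constructor
    · rintro ⟨y, rfl⟩; exact hQ2 y
    · intro h; exact ⟨x, h⟩
  -- inner product moves
  have hPinner : ∀ x y : H, ⟪P x, y⟫ = ⟪x, P y⟫ := by
    intro x y
    have h0 := ContinuousLinearMap.adjoint_inner_left P y x
    rw [hPa] at h0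
    exact h0
  have hQinner : ∀ x y : H, ⟪Q x, y⟫ = ⟪x, Q y⟫ := by
    intro x y
    have h0 := ContinuousLinearMap.adjoint_inner_left Q y x
    rw [hQa] at h0
    exact h0
  -- closedness of M, N, L
  have hMc : IsClosed (M : Set H) := by
    have : M = LinearMap.ker ((ContinuousLinearMap.id ℂ H - P : H →L[ℂ] H) : H →ₗ[ℂ] H) := by
      ext x
      rw [hMfix, LinearMap.mem_ker]
      constructor
      · intro h; simp [ContinuousLinearMap.sub_apply, h]
      · intro h
        have h' : x - P x = 0 := by simpa [ContinuousLinearMap.sub_apply] using h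
        exact (sub_eq_zero.mp h').symm
    rw [this]
    exact ContinuousLinearMap.isClosed_ker _
  have hNc : IsClosed (N : Set H) := by
    have : N = LinearMap.ker ((ContinuousLinearMap.id ℂ H - Q : H →L[ℂ] H) : H →ₗ[ℂ] H) := by
      ext x
      rw [hNfix, LinearMap.mem_ker]
      constructor
      · intro h; simp [ContinuousLinearMap.sub_apply, h]
      · intro h
        have h' : x - Q x = 0 := by simpa [ContinuousLinearMap.sub_apply] using h
        exact (sub_eq_zero.mp h').symm
    rw [this]
    exact ContinuousLinearMap.isClosed_ker _
  have hLc : IsClosed (L : Set H) := by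
    have : (L : Set H) = (M : Set H) ∩ (N : Set H) := rfl
    rw [this]
    exact hMc.inter hNc
  haveI : CompleteSpace L := hLc.completeSpace_coe
  -- kernel facts
  have hLker : ∀ x ∈ L, D x = 0 := by
    intro x hx
    rw [hDapp, (hMfix x).1 hx.1, (hNfix x).1 hx.2, sub_self]
  have hOrthoKer : ∀ x ∈ (M ⊔ N)ᗮ, D x = 0 := by
    intro x hx
    rw [Submodule.mem_orthogonal'] at hx
    have hP0 : P x = 0 := by
      rw [← inner_self_eq_zero (𝕜 := ℂ), hPinner, hP2]
      exact hx _ (Submodule.mem_sup_left ⟨x, rfl⟩)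
    have hQ0 : Q x = 0 := by
      rw [← inner_self_eq_zero (𝕜 := ℂ), hQinner, hQ2]
      exact hx _ (Submodule.mem_sup_right ⟨x, rfl⟩)
    rw [hDapp, hP0, hQ0, sub_self]
  -- x in ker D decomposes
  have hKerD : ∀ x, D x = 0 → (P x ∈ L ∧ x - P x ∈ (M ⊔ N)ᗮ) := by
    intro x hx
    rw [hDapp, sub_eq_zero] at hx
    have hPxN : P x ∈ N := by rw [hx]; exact ⟨x, rfl⟩
    have hPxL : P x ∈ L := ⟨⟨x, rfl⟩, hPxN⟩
    refine ⟨hPxL, ?_⟩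
    have hP0 : P (x - P x) = 0 := by rw [map_sub, hP2, sub_self]
    have hQ0 : Q (x - P x) = 0 := by
      rw [map_sub, (hNfix _).1 hPxN, ← hx, sub_self]
    rw [Submodule.mem_orthogonal]
    intro u hu
    rcases Submodule.mem_sup.1 hu with ⟨m, hm, n, hn, rfl⟩
    rw [inner_add_left]
    have h1 : ⟪m, x - P x⟫ = 0 := by
      rw [← (hMfix m).1 hm, hPinner, hP0, inner_zero_right]
    have h2 : ⟪n, x - P x⟫ = 0 := by
      rw [← (hNfix n).1 hn, hQinner, hQ0, inner_zero_right]
    rw [h1, h2, add_zero]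
  have hDinner : ∀ x y : H, ⟪D x, y⟫ = ⟪x, D y⟫ := by
    intro x y
    rw [hDapp, hDapp, inner_sub_left, inner_sub_right, hPinner, hQinner]
  have hsupmem : ∀ y : H, D y ∈ M ⊔ N := by
    intro y
    rw [hDapp]
    exact Submodule.sub_mem _ (Submodule.mem_sup_left ⟨y, rfl⟩)
      (Submodule.mem_sup_right ⟨y, rfl⟩)
  constructor
  · -- range D closed → M + N closed
    intro h
    apply isClosed_of_closure_subset
    intro w hw
    have hw' : w ∈ ((M ⊔ N)ᗮ)ᗮ := by
      rw [Submodule.orthogonal_orthogonal_eq_closure]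
      have := (Submodule.topologicalClosure_coe (M ⊔ N)).symm ▸ hw
      exact this
    set a : H := (Submodule.orthogonalProjectionOnto L w : H) with ha
    have haL : a ∈ L := (Submodule.orthogonalProjectionOnto L w).2
    set b : H := w - a with hb
    have hbL : b ∈ Lᗮ := Submodule.sub_starProjection_mem_orthogonal (K := L) w
    have hsup_le : (M ⊔ N) ≤ ((M ⊔ N)ᗮ)ᗮ := Submodule.le_orthogonal_orthogonal _
    have hbMN : b ∈ ((M ⊔ N)ᗮ)ᗮ :=
      Submodule.sub_mem _ hw' (hsup_le ((le_trans inf_le_left le_sup_left : L ≤ M ⊔ N) haL))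
    have hbker : ∀ x, D x = 0 → ⟪x, b⟫ = 0 := by
      intro x hx
      obtain ⟨h1, h2⟩ := hKerD x hx
      have hsplit : ⟪x, b⟫ = ⟪P x, b⟫ + ⟪x - P x, b⟫ := by
        rw [← inner_add_left, add_sub_cancel]
      rw [hsplit, (Submodule.mem_orthogonal _ _).1 hbL _ h1,
        (Submodule.mem_orthogonal _ _).1 hbMN _ h2, add_zero]
    have hbRD : b ∈ LinearMap.range (D : H →ₗ[ℂ] H) := by
      have h1 : (LinearMap.range (D : H →ₗ[ℂ] H))ᗮ ≤ LinearMap.ker (D : H →ₗ[ℂ] H) := by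
        intro x hx
        rw [Submodule.mem_orthogonal'] at hx
        rw [LinearMap.mem_ker, ContinuousLinearMap.coe_coe, ← inner_self_eq_zero (𝕜 := ℂ), hDinner]
        exact hx _ ⟨D x, rfl⟩
      have h2 : b ∈ ((LinearMap.range (D : H →ₗ[ℂ] H))ᗮ)ᗮ := by
        rw [Submodule.mem_orthogonal]
        intro u hu
        exact hbker u (LinearMap.mem_ker.1 (h1 hu))
      rw [Submodule.orthogonal_orthogonal_eq_closure] at h2
      have h3 : b ∈ closure (LinearMap.range (D : H →ₗ[ℂ] H) : Set H) := by
        rw [← Submodule.topologicalClosure_coe]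
        exact h2
      rwa [h.closure_eq] at h3
    obtain ⟨y, hy⟩ := hbRD
    have hwab : w = a + b := by rw [hb]; abel
    show w ∈ M ⊔ N
    rw [hwab]
    exact Submodule.add_mem _ ((le_trans inf_le_left le_sup_left : L ≤ M ⊔ N) haL)
      (hy ▸ hsupmem y)
  · intro h
    obtain ⟨C, hC0, hC⟩ := decomp_bound M N hMc hNc h
    -- uniqueness of such decompositions
    have huniq : ∀ u v u' v' : H, u ∈ M ⊓ Lᗮ → v ∈ N → u' ∈ M ⊓ Lᗮ → v' ∈ N →
        u + v = u' + v' → u = u' := by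
      intro u v u' v' hu hv hu' hv' he
      have h1 : u - u' ∈ M ⊓ Lᗮ := Submodule.sub_mem _ hu hu'
      have h2 : u - u' = v' - v := by linear_combination (norm := abel) he
      have h3 : u - u' ∈ N := h2 ▸ Submodule.sub_mem _ hv' hv
      have h4 : u - u' ∈ L := ⟨h1.1, h3⟩
      have h5 : u - u' = 0 := by
        rw [← inner_self_eq_zero (𝕜 := ℂ)]
        exact (Submodule.mem_orthogonal _ _).1 h1.2 _ h4
      exact sub_eq_zero.1 h5
    have hcpos : 0 < C * (2 * C + 1) := by nlinarith
    have hest : ∀ x, x ∈ (LinearMap.ker (D : H →ₗ[ℂ] H))ᗮ → ‖x‖ ≤ C * (2 * C + 1) * ‖D x‖ := by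
      intro x hx
      -- P x ∈ M ⊓ Lᗮ
      set l : H := (Submodule.orthogonalProjectionOnto L (P x) : H) with hldef
      have hlL : l ∈ L := (Submodule.orthogonalProjectionOnto L (P x)).2
      have hu : P x - l ∈ Lᗮ := Submodule.sub_starProjection_mem_orthogonal (K := L) (P x)
      have hl0 : l = 0 := by
        have h1 : ⟪l, x⟫ = 0 :=
          (Submodule.mem_orthogonal _ _).1 hx l (LinearMap.mem_ker.2 (hLker l hlL))
        have h2 : ⟪l, x⟫ = ⟪l, l⟫ := by
          have e1 : ⟪l, x⟫ = ⟪P l, x⟫ := by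
            rw [(hMfix l).1 ((inf_le_left : M ⊓ N ≤ M) hlL)]
          have h3 : ⟪l, P x - l⟫ = 0 := (Submodule.mem_orthogonal _ _).1 hu l hlL
          rw [e1, hPinner]
          calc ⟪l, P x⟫ = ⟪l, l⟫ + ⟪l, P x - l⟫ := by
                rw [← inner_add_right]
                congr 1
                abel
          _ = ⟪l, l⟫ := by rw [h3, add_zero]
        rw [h1] at h2
        exact inner_self_eq_zero.1 h2.symm
      have hPxK₁ : P x ∈ M ⊓ Lᗮ := ⟨⟨x, rfl⟩, by simpa [hl0] using hu⟩
      -- contraction for 1 - Q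
      have hIQ : ∀ z : H, ‖z - Q z‖ ≤ ‖z‖ := by
        intro z
        set R : H →L[ℂ] H := ContinuousLinearMap.id ℂ H - Q with hR
        have hRapp : ∀ y, R y = y - Q y := fun y => rfl
        have hR2 : ∀ y, R (R y) = R y := by
          intro y
          simp only [hRapp, map_sub, hQ2]
          abel
        have hRa : adjoint R = R := by rw [hR, map_sub, hQa, adjoint_id]
        have := proj_contraction R hR2 hRa z
        rwa [hRapp] at this
      have hPxQPx : P x - Q (P x) = D x - Q (D x) := by
        rw [hDapp, map_sub, hQ2]
        abel
      have hDQD : ‖P x - Q (P x)‖ ≤ ‖D x‖ := by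
        rw [hPxQPx]
        exact hIQ (D x)
      -- bound on ‖P x‖
      have hy₀mem : P x - Q (P x) ∈ M ⊔ N :=
        Submodule.sub_mem _ (Submodule.mem_sup_left ⟨x, rfl⟩)
          (Submodule.mem_sup_right ⟨P x, rfl⟩)
      obtain ⟨u', v', hu', hv', he', hub, hvb⟩ := hC _ hy₀mem
      have hueq : P x = u' := by
        refine huniq (P x) (-(Q (P x))) u' v' hPxK₁ (Submodule.neg_mem N ⟨P x, rfl⟩)
          hu' hv' ?_
        rw [← he']
        abel
      have hPxbound : ‖P x‖ ≤ C * ‖D x‖ := by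
        rw [hueq]
        calc ‖u'‖ ≤ C * ‖P x - Q (P x)‖ := hub
        _ ≤ C * ‖D x‖ := mul_le_mul_of_nonneg_left hDQD hC0.le
      -- bound on ‖Q x‖
      have hQD : Q (D x) = Q (P x) - Q x := by rw [hDapp, map_sub, hQ2]
      have hQxbound : ‖Q x‖ ≤ (C + 1) * ‖D x‖ := by
        have e1 : Q x = Q (P x) - Q (D x) := by rw [hQD]; abel
        have e2 : ‖Q x‖ ≤ ‖Q (P x)‖ + ‖Q (D x)‖ := by
          rw [e1]; exact norm_sub_le _ _
        have e3 : ‖Q (P x)‖ ≤ ‖P x‖ := proj_contraction Q hQ2 hQa (P x)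
        have e4 : ‖Q (D x)‖ ≤ ‖D x‖ := proj_contraction Q hQ2 hQa (D x)
        nlinarith
      -- x ∈ M ⊔ N
      have hxMN : x ∈ M ⊔ N := by
        have h1 : (M ⊔ N)ᗮ ≤ LinearMap.ker (D : H →ₗ[ℂ] H) := fun z hz =>
          LinearMap.mem_ker.2 (hOrthoKer z hz)
        have h2 := Submodule.orthogonal_le h1 hx
        rw [Submodule.orthogonal_orthogonal_eq_closure] at h2
        have h4 : x ∈ closure ((M ⊔ N : Submodule ℂ H) : Set H) := by
          rw [← Submodule.topologicalClosure_coe]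
          exact h2
        rwa [h.closure_eq] at h4
      obtain ⟨m, n, hm, hn, hxmn, hmb, hnb⟩ := hC _ hxMN
      have hxm : RCLike.re ⟪x, m⟫ ≤ ‖P x‖ * ‖m‖ := by
        have e1 : ⟪P x, m⟫ = ⟪x, m⟫ := by
          rw [hPinner, (hMfix _).1 hm.1]
        rw [← e1]
        calc RCLike.re ⟪P x, m⟫ ≤ ‖⟪P x, m⟫‖ := RCLike.re_le_norm _
        _ ≤ ‖P x‖ * ‖m‖ := norm_inner_le_norm _ _
      have hxn : RCLike.re ⟪x, n⟫ ≤ ‖Q x‖ * ‖n‖ := by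
        have e1 : ⟪Q x, n⟫ = ⟪x, n⟫ := by
          rw [hQinner, (hNfix _).1 hn]
        rw [← e1]
        calc RCLike.re ⟪Q x, n⟫ ≤ ‖⟪Q x, n⟫‖ := RCLike.re_le_norm _
        _ ≤ ‖Q x‖ * ‖n‖ := norm_inner_le_norm _ _
      have hinner_split : ⟪x, x⟫ = ⟪x, m⟫ + ⟪x, n⟫ := by
        rw [← inner_add_right, ← hxmn]
      have hxsq : ‖x‖ ^ 2 = RCLike.re ⟪x, m⟫ + RCLike.re ⟪x, n⟫ := by
        rw [← inner_self_eq_norm_sq (𝕜 := ℂ), hinner_split, map_add]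
      have t1 : ‖P x‖ * ‖m‖ ≤ (C * ‖D x‖) * (C * ‖x‖) :=
        mul_le_mul hPxbound hmb (norm_nonneg _)
          (mul_nonneg hC0.le (norm_nonneg _))
      have t2 : ‖Q x‖ * ‖n‖ ≤ ((C + 1) * ‖D x‖) * (C * ‖x‖) :=
        mul_le_mul hQxbound hnb (norm_nonneg _)
          (mul_nonneg (by linarith) (norm_nonneg _))
      have hfin : ‖x‖ ^ 2 ≤ C * (2 * C + 1) * ‖D x‖ * ‖x‖ := by
        nlinarith [hxsq, hxm, hxn, t1, t2]
      rcases eq_or_lt_of_le (norm_nonneg x) with h0 | h0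
      · rw [← h0]
        positivity
      · nlinarith [hfin, h0, norm_nonneg (D x)]
    -- conclude: range D is closed
    haveI : CompleteSpace ↥((LinearMap.ker (D : H →ₗ[ℂ] H))ᗮ) :=
      (Submodule.isClosed_orthogonal _).completeSpace_coe
    set f : ↥((LinearMap.ker (D : H →ₗ[ℂ] H))ᗮ) →L[ℂ] H := D.comp (LinearMap.ker (D : H →ₗ[ℂ] H))ᗮ.subtypeL with hf
    have hfapp : ∀ z : ↥((LinearMap.ker (D : H →ₗ[ℂ] H))ᗮ), f z = D (z : H) := fun z => rfl
    have hbound : ∀ z : ↥((LinearMap.ker (D : H →ₗ[ℂ] H))ᗮ),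
        ‖z‖ ≤ (⟨C * (2 * C + 1), hcpos.le⟩ : NNReal) * ‖f z‖ := by
      intro z
      exact hest (z : H) z.2
    have hanti := f.antilipschitz_of_bound hbound
    have hclosed : IsClosed (Set.range f) := hanti.isClosed_range f.uniformContinuous
    have hrange_eq : (LinearMap.range (D : H →ₗ[ℂ] H) : Set H) = Set.range f := by
      haveI : CompleteSpace (LinearMap.ker (D : H →ₗ[ℂ] H)) :=
        (ContinuousLinearMap.isClosed_ker D).completeSpace_coe
      ext z
      constructor
      · rintro ⟨y, rfl⟩
        have hyk : y - (Submodule.orthogonalProjectionOnto (LinearMap.ker (D : H →ₗ[ℂ] H)) y : H) ∈ (LinearMap.ker (D : H →ₗ[ℂ] H))ᗮ :=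
          Submodule.sub_starProjection_mem_orthogonal (K := LinearMap.ker (D : H →ₗ[ℂ] H)) y
        refine ⟨⟨y - (Submodule.orthogonalProjectionOnto (LinearMap.ker (D : H →ₗ[ℂ] H)) y : H), hyk⟩, ?_⟩
        rw [hfapp]
        rw [map_sub,
          (by exact LinearMap.mem_ker.1 (Submodule.orthogonalProjectionOnto (LinearMap.ker (D : H →ₗ[ℂ] H)) y).2 :
            D (Submodule.orthogonalProjectionOnto (LinearMap.ker (D : H →ₗ[ℂ] H)) y : H) = 0), sub_zero,
          ContinuousLinearMap.coe_coe]
      · rintro ⟨z', rfl⟩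
        exact ⟨(z' : H), rfl⟩
    rw [hrange_eq]
    exact hclosed

theorem stmt4 (T Td : H →L[ℂ] H) (hT : IsClosed (LinearMap.range (T : H →ₗ[ℂ] H) : Set H))
    (h1 : T ∘L Td ∘L T = T) (h2 : Td ∘L T ∘L Td = Td)
    (h3 : IsSelfAdjoint (T ∘L Td)) (h4 : IsSelfAdjoint (Td ∘L T)) :
    IsClosed (LinearMap.range ((T ∘L Td - Td ∘L T : H →L[ℂ] H) : H →ₗ[ℂ] H) : Set H) ↔
      IsClosed ((LinearMap.range (T : H →ₗ[ℂ] H) ⊔ LinearMap.range ((adjoint T : H →L[ℂ] H) : H →ₗ[ℂ] H) : Submodule ℂ H) : Set H) := by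
  have hP2 : ∀ x, (T ∘L Td) ((T ∘L Td) x) = (T ∘L Td) x := by
    intro x
    have := congrArg (fun f : H →L[ℂ] H => f (Td x)) h1
    simpa using this
  have hQ2 : ∀ x, (Td ∘L T) ((Td ∘L T) x) = (Td ∘L T) x := by
    intro x
    have := congrArg (fun f : H →L[ℂ] H => f (T x)) h2
    simpa using this
  have hPa := isSelfAdjoint_iff'.mp h3
  have hQa := isSelfAdjoint_iff'.mp h4
  have hkey := keyPQ (T ∘L Td) (Td ∘L T) hP2 hQ2 hPa hQa
  have hrT : LinearMap.range ((T ∘L Td : H →L[ℂ] H) : H →ₗ[ℂ] H) = LinearMap.range (T : H →ₗ[ℂ] H) := by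
    apply le_antisymm
    · rintro _ ⟨y, rfl⟩
      exact ⟨Td y, rfl⟩
    · rintro _ ⟨y, rfl⟩
      refine ⟨T y, ?_⟩
      have := congrArg (fun f : H →L[ℂ] H => f y) h1
      simpa using this
  have hrQ : LinearMap.range ((Td ∘L T : H →L[ℂ] H) : H →ₗ[ℂ] H) = LinearMap.range ((adjoint T : H →L[ℂ] H) : H →ₗ[ℂ] H) := by
    apply le_antisymm
    · rintro _ ⟨y, rfl⟩
      have e : (Td ∘L T) y = adjoint T (adjoint Td y) := by
        conv_lhs => rw [← hQa]
        rw [ContinuousLinearMap.adjoint_comp]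
        rfl
      exact e ▸ ⟨adjoint Td y, rfl⟩
    · rintro _ ⟨y, rfl⟩
      refine ⟨adjoint T y, ?_⟩
      have e : adjoint T = (Td ∘L T) ∘L adjoint T := by
        conv_lhs => rw [← h1]
        rw [ContinuousLinearMap.adjoint_comp, hQa]
      have := congrArg (fun f : H →L[ℂ] H => f y) e
      simpa using this.symm
  rw [← hrT, ← hrQ]
  exact hkey
end

section
/- Let T be a bounded operator on a complex Hilbert space H with closed range such that T and T* coincide on R(T) ∩ R(T*). Then T maps R(T*) ⊖ (R(T) ∩ R(T*)) into R(T) ⊖ (R(T) ∩ R(T*)), and T maps (R(T) ∩ R(T*))^⊥ into (R(T) ∩ R(T*))^⊥. -/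
open ContinuousLinearMap

variable {H : Type*} [NormedAddCommGroup H] [InnerProductSpace ℂ H] [CompleteSpace H]

theorem stmt6 (T : H →L[ℂ] H) (hT : IsClosed (LinearMap.range (T : H →ₗ[ℂ] H) : Set H))
    (hCoR : ∀ x ∈ LinearMap.range (T : H →ₗ[ℂ] H) ⊓ LinearMap.range (adjoint T : H →ₗ[ℂ] H), T x = adjoint T x) :
    (let M := LinearMap.range (T : H →ₗ[ℂ] H) ⊓ LinearMap.range (adjoint T : H →ₗ[ℂ] H)
     (LinearMap.range (adjoint T : H →ₗ[ℂ] H) ⊓ Mᗮ).map (T : H →ₗ[ℂ] H) ≤ LinearMap.range (T : H →ₗ[ℂ] H) ⊓ Mᗮ ∧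
       Mᗮ.map (T : H →ₗ[ℂ] H) ≤ Mᗮ) := by
  intro M
  have hTstarM : ∀ m ∈ M, adjoint T m ∈ M := by
    intro m hm
    have h := (hCoR m hm).symm
    rw [h]
    refine ⟨⟨m, rfl⟩, ?_⟩
    rw [← h]
    exact ⟨m, rfl⟩
  have hinv : ∀ x ∈ Mᗮ, T x ∈ Mᗮ := by
    intro x hx
    rw [Submodule.mem_orthogonal] at hx ⊢
    intro m hm
    rw [← adjoint_inner_left]
    exact hx _ (hTstarM m hm)
  constructor
  · rintro y ⟨x, ⟨hx1, hx2⟩, rfl⟩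
    exact ⟨⟨x, rfl⟩, hinv x hx2⟩
  · rintro y ⟨x, hx, rfl⟩
    exact hinv x hx
end

section
/- Let T ∈ B(H) be a CoR operator decomposed as T = [[A,B],[0,0]] with respect to H = closure(R(T)) ⊕ N(T*), and let P be the orthogonal projection in B(closure(R(T))) onto M := closure(R(T)) ∩ closure(R(T*)). Then PAP = AP = A*P = PA*P. -/
open ContinuousLinearMap

variable {H : Type*} [NormedAddCommGroup H] [InnerProductSpace ℂ H] [CompleteSpace H]

theorem stmt8 (T : H →L[ℂ] H)
    (hCoR : ∀ x ∈ (LinearMap.range (T : H →ₗ[ℂ] H)).topologicalClosure ⊓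
        (LinearMap.range ((adjoint T : H →L[ℂ] H) : H →ₗ[ℂ] H)).topologicalClosure, T x = adjoint T x) :
    haveI : CompleteSpace (LinearMap.range (T : H →ₗ[ℂ] H)).topologicalClosure :=
      (LinearMap.range (T : H →ₗ[ℂ] H)).isClosed_topologicalClosure.completeSpace_coe
    (let K := (LinearMap.range (T : H →ₗ[ℂ] H)).topologicalClosure
     let M := K ⊓ (LinearMap.range ((adjoint T : H →L[ℂ] H) : H →ₗ[ℂ] H)).topologicalClosure
     let A := opB T K K
     ∀ P : K →L[ℂ] K, IsIdempotentElem P → IsSelfAdjoint P →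
       LinearMap.range (P : K →ₗ[ℂ] K) = M.comap (K.subtypeL : K →ₗ[ℂ] H) →
       P ∘L A ∘L P = A ∘L P ∧ A ∘L P = adjoint A ∘L P ∧
         adjoint A ∘L P = P ∘L adjoint A ∘L P) := by
  intro K M A P hP hPsa hPr
  have hfix : ∀ y : K, (y : H) ∈ M → P y = y := by
    intro y hy
    have hy' : y ∈ LinearMap.range (P : K →ₗ[ℂ] K) := by
      rw [hPr]; exact hy
    obtain ⟨z, rfl⟩ := hy'
    have := congrFun (congrArg DFunLike.coe hP) z
    simpa [mul_apply] using this
  have hPmem : ∀ x : K, ((P x : H)) ∈ M := by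
    intro x
    have : P x ∈ LinearMap.range (P : K →ₗ[ℂ] K) := ⟨x, rfl⟩
    rw [hPr] at this
    exact this
  have hadj : adjoint A = (K.orthogonalProjectionOnto) ∘L ((adjoint T) ∘L K.subtypeL) := by
    show adjoint (opB T K K) = _
    unfold opB
    rw [adjoint_comp, adjoint_comp, K.adjoint_subtypeL, K.adjoint_orthogonalProjectionOnto, comp_assoc]
  have hTmem : ∀ x : K, T (P x : H) ∈ M := by
    intro x
    have hm := hPmem x
    have hT := hCoR _ hm
    refine ⟨?_, ?_⟩
    · exact (LinearMap.range (T : H →ₗ[ℂ] H)).le_topologicalClosure ⟨_, rfl⟩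
    · rw [hT]
      exact (LinearMap.range ((adjoint T : H →L[ℂ] H) : H →ₗ[ℂ] H)).le_topologicalClosure ⟨_, rfl⟩
  have hAcoe : ∀ x : K, ((A (P x) : H)) = T (P x : H) := by
    intro x
    show ((K.orthogonalProjectionOnto (T (P x : H)) : H)) = _
    exact Submodule.starProjection_eq_self_iff.mpr (hTmem x).1
  have hA'coe : ∀ x : K, ((adjoint A (P x) : H)) = T (P x : H) := by
    intro x
    rw [hadj]
    show ((K.orthogonalProjectionOnto (adjoint T (P x : H)) : H)) = _
    rw [← hCoR _ (hPmem x)]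
    exact Submodule.starProjection_eq_self_iff.mpr (hTmem x).1
  have hAA' : ∀ x : K, A (P x) = adjoint A (P x) := by
    intro x
    exact Subtype.ext ((hAcoe x).trans (hA'coe x).symm)
  have hAM : ∀ x : K, ((A (P x) : H)) ∈ M := by
    intro x; rw [hAcoe x]; exact hTmem x
  refine ⟨?_, ?_, ?_⟩
  · ext x
    simp only [comp_apply]
    exact congrArg Subtype.val (hfix _ (hAM x))
  · ext x
    simp only [comp_apply]
    exact congrArg Subtype.val (hAA' x)
  · ext x
    simp only [comp_apply]
    refine congrArg Subtype.val (hfix _ ?_).symm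
    rw [← hAA' x]; exact hAM x
end

section
/- Let T ∈ B(H) be a CoR operator decomposed as T = [[A,B],[0,0]] with respect to H = closure(R(T)) ⊕ N(T*). Then N(B*) = closure(R(T)) ∩ closure(R(T*)); equivalently, closure(R(B)) = closure(R(T)) ⊖ (closure(R(T)) ∩ closure(R(T*))). -/
open ContinuousLinearMap
open scoped ComplexInnerProductSpace

variable {H : Type*} [NormedAddCommGroup H] [InnerProductSpace ℂ H] [CompleteSpace H]

-- ker of adjoint is orthogonal of range
theorem ker_adj_eq (T : H →L[ℂ] H) :
    (LinearMap.ker (adjoint T : H →ₗ[ℂ] H) : Submodule ℂ H) = (LinearMap.range (T : H →ₗ[ℂ] H))ᗮ := by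
  ext x
  simp only [LinearMap.mem_ker, Submodule.mem_orthogonal, ContinuousLinearMap.coe_coe,
    LinearMap.mem_range]
  constructor
  · rintro h u ⟨y, rfl⟩
    rw [← adjoint_inner_right, h, inner_zero_right]
  · intro h
    rw [← inner_self_eq_zero (𝕜 := ℂ), adjoint_inner_left, inner_eq_zero_symm]
    exact h _ ⟨_, rfl⟩

theorem orth_closure (S : Submodule ℂ H) : S.topologicalClosureᗮ = Sᗮ := by
  rw [← Submodule.orthogonal_orthogonal_eq_closure]
  exact le_antisymm (Submodule.orthogonal_le S.le_orthogonal_orthogonal)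
    Sᗮ.le_orthogonal_orthogonal

theorem key (T : H →L[ℂ] H)
    (hCoR : ∀ x ∈ (LinearMap.range (T : H →ₗ[ℂ] H)).topologicalClosure ⊓
        (LinearMap.range (adjoint T : H →ₗ[ℂ] H)).topologicalClosure, T x = adjoint T x)
    (x : H) (hx : x ∈ (LinearMap.range (T : H →ₗ[ℂ] H)).topologicalClosure) :
    adjoint T x ∈ (LinearMap.range (T : H →ₗ[ℂ] H)).topologicalClosure ↔
      x ∈ (LinearMap.range (adjoint T : H →ₗ[ℂ] H)).topologicalClosure := by
  set K := (LinearMap.range (T : H →ₗ[ℂ] H)).topologicalClosure with hK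
  set C := (LinearMap.range (adjoint T : H →ₗ[ℂ] H)).topologicalClosure with hC
  set M := K ⊓ C with hM
  have hrT : ∀ y : H, T y ∈ K := fun y =>
    (LinearMap.range (T : H →ₗ[ℂ] H)).le_topologicalClosure ⟨y, rfl⟩
  have hrT' : ∀ y : H, adjoint T y ∈ C := fun y =>
    (LinearMap.range (adjoint T : H →ₗ[ℂ] H)).le_topologicalClosure ⟨y, rfl⟩
  -- T and T* map M into M
  have hTM : ∀ w ∈ M, adjoint T w ∈ M := fun w hw =>
    ⟨by rw [← hCoR w hw]; exact hrT w, hrT' w⟩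
  constructor
  · intro hTK
    haveI : CompleteSpace M := by
      have hcl : IsClosed (M : Set H) := by
        rw [hM, Submodule.coe_inf]
        exact ((LinearMap.range (T : H →ₗ[ℂ] H)).isClosed_topologicalClosure).inter
          ((LinearMap.range (adjoint T : H →ₗ[ℂ] H)).isClosed_topologicalClosure)
      exact hcl.completeSpace_coe
    set m : H := (M.orthogonalProjectionOnto x : H) with hm
    have hmM : m ∈ M := (M.orthogonalProjectionOnto x).2
    set u : H := x - m with hu
    have hu_orth : ∀ w ∈ M, (inner ℂ u w : ℂ) = 0 := fun w hw => by
      rw [hu, hm, Submodule.coe_orthogonalProjectionOnto_apply]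
      exact M.starProjection_inner_eq_zero x w hw
    have huK : u ∈ K := K.sub_mem hx hmM.1
    have hTuM : adjoint T u ∈ M := by
      have h1 : adjoint T u = adjoint T x - adjoint T m := map_sub _ _ _
      exact ⟨by rw [h1]; exact K.sub_mem hTK (hTM m hmM).1, hrT' u⟩
    have hTu0 : adjoint T u = 0 := by
      rw [← inner_self_eq_zero (𝕜 := ℂ)]
      have h2 : (inner ℂ (adjoint T u) (adjoint T u) : ℂ) = inner ℂ (T (adjoint T u)) u :=
        adjoint_inner_right T _ _
      rw [h2, inner_eq_zero_symm]
      exact hu_orth _ (by rw [hCoR _ hTuM]; exact hTM _ hTuM)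
    have huKo : u ∈ Kᗮ := by
      rw [hK, orth_closure, ← ker_adj_eq]
      exact hTu0
    have hu0 : u = 0 := by
      rw [← inner_self_eq_zero (𝕜 := ℂ)]
      exact Submodule.inner_right_of_mem_orthogonal huK huKo
    have hxm : x = m := by rwa [sub_eq_zero] at hu0
    rw [hxm]
    exact hmM.2
  · intro hC'
    rw [← hCoR x ⟨hx, hC'⟩]
    exact hrT x


theorem lemA (T : H →L[ℂ] H)
    (hCoR : ∀ x ∈ (LinearMap.range (T : H →ₗ[ℂ] H)).topologicalClosure ⊓
        (LinearMap.range (adjoint T : H →ₗ[ℂ] H)).topologicalClosure, T x = adjoint T x)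
    [CompleteSpace (LinearMap.range (T : H →ₗ[ℂ] H)).topologicalClosure]
    [CompleteSpace (LinearMap.ker (adjoint T : H →ₗ[ℂ] H))] :
    LinearMap.ker (adjoint (opB T (LinearMap.range (T : H →ₗ[ℂ] H)).topologicalClosure
        (LinearMap.ker (adjoint T : H →ₗ[ℂ] H))) : (LinearMap.range (T : H →ₗ[ℂ] H)).topologicalClosure →ₗ[ℂ] LinearMap.ker (adjoint T : H →ₗ[ℂ] H)) =
      ((LinearMap.range (T : H →ₗ[ℂ] H)).topologicalClosure ⊓
        (LinearMap.range (adjoint T : H →ₗ[ℂ] H)).topologicalClosure).comap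
        ((LinearMap.range (T : H →ₗ[ℂ] H)).topologicalClosure.subtypeL : (LinearMap.range (T : H →ₗ[ℂ] H)).topologicalClosure →ₗ[ℂ] H) := by
  set K := (LinearMap.range (T : H →ₗ[ℂ] H)).topologicalClosure with hK
  set N := LinearMap.ker (adjoint T : H →ₗ[ℂ] H) with hN
  set B := opB T K N with hB
  have hNK : (N : Submodule ℂ H) = Kᗮ := by
    rw [hN, hK, orth_closure, ker_adj_eq]
  have hBn : ∀ n : N, ((B n : K) : H) = T (n : H) := by
    intro n
    show ((K.orthogonalProjectionOnto (T (n : H)) : K) : H) = T (n : H)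
    exact (K.coe_orthogonalProjectionOnto_apply _).trans <| Submodule.starProjection_eq_self_iff.mpr
      ((LinearMap.range (T : H →ₗ[ℂ] H)).le_topologicalClosure ⟨_, rfl⟩)
  ext x
  simp only [LinearMap.mem_ker, Submodule.mem_comap, ContinuousLinearMap.coe_coe, Submodule.subtypeL_apply]
  have step1 : adjoint B x = 0 ↔ ∀ n : N, (inner ℂ (B n) x : ℂ) = 0 := by
    constructor
    · intro h n
      rw [← adjoint_inner_right, h, inner_zero_right]
    · intro h
      rw [← inner_self_eq_zero (𝕜 := ℂ), adjoint_inner_left, inner_eq_zero_symm]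
      exact h _
  have step2 : (∀ n : N, (inner ℂ (B n) x : ℂ) = 0) ↔ adjoint T (x : H) ∈ K := by
    constructor
    · intro h
      have h2 : adjoint T (x : H) ∈ (LinearMap.range (T : H →ₗ[ℂ] H))ᗮᗮ := by
        rw [← ker_adj_eq, ← hN, Submodule.mem_orthogonal]
        intro u hu
        have := h ⟨u, hu⟩
        rw [Submodule.coe_inner, hBn] at this
        rw [adjoint_inner_right]
        exact this
      rw [Submodule.orthogonal_orthogonal_eq_closure] at h2
      exact h2
    · intro hT n
      rw [Submodule.coe_inner, hBn, ← adjoint_inner_right, inner_eq_zero_symm]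
      have hn : (n : H) ∈ Kᗮ := hNK ▸ n.2
      exact Submodule.inner_right_of_mem_orthogonal hT hn
  rw [step1, step2]
  exact ⟨fun h => ⟨x.2, (key T hCoR x x.2).mp h⟩, fun h => (key T hCoR x x.2).mpr h.2⟩

theorem lemB (T : H →L[ℂ] H)
    (hCoR : ∀ x ∈ (LinearMap.range (T : H →ₗ[ℂ] H)).topologicalClosure ⊓
        (LinearMap.range (adjoint T : H →ₗ[ℂ] H)).topologicalClosure, T x = adjoint T x)
    [CompleteSpace (LinearMap.range (T : H →ₗ[ℂ] H)).topologicalClosure]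
    [CompleteSpace (LinearMap.ker (adjoint T : H →ₗ[ℂ] H))] :
    (LinearMap.range (opB T (LinearMap.range (T : H →ₗ[ℂ] H)).topologicalClosure
        (LinearMap.ker (adjoint T : H →ₗ[ℂ] H)) : LinearMap.ker (adjoint T : H →ₗ[ℂ] H) →ₗ[ℂ] (LinearMap.range (T : H →ₗ[ℂ] H)).topologicalClosure)).topologicalClosure =
      (((LinearMap.range (T : H →ₗ[ℂ] H)).topologicalClosure ⊓
        (LinearMap.range (adjoint T : H →ₗ[ℂ] H)).topologicalClosure).comap
        ((LinearMap.range (T : H →ₗ[ℂ] H)).topologicalClosure.subtypeL : (LinearMap.range (T : H →ₗ[ℂ] H)).topologicalClosure →ₗ[ℂ] H))ᗮ := by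
  set K := (LinearMap.range (T : H →ₗ[ℂ] H)).topologicalClosure with hK
  set N := LinearMap.ker (adjoint T : H →ₗ[ℂ] H) with hN
  set B := opB T K N with hB
  have horth : (LinearMap.range (B : N →ₗ[ℂ] K))ᗮ = LinearMap.ker (adjoint B : K →ₗ[ℂ] N) := by
    ext y
    simp only [LinearMap.mem_ker, Submodule.mem_orthogonal, LinearMap.mem_range,
      ContinuousLinearMap.coe_coe]
    constructor
    · intro h
      rw [← inner_self_eq_zero (𝕜 := ℂ), adjoint_inner_left, inner_eq_zero_symm]
      exact h _ ⟨_, rfl⟩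
    · rintro h u ⟨n, rfl⟩
      rw [← adjoint_inner_right, h, inner_zero_right]
  conv_lhs => rw [← Submodule.orthogonal_orthogonal_eq_closure]
  rw [horth, lemA T hCoR]

theorem stmt9 (T : H →L[ℂ] H)
    (hCoR : ∀ x ∈ (LinearMap.range (T : H →ₗ[ℂ] H)).topologicalClosure ⊓
        (LinearMap.range (adjoint T : H →ₗ[ℂ] H)).topologicalClosure, T x = adjoint T x) :
    haveI : CompleteSpace (LinearMap.range (T : H →ₗ[ℂ] H)).topologicalClosure :=
      (LinearMap.range (T : H →ₗ[ℂ] H)).isClosed_topologicalClosure.completeSpace_coe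
    haveI : CompleteSpace (LinearMap.ker (adjoint T : H →ₗ[ℂ] H)) :=
      (ContinuousLinearMap.isClosed_ker (adjoint T)).completeSpace_coe
    (let K := (LinearMap.range (T : H →ₗ[ℂ] H)).topologicalClosure
     let M := K ⊓ (LinearMap.range (adjoint T : H →ₗ[ℂ] H)).topologicalClosure
     let B := opB T K (LinearMap.ker (adjoint T : H →ₗ[ℂ] H))
     LinearMap.ker (adjoint B : K →ₗ[ℂ] LinearMap.ker (adjoint T : H →ₗ[ℂ] H)) = M.comap (K.subtypeL : K →ₗ[ℂ] H) ∧
       (LinearMap.range (B : LinearMap.ker (adjoint T : H →ₗ[ℂ] H) →ₗ[ℂ] K)).topologicalClosure = (M.comap (K.subtypeL : K →ₗ[ℂ] H))ᗮ) := by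
  haveI : CompleteSpace (LinearMap.range (T : H →ₗ[ℂ] H)).topologicalClosure :=
    (LinearMap.range (T : H →ₗ[ℂ] H)).isClosed_topologicalClosure.completeSpace_coe
  haveI : CompleteSpace (LinearMap.ker (adjoint T : H →ₗ[ℂ] H)) :=
    (ContinuousLinearMap.isClosed_ker (adjoint T)).completeSpace_coe
  exact ⟨lemA T hCoR, lemB T hCoR⟩
end

section
/- Let T be a bounded operator on a complex Hilbert space H with closed range such that T and T* coincide on R(T) ∩ R(T*). Then R(T) + R(T*) is closed if and only if R(T + T*) is closed, and in that case R(T + T*) = R(T) + R(T*). -/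
set_option maxHeartbeats 4000000
set_option synthInstance.maxHeartbeats 400000
set_option linter.unusedSectionVars false

open ContinuousLinearMap

variable {H : Type*} [NormedAddCommGroup H] [InnerProductSpace ℂ H] [CompleteSpace H]

section CRT0
variable {E F : Type*} [NormedAddCommGroup E] [InnerProductSpace ℂ E] [CompleteSpace E]
  [NormedAddCommGroup F] [InnerProductSpace ℂ F] [CompleteSpace F]
  [NormedAddCommGroup F] [InnerProductSpace ℂ F] [CompleteSpace F]

/-- L0 -/
theorem orth_range (A : E →L[ℂ] F) : (LinearMap.range (A : E →ₗ[ℂ] F))ᗮ = LinearMap.ker (adjoint A : F →ₗ[ℂ] E) := by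
  ext x
  simp only [Submodule.mem_orthogonal, LinearMap.mem_ker, LinearMap.mem_range, ContinuousLinearMap.coe_coe]
  constructor
  · intro h
    have h2 : ∀ y, inner ℂ (y : E) (adjoint A x) = (0 : ℂ) := by
      intro y
      rw [adjoint_inner_right]
      exact h _ ⟨y, rfl⟩
    exact ext_inner_left ℂ (by simpa using h2)
  · rintro h u ⟨y, rfl⟩
    rw [← adjoint_inner_right, h, inner_zero_right]

/-- L1 -/
theorem range_preimage_bound (A : E →L[ℂ] F) (h : IsClosed (LinearMap.range (A : E →ₗ[ℂ] F) : Set F)) :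
    ∃ C > (0:ℝ), ∀ y ∈ LinearMap.range (A : E →ₗ[ℂ] F), ∃ x, A x = y ∧ ‖x‖ ≤ C * ‖y‖ := by
  haveI : CompleteSpace (LinearMap.range (A : E →ₗ[ℂ] F)) := h.completeSpace_coe
  set A' : E →L[ℂ] LinearMap.range (A : E →ₗ[ℂ] F) := A.codRestrict _ (fun x => LinearMap.mem_range_self _ x)
  have hsurj : Function.Surjective A' := by
    rintro ⟨y, x, rfl⟩
    exact ⟨x, rfl⟩
  obtain ⟨C, hC, h2⟩ := A'.exists_preimage_norm_le hsurj
  refine ⟨C, hC, ?_⟩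
  rintro y hy
  obtain ⟨x, hx, hb⟩ := h2 ⟨y, hy⟩
  exact ⟨x, congrArg Subtype.val hx, by simpa using hb⟩

end CRT0

section CRT
variable {E F : Type*} [NormedAddCommGroup E] [InnerProductSpace ℂ E] [CompleteSpace E]
  [NormedAddCommGroup F] [InnerProductSpace ℂ F] [CompleteSpace F]
  [NormedAddCommGroup F] [InnerProductSpace ℂ F] [CompleteSpace F]



/-- L2: closed range theorem -/
theorem range_adjoint_of_closed (A : E →L[ℂ] F) (h : IsClosed (LinearMap.range (A : E →ₗ[ℂ] F) : Set F)) :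
    LinearMap.range (adjoint A : F →ₗ[ℂ] E) = (LinearMap.ker (A : E →ₗ[ℂ] F))ᗮ := by
  haveI : CompleteSpace (LinearMap.range (A : E →ₗ[ℂ] F)) := h.completeSpace_coe
  set W := LinearMap.range (A : E →ₗ[ℂ] F) with hW
  set A' : E →L[ℂ] W := A.codRestrict _ (fun x => LinearMap.mem_range_self _ x) with hA'
  have hsurj : Function.Surjective A' := by
    rintro ⟨y, x, rfl⟩; exact ⟨x, rfl⟩
  obtain ⟨C, hC, h2⟩ := A'.exists_preimage_norm_le hsurj
  set B := adjoint A' with hB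
  -- adjoint A' is bounded below
  have hbelow : ∀ w : W, ‖w‖ ≤ C * ‖B w‖ := by
    intro w
    obtain ⟨x, hx, hb⟩ := h2 w
    rcases eq_or_ne w 0 with rfl | hw
    · simp only [norm_zero, map_zero]; positivity
    · have h1 : (‖w‖:ℝ)^2 = RCLike.re (inner ℂ (B w) x : ℂ) := by
        rw [hB, adjoint_inner_left, hx, ← @inner_self_eq_norm_sq ℂ]
      have h3 : RCLike.re (inner ℂ (B w) x : ℂ) ≤ ‖B w‖ * ‖x‖ :=
        le_trans (le_abs_self _) (le_trans (RCLike.abs_re_le_norm _)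
          (norm_inner_le_norm (𝕜 := ℂ) _ _))
      have h4 : (‖w‖:ℝ)^2 ≤ ‖B w‖ * (C * ‖w‖) :=
        h1 ▸ le_trans h3 (by
          have := mul_le_mul_of_nonneg_left hb (norm_nonneg (B w)); linarith)
      have hwpos : (0:ℝ) < ‖w‖ := norm_pos_iff.mpr hw
      nlinarith
  have hanti : AntilipschitzWith (⟨C, hC.le⟩ : NNReal) B :=
    B.antilipschitz_of_bound hbelow
  have hclosed : IsClosed (LinearMap.range (B : W →ₗ[ℂ] E) : Set E) := by
    have := hanti.isClosedEmbedding B.uniformContinuous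
    have h6 : (LinearMap.range (B : W →ₗ[ℂ] E) : Set E) = Set.range B := by
      ext x; simp [LinearMap.mem_range]
    rw [h6]
    exact this.isClosed_range
  have hker : LinearMap.ker (A' : E →ₗ[ℂ] W) = LinearMap.ker (A : E →ₗ[ℂ] F) := by
    ext x
    simp only [LinearMap.mem_ker, ContinuousLinearMap.coe_coe]
    constructor
    · intro hx
      have := congrArg Subtype.val hx
      simpa [hA'] using this
    · intro hx
      apply Subtype.ext
      simpa [hA'] using hx
  have hdense : LinearMap.range (B : W →ₗ[ℂ] E) = (LinearMap.ker (A : E →ₗ[ℂ] F))ᗮ := by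
    have h5 : (LinearMap.range (B : W →ₗ[ℂ] E))ᗮ = LinearMap.ker (A : E →ₗ[ℂ] F) := by
      rw [hB, orth_range, adjoint_adjoint, hker]
    calc LinearMap.range (B : W →ₗ[ℂ] E)
        = (LinearMap.range (B : W →ₗ[ℂ] E)).topologicalClosure :=
          (IsClosed.submodule_topologicalClosure_eq hclosed).symm
      _ = (LinearMap.range (B : W →ₗ[ℂ] E))ᗮᗮ :=
          (Submodule.orthogonal_orthogonal_eq_closure _).symm
      _ = (LinearMap.ker (A : E →ₗ[ℂ] F))ᗮ := by rw [h5]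
  have hcomp : adjoint A = B.comp (adjoint (W.subtypeL)) := by
    have h7 : W.subtypeL.comp A' = A := by ext x; rfl
    rw [hB, ← adjoint_comp, h7]
  have hrange : LinearMap.range (adjoint A : F →ₗ[ℂ] E) = LinearMap.range (B : W →ₗ[ℂ] E) := by
    rw [hcomp]
    apply le_antisymm
    · rintro _ ⟨y, rfl⟩; exact ⟨_, rfl⟩
    · rintro _ ⟨w, rfl⟩
      refine ⟨(w : F), ?_⟩
      simp only [ContinuousLinearMap.coe_coe, ContinuousLinearMap.comp_apply]
      congr 1
      rw [Submodule.adjoint_subtypeL, Submodule.orthogonalProjectionOnto_mem_subspace_eq_self]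
  rw [hrange, hdense]

end CRT


/-- L3: bounded decomposition in a closed sum -/
theorem sum_decomp_bound (U V : Submodule ℂ H) (hU : IsClosed (U : Set H))
    (hV : IsClosed (V : Set H)) (hUV : IsClosed ((U ⊔ V : Submodule ℂ H) : Set H)) :
    ∃ C > (0:ℝ), ∀ w ∈ U ⊔ V, ∃ u ∈ U, ∃ v ∈ V,
      w = u + v ∧ ‖u‖ ≤ C * ‖w‖ ∧ ‖v‖ ≤ C * ‖w‖ := by
  haveI : CompleteSpace U := hU.completeSpace_coe
  haveI : CompleteSpace V := hV.completeSpace_coe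
  haveI : CompleteSpace (U ⊔ V : Submodule ℂ H) := hUV.completeSpace_coe
  set f : U × V →L[ℂ] H := U.subtypeL.coprod V.subtypeL with hf
  have hmem : ∀ p : U × V, f p ∈ U ⊔ V := by
    rintro ⟨u, v⟩
    exact Submodule.add_mem_sup u.2 v.2
  set f' : U × V →L[ℂ] (U ⊔ V : Submodule ℂ H) := f.codRestrict _ hmem with hf'
  have hsurj : Function.Surjective f' := by
    rintro ⟨w, hw⟩
    obtain ⟨u, hu, v, hv, rfl⟩ := Submodule.mem_sup.mp hw
    exact ⟨(⟨u, hu⟩, ⟨v, hv⟩), rfl⟩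
  obtain ⟨C, hC, h2⟩ := f'.exists_preimage_norm_le hsurj
  refine ⟨C, hC, ?_⟩
  intro w hw
  obtain ⟨⟨u, v⟩, hx, hb⟩ := h2 ⟨w, hw⟩
  have hxw : (u : H) + (v : H) = w := congrArg Subtype.val hx
  have hnw : ‖(⟨w, hw⟩ : (U ⊔ V : Submodule ℂ H))‖ = ‖w‖ := rfl
  rw [hnw] at hb
  have hub : ‖(u, v)‖ = max ‖u‖ ‖v‖ := rfl
  rw [hub] at hb
  exact ⟨u, u.2, v, v.2, hxw.symm,
    le_trans (le_max_left _ _) hb, le_trans (le_max_right _ _) hb⟩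

/-- L4 -/
theorem closed_sup_of_orth (U W : Submodule ℂ H) (hU : IsClosed (U : Set H))
    (hW : IsClosed (W : Set H)) (hWU : W ≤ Uᗮ) :
    IsClosed ((U ⊔ W : Submodule ℂ H) : Set H) := by
  haveI : CompleteSpace U := hU.completeSpace_coe
  set P : H →L[ℂ] H := U.subtypeL.comp (Submodule.orthogonalProjectionOnto U) with hP
  set Q : H →L[ℂ] H := ContinuousLinearMap.id ℂ H - P with hQ
  have hPU : ∀ u ∈ U, P u = u := by
    intro u hu
    have h1 : Submodule.orthogonalProjectionOnto U u = ⟨u, hu⟩ := by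
      conv_lhs => rw [show u = ((⟨u, hu⟩ : U) : H) from rfl]
      exact Submodule.orthogonalProjectionOnto_mem_subspace_eq_self _
    simp [hP, h1]
  have hPW : ∀ w ∈ W, P w = 0 := by
    intro w hw
    have h1 : Submodule.orthogonalProjectionOnto U w = 0 :=
      Submodule.orthogonalProjectionOnto_apply_of_mem_orthogonal (hWU hw)
    simp [hP, h1]
  apply isClosed_of_closure_subset
  intro x hx
  -- Q x lies in closure of Q '' (U ⊔ W) ⊆ closure W = W
  have hQim : Q '' ((U ⊔ W : Submodule ℂ H) : Set H) ⊆ (W : Set H) := by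
    rintro _ ⟨z, hz, rfl⟩
    obtain ⟨u, hu, w, hw, rfl⟩ := Submodule.mem_sup.mp hz
    have : Q (u + w) = w := by
      simp only [hQ, ContinuousLinearMap.sub_apply, ContinuousLinearMap.id_apply, map_add,
        hPU u hu, hPW w hw, add_zero]
      abel
    rw [this]; exact hw
  have hQx : Q x ∈ (W : Set H) := by
    have h1 : Q x ∈ closure (Q '' ((U ⊔ W : Submodule ℂ H) : Set H)) := by
      exact image_closure_subset_closure_image
        (s := ((U ⊔ W : Submodule ℂ H) : Set H)) Q.continuous ⟨x, hx, rfl⟩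
    exact hW.closure_subset (closure_mono hQim h1)
  have hPx : P x ∈ U := by
    simp only [hP, ContinuousLinearMap.comp_apply]
    exact (Submodule.orthogonalProjectionOnto U x).2
  have hxPQ : x = P x + Q x := by simp [hQ]
  rw [hxPQ]
  exact Submodule.add_mem_sup hPx hQx






/-- projection onto a subspace as an endomorphism -/
noncomputable def projL (V : Submodule ℂ H) [Submodule.HasOrthogonalProjection V] : H →L[ℂ] H :=
  V.subtypeL.comp (Submodule.orthogonalProjectionOnto V)

theorem projL_apply_mem (V : Submodule ℂ H) [Submodule.HasOrthogonalProjection V] (x : H) :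
    projL V x ∈ V := (Submodule.orthogonalProjectionOnto V x).2

theorem projL_eq_self (V : Submodule ℂ H) [Submodule.HasOrthogonalProjection V] {x : H} (hx : x ∈ V) :
    projL V x = x := by
  have h1 : Submodule.orthogonalProjectionOnto V x = ⟨x, hx⟩ := by
    conv_lhs => rw [show x = ((⟨x, hx⟩ : V) : H) from rfl]
    exact Submodule.orthogonalProjectionOnto_mem_subspace_eq_self _
  simp [projL, h1]

theorem projL_eq_zero (V : Submodule ℂ H) [Submodule.HasOrthogonalProjection V] {x : H} (hx : x ∈ Vᗮ) :
    projL V x = 0 := by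
  have h1 : Submodule.orthogonalProjectionOnto V x = 0 :=
    Submodule.orthogonalProjectionOnto_apply_of_mem_orthogonal hx
  simp [projL, h1]

/-- L5a -/
theorem map_proj_closed (U V : Submodule ℂ H) [Submodule.HasOrthogonalProjection V]
    (hUV : IsClosed ((U ⊔ V : Submodule ℂ H) : Set H)) :
    IsClosed ((U.map (projL Vᗮ : H →ₗ[ℂ] H) : Submodule ℂ H) : Set H) := by
  have key : U.map (projL Vᗮ : H →ₗ[ℂ] H) = (U ⊔ V) ⊓ Vᗮ := by
    apply le_antisymm
    · rintro _ ⟨u, hu, rfl⟩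
      constructor
      · have hdecomp : projL Vᗮ u = u - projL V u := by
          simp [projL, Submodule.orthogonalProjectionOnto_orthogonal]
        rw [ContinuousLinearMap.coe_coe, hdecomp]
        exact Submodule.sub_mem _ (Submodule.mem_sup_left hu)
          (Submodule.mem_sup_right (projL_apply_mem V u))
      · exact projL_apply_mem Vᗮ u
    · rintro w ⟨hw1, hw2⟩
      obtain ⟨u, hu, v, hv, rfl⟩ := Submodule.mem_sup.mp hw1
      refine ⟨u, hu, ?_⟩
      have h1 : projL Vᗮ (u + v) = projL Vᗮ u + projL Vᗮ v := map_add _ _ _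
      have h2 : projL Vᗮ v = 0 := projL_eq_zero Vᗮ (Submodule.le_orthogonal_orthogonal V hv)
      have h3 : projL Vᗮ (u + v) = u + v := projL_eq_self Vᗮ hw2
      rw [h3, h2, add_zero] at h1
      exact h1.symm
  rw [key]
  push_cast
  exact hUV.inter (Submodule.isClosed_orthogonal V)

/-- L5b -/
theorem sup_closed_of_map_proj (U V : Submodule ℂ H) [Submodule.HasOrthogonalProjection V]
    (hV : IsClosed (V : Set H))
    (h : IsClosed ((U.map (projL Vᗮ : H →ₗ[ℂ] H) : Submodule ℂ H) : Set H)) :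
    IsClosed ((U ⊔ V : Submodule ℂ H) : Set H) := by
  have key : U ⊔ V = V ⊔ U.map (projL Vᗮ : H →ₗ[ℂ] H) := by
    apply le_antisymm
    · apply sup_le
      · intro u hu
        have hdecomp : (u : H) = projL V u + projL Vᗮ u := by
          simp [projL, Submodule.orthogonalProjectionOnto_orthogonal]
        rw [hdecomp]
        exact Submodule.add_mem_sup (projL_apply_mem V u) ⟨u, hu, rfl⟩
      · exact le_sup_left
    · apply sup_le
      · exact le_sup_right
      · rintro _ ⟨u, hu, rfl⟩
        have hdecomp : projL Vᗮ u = u - projL V u := by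
          simp [projL, Submodule.orthogonalProjectionOnto_orthogonal]
        rw [ContinuousLinearMap.coe_coe, hdecomp]
        exact Submodule.sub_mem _ (Submodule.mem_sup_left hu)
          (Submodule.mem_sup_right (projL_apply_mem V u))
  rw [key]
  have hle : U.map (projL Vᗮ : H →ₗ[ℂ] H) ≤ Vᗮ := by
    rintro _ ⟨u, hu, rfl⟩; exact projL_apply_mem Vᗮ u
  exact closed_sup_of_orth V _ hV h hle

theorem projL_congr {A B : Submodule ℂ H} [Submodule.HasOrthogonalProjection A]
    [Submodule.HasOrthogonalProjection B] (h : A = B) : projL A = projL B := by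
  subst h; rfl

theorem projL_isSelfAdjoint (V : Submodule ℂ H) [Submodule.HasOrthogonalProjection V]
    [CompleteSpace V] : adjoint (projL V) = projL V := by
  have := isSelfAdjoint_starProjection V
  exact this.adjoint_eq

/-- L6: duality of closed sums -/
theorem orth_sup_closed (U V : Submodule ℂ H) (hU : IsClosed (U : Set H))
    (hV : IsClosed (V : Set H)) (hUV : IsClosed ((U ⊔ V : Submodule ℂ H) : Set H)) :
    IsClosed ((Uᗮ ⊔ Vᗮ : Submodule ℂ H) : Set H) := by
  haveI : CompleteSpace U := hU.completeSpace_coe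
  haveI : CompleteSpace V := hV.completeSpace_coe
  -- map (projL Vᗮ) U is closed
  have h1 : IsClosed ((U.map (projL Vᗮ : H →ₗ[ℂ] H) : Submodule ℂ H) : Set H) :=
    map_proj_closed U V hUV
  set G : H →L[ℂ] H := (projL U).comp (projL Vᗮ) with hG
  have hadj : adjoint G = (projL Vᗮ).comp (projL U) := by
    rw [hG, adjoint_comp, projL_isSelfAdjoint, projL_isSelfAdjoint]
  have hrangeadj : LinearMap.range (adjoint G : H →ₗ[ℂ] H) = U.map (projL Vᗮ : H →ₗ[ℂ] H) := by
    rw [hadj]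
    apply le_antisymm
    · rintro _ ⟨x, rfl⟩
      exact ⟨projL U x, projL_apply_mem U x, rfl⟩
    · rintro _ ⟨u, hu, rfl⟩
      exact ⟨u, by simp [projL_eq_self U hu]⟩
  have h2 : IsClosed (LinearMap.range (adjoint G : H →ₗ[ℂ] H) : Set H) := by rw [hrangeadj]; exact h1
  -- closed range theorem
  have h3 := range_adjoint_of_closed (adjoint G) h2
  rw [adjoint_adjoint] at h3
  have h4 : IsClosed (LinearMap.range (G : H →ₗ[ℂ] H) : Set H) := by
    rw [h3]; exact Submodule.isClosed_orthogonal _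
  have hrangeG : LinearMap.range (G : H →ₗ[ℂ] H) = Vᗮ.map (projL U : H →ₗ[ℂ] H) := by
    rw [hG]
    apply le_antisymm
    · rintro _ ⟨x, rfl⟩
      exact ⟨projL Vᗮ x, projL_apply_mem _ x, rfl⟩
    · rintro _ ⟨w, hw, rfl⟩
      exact ⟨w, by simp [projL_eq_self Vᗮ hw]⟩
  rw [hrangeG] at h4
  -- conclude with L5b applied to (Vᗮ, Uᗮ)
  have h5 : IsClosed ((Vᗮ ⊔ Uᗮ : Submodule ℂ H) : Set H) := by
    apply sup_closed_of_map_proj Vᗮ Uᗮ (Submodule.isClosed_orthogonal U)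
    rw [projL_congr (Submodule.orthogonal_orthogonal U)]
    exact h4
  rwa [sup_comm] at h5

-- MAIN
theorem stmt10 (T : H →L[ℂ] H) (hT : IsClosed (LinearMap.range (T : H →ₗ[ℂ] H) : Set H))
    (hCoR : ∀ x ∈ LinearMap.range (T : H →ₗ[ℂ] H) ⊓ LinearMap.range (adjoint T : H →ₗ[ℂ] H), T x = adjoint T x) :
    (IsClosed ((LinearMap.range (T : H →ₗ[ℂ] H) ⊔ LinearMap.range (adjoint T : H →ₗ[ℂ] H) : Submodule ℂ H) : Set H) ↔
        IsClosed (LinearMap.range ((T + adjoint T : H →L[ℂ] H) : H →ₗ[ℂ] H) : Set H)) ∧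
      (IsClosed (LinearMap.range ((T + adjoint T : H →L[ℂ] H) : H →ₗ[ℂ] H) : Set H) →
        LinearMap.range ((T + adjoint T : H →L[ℂ] H) : H →ₗ[ℂ] H) = LinearMap.range (T : H →ₗ[ℂ] H) ⊔ LinearMap.range (adjoint T : H →ₗ[ℂ] H)) := by
  set A := adjoint T with hA
  set S := T + A with hS
  set R : Submodule ℂ H := LinearMap.range (T : H →ₗ[ℂ] H) with hR
  set R' : Submodule ℂ H := LinearMap.range (A : H →ₗ[ℂ] H) with hR'
  set K : Submodule ℂ H := R ⊔ R' with hK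
  -- basic facts
  have hR'eq : R' = (LinearMap.ker (T : H →ₗ[ℂ] H))ᗮ := range_adjoint_of_closed T hT
  have hR'closed : IsClosed (R' : Set H) := by
    rw [hR'eq]; exact Submodule.isClosed_orthogonal _
  have hkerA : LinearMap.ker (A : H →ₗ[ℂ] H) = Rᗮ := (orth_range T).symm
  have hkerT : LinearMap.ker (T : H →ₗ[ℂ] H) = R'ᗮ := by
    have := orth_range A
    rw [hA, adjoint_adjoint] at this
    exact this.symm
  have hSapp : ∀ x, S x = T x + A x := fun x => rfl
  -- kernel of S
  have hkerS : LinearMap.ker (S : H →ₗ[ℂ] H) = LinearMap.ker (T : H →ₗ[ℂ] H) ⊓ LinearMap.ker (A : H →ₗ[ℂ] H) := by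
    apply le_antisymm
    · intro x hx
      have hx0 : T x + A x = 0 := hx
      have hTx : A x = -(T x) := by linear_combination (norm := abel) hx0
      set m := T x with hm
      have hmR : m ∈ R := LinearMap.mem_range_self _ x
      have hmR' : m ∈ R' := by
        refine ⟨-x, ?_⟩
        rw [ContinuousLinearMap.coe_coe, map_neg, hTx, neg_neg]
      have hTm : T m = A m := hCoR m ⟨hmR, hmR'⟩
      have e1 : (inner ℂ m (T x) : ℂ) = inner ℂ (A m) x := by
        conv_lhs => rw [show T = adjoint A by rw [hA, adjoint_adjoint]]
        exact adjoint_inner_right A m x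
      have e2 : (inner ℂ m (A x) : ℂ) = inner ℂ (T m) x := adjoint_inner_right T m x
      have e3 : (inner ℂ m m : ℂ) = - inner ℂ m m := by
        calc (inner ℂ m m : ℂ) = inner ℂ m (T x) := by rw [← hm]
          _ = inner ℂ (A m) x := e1
          _ = inner ℂ (T m) x := by rw [hTm]
          _ = inner ℂ m (A x) := e2.symm
          _ = - inner ℂ m m := by rw [hTx, inner_neg_right, hm]
      have hm0 : m = 0 := by
        have h0 : (inner ℂ m m : ℂ) = 0 := by linear_combination e3/2
        exact inner_self_eq_zero.mp h0
      have hT0 : T x = 0 := hm0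
      have hA0 : A x = 0 := by rw [hTx, hm0, neg_zero]
      exact ⟨hT0, hA0⟩
    · rintro x ⟨h1, h2⟩
      have : S x = 0 := by
        rw [hSapp, show T x = 0 from LinearMap.mem_ker.mp h1, show A x = 0 from LinearMap.mem_ker.mp h2, add_zero]
      exact this
  have hKort : Kᗮ = LinearMap.ker (S : H →ₗ[ℂ] H) := by
    rw [hkerS, hkerT, hkerA, inf_comm, Submodule.inf_orthogonal, hK]
  -- range S ≤ K
  have hsub : LinearMap.range (S : H →ₗ[ℂ] H) ≤ K := by
    rintro _ ⟨x, rfl⟩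
    rw [ContinuousLinearMap.coe_coe, hSapp]
    exact Submodule.add_mem_sup (LinearMap.mem_range_self _ x) (LinearMap.mem_range_self _ x)
  -- closures agree
  have hclos : (LinearMap.range (S : H →ₗ[ℂ] H)).topologicalClosure = K.topologicalClosure := by
    rw [← Submodule.orthogonal_orthogonal_eq_closure, ← Submodule.orthogonal_orthogonal_eq_closure]
    congr 1
    rw [orth_range S, hKort]
    have hadjS : adjoint S = S := by
      rw [hS, hA, map_add, adjoint_adjoint, add_comm]
    rw [hadjS]
  -- Direction A : range S closed → equality
  have dirA : IsClosed (LinearMap.range (S : H →ₗ[ℂ] H) : Set H) →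
      LinearMap.range (S : H →ₗ[ℂ] H) = K := by
    intro hcl
    apply le_antisymm hsub
    calc K ≤ K.topologicalClosure := Submodule.le_topologicalClosure _
      _ = (LinearMap.range (S : H →ₗ[ℂ] H)).topologicalClosure := hclos.symm
      _ = LinearMap.range (S : H →ₗ[ℂ] H) := IsClosed.submodule_topologicalClosure_eq hcl
  -- Direction B : K closed → range S closed
  have dirB : IsClosed (K : Set H) → IsClosed (LinearMap.range (S : H →ₗ[ℂ] H) : Set H) := by
    intro hKcl
    haveI : CompleteSpace K := hKcl.completeSpace_coe
    obtain ⟨C1, hC1, hD1⟩ := sum_decomp_bound R R' hT hR'closed hKcl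
    obtain ⟨C4, hC4, hP4⟩ := range_preimage_bound T hT
    obtain ⟨C5, hC5, hP5⟩ := range_preimage_bound A hR'closed
    have hkerTcl : IsClosed ((LinearMap.ker (T : H →ₗ[ℂ] H) : Submodule ℂ H) : Set H) := by
      rw [hkerT]; exact Submodule.isClosed_orthogonal _
    have hkerAcl : IsClosed ((LinearMap.ker (A : H →ₗ[ℂ] H) : Submodule ℂ H) : Set H) := by
      rw [hkerA]; exact Submodule.isClosed_orthogonal _
    have hkersup : IsClosed ((LinearMap.ker (T : H →ₗ[ℂ] H) ⊔ LinearMap.ker (A : H →ₗ[ℂ] H) : Submodule ℂ H) : Set H) := by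
      rw [hkerT, hkerA]
      apply orth_sup_closed R' R hR'closed hT
      rwa [sup_comm]
    obtain ⟨C6, hC6, hD6⟩ := sum_decomp_bound _ _ hkerTcl hkerAcl hkersup
    set C2 : ℝ := (1 + 2*C1)/2 + C1 with hC2def
    set C3 : ℝ := 1 + C2 with hC3def
    set Cf : ℝ := C4*C2*(1+C6) + C6*C5*C3 with hCfdef
    have hC2 : 0 < C2 := by positivity
    have hC3 : 0 < C3 := by positivity
    have hCf : 0 < Cf := by positivity
    -- the key estimate
    have hest : ∀ x ∈ K, ‖x‖ ≤ Cf * ‖S x‖ := by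
      intro x hx
      set s := S x with hs
      set u := T x with hu
      set v := A x with hv
      have huv : u + v = s := rfl
      have hsmem : s ∈ K := hsub (LinearMap.mem_range_self _ x)
      obtain ⟨u', hu'R, v', hv'R', hsum, hbu', hbv'⟩ := hD1 s hsmem
      set m := u - u' with hmdef
      have hmR : m ∈ R := Submodule.sub_mem _ (LinearMap.mem_range_self _ x) hu'R
      have hmv : m = v' - v := by
        have h0 : u + v = u' + v' := by rw [huv, hsum]
        rw [hmdef]
        linear_combination (norm := abel) h0
      have hmR' : m ∈ R' := by rw [hmv]; exact Submodule.sub_mem _ hv'R' (LinearMap.mem_range_self _ x)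
      have hTm : T m = A m := hCoR m ⟨hmR, hmR'⟩
      -- inner ℂ product identity
      have e1 : (inner ℂ m u : ℂ) = inner ℂ (A m) x := by
        rw [hu]
        conv_lhs => rw [show T = adjoint A by rw [hA, adjoint_adjoint]]
        exact adjoint_inner_right A m x
      have e2 : (inner ℂ m v : ℂ) = inner ℂ (T m) x := by
        rw [hv, hA]
        exact adjoint_inner_right T m x
      have e12 : (inner ℂ m u : ℂ) = inner ℂ m v := by rw [e1, e2, hTm]
      have eu : u = m + u' := by rw [hmdef]; abel
      have ev : v = s - m - u' := by
        rw [hmdef]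
        have : u + v = s := huv
        linear_combination (norm := abel) this
      have key : (2:ℂ) * inner ℂ m m = inner ℂ m s - 2 * inner ℂ m u' := by
        have l1 : (inner ℂ m u : ℂ) = inner ℂ m m + inner ℂ m u' := by
          rw [eu, inner_add_right]
        have l2 : (inner ℂ m v : ℂ) = inner ℂ m s - inner ℂ m m - inner ℂ m u' := by
          rw [ev, inner_sub_right, inner_sub_right]
        rw [l1, l2] at e12
        linear_combination e12
      have hnormkey : 2 * ‖m‖^2 ≤ ‖m‖ * ((1 + 2*C1) * ‖s‖) := by
        have lhs : ‖(2:ℂ) * (inner ℂ m m : ℂ)‖ = 2 * ‖m‖^2 := by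
          rw [norm_mul, @inner_self_eq_norm_sq_to_K ℂ]
          simp [norm_pow]
        have rhs : ‖(inner ℂ m s : ℂ) - 2 * inner ℂ m u'‖ ≤ ‖m‖ * ‖s‖ + 2 * (‖m‖ * ‖u'‖) := by
          refine le_trans (norm_sub_le _ _) ?_
          gcongr
          · exact norm_inner_le_norm _ _
          · rw [norm_mul]
            simp only [Complex.norm_ofNat]
            have := norm_inner_le_norm (𝕜 := ℂ) m u'
            nlinarith [norm_nonneg m, norm_nonneg u']
        calc 2 * ‖m‖^2 = ‖(2:ℂ) * (inner ℂ m m : ℂ)‖ := lhs.symm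
          _ = ‖(inner ℂ m s : ℂ) - 2 * inner ℂ m u'‖ := by rw [key]
          _ ≤ ‖m‖ * ‖s‖ + 2 * (‖m‖ * ‖u'‖) := rhs
          _ ≤ ‖m‖ * ((1 + 2*C1) * ‖s‖) := by nlinarith [norm_nonneg m, hbu']
      have hmbound : ‖m‖ ≤ ((1 + 2*C1)/2) * ‖s‖ := by
        rcases eq_or_lt_of_le (norm_nonneg m) with h0 | h0
        · rw [← h0]; positivity
        · nlinarith
      have hubound : ‖u‖ ≤ C2 * ‖s‖ := by
        calc ‖u‖ = ‖m + u'‖ := by rw [← eu]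
          _ ≤ ‖m‖ + ‖u'‖ := norm_add_le _ _
          _ ≤ ((1 + 2*C1)/2) * ‖s‖ + C1 * ‖s‖ := add_le_add hmbound hbu'
          _ = C2 * ‖s‖ := by rw [hC2def]; ring
      have hvbound : ‖v‖ ≤ C3 * ‖s‖ := by
        have : v = s - u := by rw [← huv]; abel
        calc ‖v‖ = ‖s - u‖ := by rw [this]
          _ ≤ ‖s‖ + ‖u‖ := norm_sub_le _ _
          _ ≤ ‖s‖ + C2 * ‖s‖ := by linarith
          _ = C3 * ‖s‖ := by rw [hC3def]; ring
      -- preimages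
      obtain ⟨z, hz, hzb⟩ := hP4 u (LinearMap.mem_range_self _ x)
      obtain ⟨z', hz', hz'b⟩ := hP5 v (LinearMap.mem_range_self _ x)
      have hk : x - z ∈ LinearMap.ker (T : H →ₗ[ℂ] H) := by
        have : T (x - z) = 0 := by rw [map_sub, hz, ← hu, sub_self]
        exact this
      have hk' : x - z' ∈ LinearMap.ker (A : H →ₗ[ℂ] H) := by
        have : A (x - z') = 0 := by rw [map_sub, hz', ← hv, sub_self]
        exact this
      have hkk' : (x - z) - (x - z') ∈ LinearMap.ker (T : H →ₗ[ℂ] H) ⊔ LinearMap.ker (A : H →ₗ[ℂ] H) :=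
        Submodule.sub_mem _ (Submodule.mem_sup_left hk) (Submodule.mem_sup_right hk')
      obtain ⟨a, ha, b, hb, hab, hba, hbb⟩ := hD6 _ hkk'
      set n := (x - z) - a with hndef
      have hnkerT : n ∈ LinearMap.ker (T : H →ₗ[ℂ] H) := Submodule.sub_mem _ hk ha
      have hnkerA : n ∈ LinearMap.ker (A : H →ₗ[ℂ] H) := by
        have : n = (x - z') + b := by
          rw [hndef]
          linear_combination (norm := abel) hab
        rw [this]
        exact Submodule.add_mem _ hk' hb
      have hnK : n ∈ Kᗮ := by
        rw [hKort, hkerS]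
        exact ⟨hnkerT, hnkerA⟩
      -- final estimate
      have hinner0 : (inner ℂ x n : ℂ) = 0 := hnK x hx
      have hxn : ‖x‖ ≤ ‖x - n‖ := by
        rcases eq_or_lt_of_le (norm_nonneg x) with h0 | h0
        · rw [← h0]; positivity
        · have : ‖x‖^2 = RCLike.re (inner ℂ x (x - n) : ℂ) := by
            rw [inner_sub_right, hinner0, sub_zero, ← @inner_self_eq_norm_sq ℂ]
          have h2 : RCLike.re (inner ℂ x (x - n) : ℂ) ≤ ‖x‖ * ‖x - n‖ :=
            le_trans (le_abs_self _) (le_trans (RCLike.abs_re_le_norm _)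
              (norm_inner_le_norm (𝕜 := ℂ) _ _))
          nlinarith
      have hzb2 : ‖z‖ ≤ C4 * C2 * ‖s‖ := by
        calc ‖z‖ ≤ C4 * ‖u‖ := hzb
          _ ≤ C4 * (C2 * ‖s‖) := by nlinarith
          _ = C4 * C2 * ‖s‖ := by ring
      have hz'b2 : ‖z'‖ ≤ C5 * C3 * ‖s‖ := by
        calc ‖z'‖ ≤ C5 * ‖v‖ := hz'b
          _ ≤ C5 * (C3 * ‖s‖) := by nlinarith
          _ = C5 * C3 * ‖s‖ := by ring
      have hkkval : (x - z) - (x - z') = z' - z := by abel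
      have hanorm : ‖a‖ ≤ C6 * (‖z‖ + ‖z'‖) := by
        calc ‖a‖ ≤ C6 * ‖(x - z) - (x - z')‖ := hba
          _ = C6 * ‖z' - z‖ := by rw [hkkval]
          _ ≤ C6 * (‖z‖ + ‖z'‖) := by
              have := norm_sub_le z' z
              nlinarith [norm_nonneg z, norm_nonneg z']
      have hxnval : x - n = z + a := by rw [hndef]; abel
      calc ‖x‖ ≤ ‖x - n‖ := hxn
        _ = ‖z + a‖ := by rw [hxnval]
        _ ≤ ‖z‖ + ‖a‖ := norm_add_le _ _
        _ ≤ ‖z‖ + C6 * (‖z‖ + ‖z'‖) := by linarith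
        _ ≤ C4*C2*‖s‖ + C6 * (C4*C2*‖s‖ + C5*C3*‖s‖) := by nlinarith
        _ ≤ Cf * ‖s‖ := by rw [hCfdef]; nlinarith [norm_nonneg s]
    -- closedness of range S via antilipschitz restriction
    set D : K →L[ℂ] H := S.comp K.subtypeL with hD
    have hDb : ∀ p : K, ‖p‖ ≤ Cf * ‖D p‖ := fun p => hest p p.2
    have hanti : AntilipschitzWith (⟨Cf, hCf.le⟩ : NNReal) D := D.antilipschitz_of_bound hDb
    have hclosedrange : IsClosed (Set.range D) :=
      (hanti.isClosedEmbedding D.uniformContinuous).isClosed_range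
    have hrangeDset : Set.range D = ((K.map (S : H →ₗ[ℂ] H) : Submodule ℂ H) : Set H) := by
      ext y
      constructor
      · rintro ⟨p, rfl⟩
        exact ⟨p, p.2, rfl⟩
      · rintro ⟨x, hx, rfl⟩
        exact ⟨⟨x, hx⟩, rfl⟩
    have hrangeeq : LinearMap.range (S : H →ₗ[ℂ] H) = K.map (S : H →ₗ[ℂ] H) := by
      apply le_antisymm
      · rintro _ ⟨x, rfl⟩
        haveI : Submodule.HasOrthogonalProjection K := inferInstance
        have horth : x - projL K x ∈ Kᗮ := by
          have := Submodule.sub_starProjection_mem_orthogonal (K := K) x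
          simpa [projL] using this
        have hker : S (x - projL K x) = 0 := by
          rw [hKort] at horth
          exact horth
        have : S x = S (projL K x) := by
          have h0 := map_sub S x (projL K x)
          rw [hker] at h0
          have := sub_eq_zero.mp h0.symm
          exact this
        rw [ContinuousLinearMap.coe_coe, this]
        exact ⟨projL K x, projL_apply_mem K x, rfl⟩
      · rintro _ ⟨x, hx, rfl⟩
        exact LinearMap.mem_range_self _ x
    have : (LinearMap.range (S : H →ₗ[ℂ] H) : Set H) = Set.range D := by
      rw [hrangeDset, hrangeeq]
    rw [this]
    exact hclosedrange
  refine ⟨⟨fun h => dirB h, fun h => ?_⟩, fun h => dirA h⟩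
  · rw [← dirA h]; exact h
end

section
/- Let T be a closed range CoR operator on a complex Hilbert space H such that R(T) + R(T*) is closed. Then T(T + T*)† T = T − (1/2) P T P, where P is the orthogonal projection onto R(T) ∩ R(T*). -/
open ContinuousLinearMap

variable {H : Type*} [NormedAddCommGroup H] [InnerProductSpace ℂ H] [CompleteSpace H]

private lemma half_of_double {M : Type*} [AddCommGroup M] [Module ℂ M] {a b : M}
    (h : a + a = b) : a = (1 / 2 : ℂ) • b := by
  have h2 : (2 : ℂ) • a = b := by rw [two_smul]; exact h
  have := congrArg (fun c => (1 / 2 : ℂ) • c) h2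
  simpa [smul_smul] using this

theorem stmt12 (T : H →L[ℂ] H) (hT : IsClosed (LinearMap.range (T : H →ₗ[ℂ] H) : Set H))
    (hCoR : ∀ x ∈ LinearMap.range (T : H →ₗ[ℂ] H) ⊓ LinearMap.range (adjoint T : H →ₗ[ℂ] H), T x = adjoint T x)
    (hsum : IsClosed ((LinearMap.range (T : H →ₗ[ℂ] H) ⊔ LinearMap.range (adjoint T : H →ₗ[ℂ] H) : Submodule ℂ H) : Set H))
    (P : H →L[ℂ] H) (hP1 : IsIdempotentElem P) (hP2 : IsSelfAdjoint P)
    (hPr : LinearMap.range (P : H →ₗ[ℂ] H) = LinearMap.range (T : H →ₗ[ℂ] H) ⊓ LinearMap.range (adjoint T : H →ₗ[ℂ] H))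
    (X : H →L[ℂ] H)
    (h1 : (T + adjoint T) ∘L X ∘L (T + adjoint T) = T + adjoint T)
    (h2 : X ∘L (T + adjoint T) ∘L X = X)
    (h3 : IsSelfAdjoint ((T + adjoint T) ∘L X))
    (h4 : IsSelfAdjoint (X ∘L (T + adjoint T))) :
    T ∘L X ∘L T = T - (1 / 2 : ℂ) • (P ∘L T ∘L P) := by
  set T' := adjoint T with hT'def
  set S := T + T' with hSdef
  set Q := S ∘L X with hQdef
  have hSsa : adjoint S = S := by
    rw [hSdef, map_add, hT'def, adjoint_adjoint, add_comm]
  have hQsa : adjoint Q = Q := isSelfAdjoint_iff'.mp h3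
  have hQS : Q ∘L S = S := by rw [hQdef, comp_assoc]; exact h1
  have hSQ : S ∘L Q = S := by
    have := congrArg adjoint hQS
    rwa [adjoint_comp, hSsa, hQsa] at this
  -- kernel lemma: S x = 0 → T x = 0 ∧ T' x = 0
  have hker : ∀ x : H, S x = 0 → T x = 0 ∧ T' x = 0 := by
    intro x hx
    have hx' : T x + T' x = 0 := by simpa [hSdef] using hx
    have hT'x : T' x = -(T x) := by
      rw [neg_eq_of_add_eq_zero_right hx']
    have hy1 : T x ∈ LinearMap.range (T : H →ₗ[ℂ] H) := ⟨x, rfl⟩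
    have hy2 : T x ∈ LinearMap.range (T' : H →ₗ[ℂ] H) := ⟨-x, by show T' (-x) = T x; rw [map_neg, hT'x, neg_neg]⟩
    have hTy : T (T x) = T' (T x) := hCoR _ (Submodule.mem_inf.mpr ⟨hy1, hy2⟩)
    have hinner : (inner ℂ (T x) (T x) : ℂ) = - inner ℂ (T x) (T x) := by
      calc (inner ℂ (T x) (T x) : ℂ) = inner ℂ x (T' (T x)) := (adjoint_inner_right T x (T x)).symm
        _ = inner ℂ x (T (T x)) := by rw [← hTy]
        _ = inner ℂ (T' x) (T x) := (adjoint_inner_left T (T x) x).symm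
        _ = - inner ℂ (T x) (T x) := by rw [hT'x, inner_neg_left]
    have h0 : (inner ℂ (T x) (T x) : ℂ) = 0 := by linear_combination hinner / 2
    have hTx : T x = 0 := inner_self_eq_zero.mp h0
    exact ⟨hTx, by rw [hT'x, hTx, neg_zero]⟩
  have hTQ : T ∘L Q = T := by
    ext z
    have h0 : S (z - Q z) = 0 := by
      rw [map_sub, ← comp_apply S Q z, hSQ, sub_self]
    have := (hker _ h0).1
    rw [map_sub, sub_eq_zero] at this
    simpa [comp_apply] using this.symm
  have hT'Q : T' ∘L Q = T' := by
    ext z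
    have h0 : S (z - Q z) = 0 := by
      rw [map_sub, ← comp_apply S Q z, hSQ, sub_self]
    have := (hker _ h0).2
    rw [map_sub, sub_eq_zero] at this
    simpa [comp_apply] using this.symm
  have hQT : Q ∘L T = T := by
    have := congrArg adjoint hT'Q
    rwa [adjoint_comp, hQsa, hT'def, adjoint_adjoint] at this
  -- P facts
  have hPsa : adjoint P = P := isSelfAdjoint_iff'.mp hP2
  have hPP : P ∘L P = P := hP1
  have hPid : ∀ y ∈ LinearMap.range (T : H →ₗ[ℂ] H) ⊓ LinearMap.range (T' : H →ₗ[ℂ] H), P y = y := by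
    intro y hy
    rw [← hPr] at hy
    obtain ⟨w, hw⟩ := hy
    rw [← hw]; show P (P w) = P w; rw [← comp_apply P P w, hPP]
  have hrange : ∀ z : H, P z ∈ LinearMap.range (T : H →ₗ[ℂ] H) ⊓ LinearMap.range (T' : H →ₗ[ℂ] H) := by
    intro z; rw [← hPr]; exact ⟨z, rfl⟩
  have hTP : ∀ z : H, T (P z) = T' (P z) := fun z => hCoR _ (hrange z)
  have hTPo : T ∘L P = T' ∘L P := by ext z; simpa [comp_apply] using hTP z
  have hPT : P ∘L T' = P ∘L T := by
    have := congrArg adjoint hTPo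
    rwa [adjoint_comp, adjoint_comp, hPsa, hT'def, adjoint_adjoint] at this
  -- P (T' (X (T x))) = T' (X (T x))
  have hSXT : S ∘L (X ∘L T) = T := by rw [← comp_assoc]; exact hQT
  have hSu : ∀ x : H, S (X (T x)) = T x := by
    intro x
    have := congrFun (congrArg DFunLike.coe hSXT) x
    simpa [comp_apply] using this
  have hfix : ∀ x : H, P (T' (X (T x))) = T' (X (T x)) := by
    intro x
    apply hPid
    constructor
    · refine ⟨x - X (T x), ?_⟩
      have h5 : T (X (T x)) + T' (X (T x)) = T x := by
        have := hSu x; rw [hSdef] at this; simpa using this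
      have h6 : T' (X (T x)) = T x - T (X (T x)) := by
        rw [eq_sub_iff_add_eq, add_comm]; exact h5
      rw [map_sub, h6]; rfl
    · exact ⟨X (T x), rfl⟩
  -- main doubling identity
  have E1 : (T' ∘L (X ∘L T)) + (T' ∘L (X ∘L T)) = P ∘L T := by
    ext x
    have hPTx : P (T (X (T x))) = P (T' (X (T x))) := by
      have := congrFun (congrArg DFunLike.coe hPT) (X (T x))
      simpa [comp_apply] using this.symm
    have h5 : T (X (T x)) + T' (X (T x)) = T x := by
      have := hSu x; rw [hSdef] at this; simpa using this
    calc ((T' ∘L (X ∘L T)) + (T' ∘L (X ∘L T))) x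
        = T' (X (T x)) + T' (X (T x)) := by simp [comp_apply]
      _ = P (T' (X (T x))) + P (T' (X (T x))) := by rw [hfix x]
      _ = P (T (X (T x))) + P (T' (X (T x))) := by rw [hPTx]
      _ = P (T (X (T x)) + T' (X (T x))) := (map_add P _ _).symm
      _ = P (T x) := by rw [h5]
      _ = (P ∘L T) x := rfl
  have hT'XT : T' ∘L (X ∘L T) = (1 / 2 : ℂ) • (P ∘L T) := half_of_double E1
  -- P T P = P T
  have hPSP : P ∘L (S ∘L P) = S ∘L P := by
    ext z
    simp only [comp_apply]
    apply hPid
    constructor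
    · refine ⟨P z + P z, ?_⟩
      rw [map_add, hSdef]
      simp only [add_apply, comp_apply]
      rw [← hTP z]; rfl
    · refine ⟨P z + P z, ?_⟩
      rw [map_add, hSdef]
      simp only [add_apply, comp_apply]
      rw [hTP z]; rfl
  have hPSP' : (P ∘L S) ∘L P = P ∘L S := by
    have := congrArg adjoint hPSP
    rwa [adjoint_comp, adjoint_comp, hPsa, hSsa] at this
  have hPSo : P ∘L S = (P ∘L T) + (P ∘L T) := by
    rw [hSdef, comp_add, ← hPT]
  have hPTP : (P ∘L T) ∘L P = P ∘L T := by
    have h := hPSP'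
    rw [hPSo, add_comp] at h
    have hdouble : ((P ∘L T) ∘L P) + ((P ∘L T) ∘L P) = (P ∘L T) + (P ∘L T) := h
    have ha := half_of_double hdouble
    have hb := half_of_double (rfl : (P ∘L T) + (P ∘L T) = (P ∘L T) + (P ∘L T))
    rw [ha, ← hb]
  -- conclude
  have hsum' : (T ∘L (X ∘L T)) + (T' ∘L (X ∘L T)) = T := by
    rw [← add_comp, ← hSdef]; exact hSXT
  have : T ∘L (X ∘L T) = T - (1 / 2 : ℂ) • ((P ∘L T) ∘L P) := by
    rw [hPTP, ← hT'XT, eq_sub_iff_add_eq]; exact hsum'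
  rw [show T ∘L X ∘L T = T ∘L (X ∘L T) from rfl, this, comp_assoc]
end

section
/- Let T be a closed range CoR operator on a complex Hilbert space H such that R(T) + R(T*) is closed. Then 2 T (T + T*)† T* = 2 T* (T + T*)† T = P T P, where P is the orthogonal projection onto R(T) ∩ R(T*). -/
open ContinuousLinearMap

variable {H : Type*} [NormedAddCommGroup H] [InnerProductSpace ℂ H] [CompleteSpace H]

set_option maxHeartbeats 1000000 in
theorem stmt13 (T : H →L[ℂ] H) (hT : IsClosed (LinearMap.range (T : H →ₗ[ℂ] H) : Set H))
    (hCoR : ∀ x ∈ LinearMap.range (T : H →ₗ[ℂ] H) ⊓ LinearMap.range (adjoint T : H →ₗ[ℂ] H), T x = adjoint T x)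
    (hsum : IsClosed ((LinearMap.range (T : H →ₗ[ℂ] H) ⊔ LinearMap.range (adjoint T : H →ₗ[ℂ] H) : Submodule ℂ H) : Set H))
    (P : H →L[ℂ] H) (hP1 : IsIdempotentElem P) (hP2 : IsSelfAdjoint P)
    (hPr : LinearMap.range (P : H →ₗ[ℂ] H) = LinearMap.range (T : H →ₗ[ℂ] H) ⊓ LinearMap.range (adjoint T : H →ₗ[ℂ] H))
    (X : H →L[ℂ] H)
    (h1 : (T + adjoint T) ∘L X ∘L (T + adjoint T) = T + adjoint T)
    (h2 : X ∘L (T + adjoint T) ∘L X = X)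
    (h3 : IsSelfAdjoint ((T + adjoint T) ∘L X))
    (h4 : IsSelfAdjoint (X ∘L (T + adjoint T))) :
    (2 : ℂ) • (T ∘L X ∘L adjoint T) = P ∘L T ∘L P ∧
      (2 : ℂ) • (adjoint T ∘L X ∘L T) = P ∘L T ∘L P := by
  set S : H →L[ℂ] H := T + adjoint T with hSdef
  have hSsa : adjoint S = S := by
    rw [hSdef, ← star_eq_adjoint, star_add, star_eq_adjoint, star_eq_adjoint, adjoint_adjoint,
      add_comm]
  have Sapp : ∀ v, S v = T v + adjoint T v := by
    intro v; rw [hSdef]; simp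
  -- pointwise versions of the Moore-Penrose equations
  have m1 : ∀ v, S (X (S v)) = S v := by
    intro v; have := DFunLike.congr_fun h1 v; simpa using this
  have m2 : ∀ v, X (S (X v)) = X v := by
    intro v; have := DFunLike.congr_fun h2 v; simpa using this
  have r1 : ∀ v, adjoint X (S v) = S (X v) := by
    have := h3.star_eq
    rw [star_eq_adjoint, adjoint_comp, hSsa] at this
    intro v; have := DFunLike.congr_fun this v; simpa using this
  have r2 : ∀ v, S (adjoint X v) = X (S v) := by
    have := h4.star_eq
    rw [star_eq_adjoint, adjoint_comp, hSsa] at this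
    intro v; have := DFunLike.congr_fun this v; simpa using this
  have e2 : ∀ v, adjoint X (S (adjoint X v)) = adjoint X v := by
    have := congrArg adjoint h2
    rw [adjoint_comp, adjoint_comp, hSsa] at this
    intro v; have := DFunLike.congr_fun this v; simpa using this
  -- X is self-adjoint (uniqueness of Moore-Penrose inverse)
  have chain1 : ∀ v, S (X v) = S (adjoint X v) := by
    intro v
    calc S (X v) = adjoint X (S v) := (r1 v).symm
      _ = adjoint X (S (X (S v))) := by rw [m1]
      _ = S (X (X (S v))) := r1 (X (S v))
      _ = S (X (S (adjoint X v))) := by rw [← r2 v]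
      _ = S (adjoint X v) := m1 (adjoint X v)
  have chain2 : ∀ v, X (S v) = adjoint X (S v) := by
    intro v
    calc X (S v) = S (adjoint X v) := (r2 v).symm
      _ = S (X (S (adjoint X v))) := (m1 _).symm
      _ = S (X (X (S v))) := by rw [r2 v]
      _ = adjoint X (S (X (S v))) := (r1 _).symm
      _ = adjoint X (S v) := by rw [m1]
  have hX : adjoint X = X := by
    ext v
    calc adjoint X v = adjoint X (S (adjoint X v)) := (e2 v).symm
      _ = X (S (adjoint X v)) := (chain2 _).symm
      _ = X (S (X v)) := by rw [← chain1 v]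
      _ = X v := m2 v
  -- kernel of S is contained in the kernels of T and T*
  have kerA : ∀ z, S z = 0 → T z = 0 ∧ adjoint T z = 0 := by
    intro z hz
    have hsum0 : T z + adjoint T z = 0 := by rw [← Sapp]; exact hz
    have hTz : adjoint T z = - T z := eq_neg_of_add_eq_zero_right hsum0
    have hmem : T z ∈ LinearMap.range (T : H →ₗ[ℂ] H) ⊓ LinearMap.range (adjoint T : H →ₗ[ℂ] H) :=
      ⟨⟨z, rfl⟩, ⟨-z, by rw [map_neg, ContinuousLinearMap.coe_coe, hTz, neg_neg]⟩⟩
    have hc : T (T z) = adjoint T (T z) := hCoR _ hmem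
    have h6 : (inner ℂ (T z) (adjoint T z) : ℂ) = inner ℂ (T z) (T z) := by
      rw [ContinuousLinearMap.adjoint_inner_right, hc, ContinuousLinearMap.adjoint_inner_left]
    have h7 : (inner ℂ (T z) (T z) : ℂ) = - inner ℂ (T z) (T z) := by
      calc (inner ℂ (T z) (T z) : ℂ) = inner ℂ (T z) (adjoint T z) := h6.symm
        _ = inner ℂ (T z) (-(T z)) := by rw [hTz]
        _ = - inner ℂ (T z) (T z) := by rw [inner_neg_right]
    have h8 : (inner ℂ (T z) (T z) : ℂ) + inner ℂ (T z) (T z) = 0 := by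
      linear_combination h7
    have hT0 : T z = 0 := inner_self_eq_zero.mp (add_self_eq_zero.mp h8)
    exact ⟨hT0, by rw [hTz, hT0, neg_zero]⟩
  -- elements orthogonal to range S are in ker S
  have hrange0 : ∀ z, z ∈ (LinearMap.range (S : H →ₗ[ℂ] H))ᗮ → S z = 0 := by
    intro z hz
    have h0 : (inner ℂ (S (S z)) z : ℂ) = 0 :=
      (Submodule.mem_orthogonal _ z).mp hz _ ⟨S z, rfl⟩
    have hadj := ContinuousLinearMap.adjoint_inner_left S z (S z)
    rw [hSsa] at hadj
    exact inner_self_eq_zero.mp (hadj.symm.trans h0)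
  have hclos : ∀ v, (∀ z, S z = 0 → (inner ℂ z v : ℂ) = 0) →
      v ∈ (LinearMap.range (S : H →ₗ[ℂ] H)).topologicalClosure := by
    intro v hv
    rw [← Submodule.orthogonal_orthogonal_eq_closure, Submodule.mem_orthogonal]
    intro u hu
    exact hv u (hrange0 u hu)
  -- the projection Q = S X fixes the ranges of T and T*
  set Q : H →L[ℂ] H := S ∘L X with hQdef
  have hSK : LinearMap.range (S : H →ₗ[ℂ] H) ≤ LinearMap.ker (((1 : H →L[ℂ] H) - Q : H →L[ℂ] H) : H →ₗ[ℂ] H) := by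
    rintro _ ⟨x, rfl⟩
    rw [LinearMap.mem_ker]
    have hq : Q (S x) = S x := by rw [hQdef]; simpa using m1 x
    simp [ContinuousLinearMap.sub_apply, hq]
  have hfix : ∀ v, v ∈ (LinearMap.range (S : H →ₗ[ℂ] H)).topologicalClosure → Q v = v := by
    intro v hv
    have hmem := Submodule.topologicalClosure_minimal _ hSK
      (ContinuousLinearMap.isClosed_ker _) hv
    have h0 := LinearMap.mem_ker.mp hmem
    have h0' : v - Q v = 0 := by simpa [ContinuousLinearMap.sub_apply] using h0
    exact (sub_eq_zero.mp h0').symm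
  have A1 : ∀ x, Q (T x) = T x := by
    intro x
    refine hfix _ (hclos _ ?_)
    intro z hz
    have hT' := (kerA z hz).2
    have := ContinuousLinearMap.adjoint_inner_left T x z
    rw [hT'] at this
    simpa using this.symm
  have A2 : ∀ x, Q (adjoint T x) = adjoint T x := by
    intro x
    refine hfix _ (hclos _ ?_)
    intro z hz
    have hT0 := (kerA z hz).1
    have := ContinuousLinearMap.adjoint_inner_right T z x
    rw [hT0] at this
    simpa using this
  have hQsa : adjoint Q = Q := by
    rw [hQdef, ← star_eq_adjoint]
    exact h3.star_eq
  -- T ∘ Q = T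
  have A3 : ∀ x, T (Q x) = T x := by
    have A2op : Q ∘L adjoint T = adjoint T := by ext x; simpa using A2 x
    have := congrArg adjoint A2op
    rw [adjoint_comp, adjoint_adjoint, hQsa] at this
    intro x; have := DFunLike.congr_fun this x; simpa using this
  have hcomm : ∀ v, S (X v) = X (S v) := by
    intro v
    rw [← r2 v, hX]
  -- the three expanded identities
  have L1 : ∀ x, T (X (T x)) + T (X (adjoint T x)) = T x := by
    intro x
    have h0 : T (X (S x)) = T x := by
      rw [← hcomm x]
      have : S (X x) = Q x := by rw [hQdef]; simp
      rw [this]; exact A3 x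
    rw [Sapp, map_add, map_add] at h0
    exact h0
  have L2 : ∀ x, T (X (T x)) + adjoint T (X (T x)) = T x := by
    intro x
    have h0 := A1 x
    rw [hQdef] at h0
    simp only [ContinuousLinearMap.comp_apply] at h0
    rw [Sapp] at h0
    exact h0
  have L3 : ∀ x, T (X (adjoint T x)) + adjoint T (X (adjoint T x)) = adjoint T x := by
    intro x
    have h0 := A2 x
    rw [hQdef] at h0
    simp only [ContinuousLinearMap.comp_apply] at h0
    rw [Sapp] at h0
    exact h0
  -- b = c
  have hbc : ∀ x, T (X (adjoint T x)) = adjoint T (X (T x)) := by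
    intro x
    exact add_left_cancel ((L1 x).trans (L2 x).symm)
  -- P facts
  have hPfix : ∀ y, y ∈ LinearMap.range (P : H →ₗ[ℂ] H) → P y = y := by
    rintro _ ⟨w, rfl⟩
    have := DFunLike.congr_fun hP1 w
    simpa [ContinuousLinearMap.mul_apply] using this
  have hTP : ∀ x, T (P x) = adjoint T (P x) := by
    intro x
    exact hCoR _ (by rw [← hPr]; exact ⟨x, rfl⟩)
  have hPsa : adjoint P = P := by rw [← star_eq_adjoint]; exact hP2.star_eq
  -- P ∘ b = b
  have hPbop : P ∘L (T ∘L X ∘L adjoint T) = T ∘L X ∘L adjoint T := by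
    ext x
    simp only [ContinuousLinearMap.comp_apply]
    refine hPfix _ ?_
    rw [hPr]
    exact ⟨⟨X (adjoint T x), rfl⟩, ⟨X (T x), (hbc x).symm⟩⟩
  have hbsa : adjoint (T ∘L X ∘L adjoint T) = T ∘L X ∘L adjoint T := by
    rw [adjoint_comp, adjoint_comp, adjoint_adjoint, hX, ContinuousLinearMap.comp_assoc]
  have hbP : (T ∘L X ∘L adjoint T) ∘L P = T ∘L X ∘L adjoint T := by
    have := congrArg adjoint hPbop
    rw [adjoint_comp, hbsa, hPsa] at this
    exact this
  -- main pointwise identity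
  have main : ∀ x, (2 : ℂ) • (T (X (adjoint T x))) = P (T (P x)) := by
    intro x
    have l1 := L1 (P x)
    rw [hTP x] at l1
    -- l1 : T (X (adjoint T (P x))) + T (X (adjoint T (P x))) = adjoint T (P x)
    have eb : T (X (adjoint T (P x))) = T (X (adjoint T x)) := by
      have := DFunLike.congr_fun hbP x
      simpa using this
    have e2' : P (T (P x)) = T (P x) := by
      refine hPfix _ ?_
      rw [hPr]
      exact ⟨⟨P x, rfl⟩, ⟨P x, (hTP x).symm⟩⟩
    rw [eb] at l1
    rw [two_smul, l1, e2', hTP x]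
  constructor
  · ext x
    simp only [ContinuousLinearMap.smul_apply, ContinuousLinearMap.comp_apply]
    exact main x
  · ext x
    simp only [ContinuousLinearMap.smul_apply, ContinuousLinearMap.comp_apply]
    rw [← hbc x]
    exact main x
end

section
/- Let P and Q be orthogonal projections on a complex Hilbert space H, and let T = P₁P₂⋯P_k be any finite product where each P_i ∈ {P, Q}. Then T and T* coincide on closure(R(T)) ∩ closure(R(T*)), i.e., T is a CoR operator. -/
open ContinuousLinearMap

variable {H : Type*} [NormedAddCommGroup H] [InnerProductSpace ℂ H] [CompleteSpace H]

namespace CoR14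

noncomputable def proj (P Q : H →L[ℂ] H) (b : Bool) : H →L[ℂ] H := if b then P else Q

noncomputable def alt (P Q : H →L[ℂ] H) : Bool → ℕ → (H →L[ℂ] H)
  | _, 0 => 1
  | b, n+1 => proj P Q b * alt P Q (!b) n

def par (n : ℕ) : Bool := decide (n % 2 = 1)

lemma par_succ (n : ℕ) : par (n+1) = !(par n) := by
  rcases Nat.mod_two_eq_zero_or_one n with h | h <;>
    simp [par, Nat.add_mod, h]

variable (P Q : H →L[ℂ] H)

lemma alt_succ_right : ∀ n b, alt P Q b (n+1) = alt P Q b n * proj P Q (xor b (par n))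
  | 0, b => by simp [alt, par]
  | n+1, b => by
    rw [show alt P Q b (n+2) = proj P Q b * alt P Q (!b) (n+1) from rfl,
      alt_succ_right n (!b), ← mul_assoc,
      show proj P Q b * alt P Q (!b) n = alt P Q b (n+1) from rfl]
    congr 2
    rw [par_succ]
    cases b <;> cases hp : par n <;> simp

lemma star_proj (hP2 : IsSelfAdjoint P) (hQ2 : IsSelfAdjoint Q) (b : Bool) :
    star (proj P Q b) = proj P Q b := by
  cases b <;> simp [proj, hP2.star_eq, hQ2.star_eq]

lemma star_alt (hP2 : IsSelfAdjoint P) (hQ2 : IsSelfAdjoint Q) :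
    ∀ n b, star (alt P Q b n) = alt P Q (xor (!b) (par n)) n
  | 0, b => by simp [alt]
  | n+1, b => by
    rw [show alt P Q b (n+1) = proj P Q b * alt P Q (!b) n from rfl, star_mul,
      star_alt hP2 hQ2 n (!b), star_proj P Q hP2 hQ2,
      alt_succ_right, par_succ]
    congr 2 <;> (cases b <;> cases hp : par n <;> simp)

lemma idem_proj (hP1 : IsIdempotentElem P) (hQ1 : IsIdempotentElem Q) (b : Bool) :
    proj P Q b * proj P Q b = proj P Q b := by
  cases b <;> simp [proj, hP1.eq, hQ1.eq]

lemma exists_alt (hP1 : IsIdempotentElem P) (hQ1 : IsIdempotentElem Q) :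
    ∀ l : List (H →L[ℂ] H), l ≠ [] → (∀ S ∈ l, S = P ∨ S = Q) →
      ∃ b n, l.prod = alt P Q b (n+1) := by
  intro l
  induction l with
  | nil => exact fun h => absurd rfl h
  | cons S t ih =>
    intro _ hmem
    have hS : ∃ c, S = proj P Q c := by
      rcases hmem S (List.mem_cons_self) with rfl | rfl
      exacts [⟨true, rfl⟩, ⟨false, rfl⟩]
    obtain ⟨c, rfl⟩ := hS
    by_cases ht : t = []
    · subst ht
      exact ⟨c, 0, by simp [alt]⟩
    · obtain ⟨b, n, hbn⟩ := ih ht (fun S hS => hmem _ (List.mem_cons_of_mem _ hS))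
      rw [List.prod_cons, hbn]
      by_cases hcb : c = b
      · subst hcb
        refine ⟨c, n, ?_⟩
        rw [show alt P Q c (n+1) = proj P Q c * alt P Q (!c) n from rfl, ← mul_assoc,
          idem_proj P Q hP1 hQ1]
      · have hc : c = !b := by cases c <;> cases b <;> simp_all
        subst hc
        exact ⟨!b, n+1,
          by rw [show alt P Q (!b) (n+2) = proj P Q (!b) * alt P Q (!!b) (n+1) from rfl,
            Bool.not_not]⟩

lemma alt_fix (x : H) (hx : P x = x) (hqx : Q x = x) : ∀ n b, alt P Q b n x = x
  | 0, b => by simp [alt]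
  | n+1, b => by
    rw [show alt P Q b (n+1) = proj P Q b * alt P Q (!b) n from rfl, ContinuousLinearMap.mul_apply,
      alt_fix x hx hqx n (!b)]
    cases b <;> simpa [proj]

lemma fix_of_mem_closure (R S : H →L[ℂ] H) (hR : IsIdempotentElem R) (x : H)
    (hx : x ∈ (LinearMap.range ((R * S : H →L[ℂ] H) : H →ₗ[ℂ] H)).topologicalClosure) : R x = x := by
  have hcl : IsClosed ((LinearMap.range (R : H →ₗ[ℂ] H) : Submodule ℂ H) : Set H) := by
    have heq : (LinearMap.range (R : H →ₗ[ℂ] H) : Set H) = (LinearMap.ker ((1 - R : H →L[ℂ] H) : H →ₗ[ℂ] H) : Set H) := by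
      ext y
      constructor
      · rintro ⟨z, rfl⟩
        have h2 : R (R z) = R z := by
          conv_lhs => rw [← ContinuousLinearMap.mul_apply, hR.eq]
        simp [LinearMap.mem_ker, h2]
      · intro hy
        have h3 : y - R y = 0 := by simpa [sub_apply] using hy
        exact ⟨y, by rw [eq_comm, ← sub_eq_zero]; simpa using h3⟩
    rw [heq]
    exact isClosed_ker (1 - R)
  have hle : LinearMap.range ((R * S : H →L[ℂ] H) : H →ₗ[ℂ] H) ≤ LinearMap.range (R : H →ₗ[ℂ] H) := by
    rintro y ⟨z, rfl⟩
    exact ⟨S z, by simp [ContinuousLinearMap.mul_apply]⟩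
  obtain ⟨z, hz⟩ := Submodule.topologicalClosure_minimal (s := LinearMap.range ((R * S : H →L[ℂ] H) : H →ₗ[ℂ] H)) hle hcl hx
  rw [← hz, ContinuousLinearMap.coe_coe, ← ContinuousLinearMap.mul_apply, hR.eq]

end CoR14

theorem stmt14 (P Q : H →L[ℂ] H)
    (hP1 : IsIdempotentElem P) (hP2 : IsSelfAdjoint P)
    (hQ1 : IsIdempotentElem Q) (hQ2 : IsSelfAdjoint Q)
    (l : List (H →L[ℂ] H)) (hl : l ≠ []) (hmem : ∀ S ∈ l, S = P ∨ S = Q) :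
    ∀ x ∈ (LinearMap.range (l.prod : H →ₗ[ℂ] H)).topologicalClosure ⊓
        (LinearMap.range (adjoint l.prod : H →ₗ[ℂ] H)).topologicalClosure,
      l.prod x = adjoint l.prod x := by
  classical
  obtain ⟨b, n, hT⟩ := CoR14.exists_alt P Q hP1 hQ1 l hl hmem
  have hadj : adjoint l.prod = star l.prod := (star_eq_adjoint _).symm
  have hstar : star l.prod = CoR14.alt P Q (xor (!b) (CoR14.par (n+1))) (n+1) := by
    rw [hT]; exact CoR14.star_alt P Q hP2 hQ2 (n+1) b
  intro x hx
  rw [Submodule.mem_inf] at hx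
  obtain ⟨hx1, hx2⟩ := hx
  by_cases hpar : CoR14.par (n+1) = true
  · have hself : star l.prod = l.prod := by
      rw [hstar, hT]
      congr 1
      cases b <;> simp [hpar]
    rw [hadj, hself]
  · have hpar' : CoR14.par (n+1) = false := by simpa using hpar
    have hstar' : star l.prod = CoR14.alt P Q (!b) (n+1) := by
      rw [hstar]
      congr 1
      cases b <;> simp [hpar']
    have h1 : CoR14.proj P Q b x = x := by
      rw [hT] at hx1
      exact CoR14.fix_of_mem_closure (CoR14.proj P Q b) (CoR14.alt P Q (!b) n) 
        (CoR14.idem_proj P Q hP1 hQ1 b) x hx1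
    have h2 : CoR14.proj P Q (!b) x = x := by
      rw [hadj, hstar'] at hx2
      exact CoR14.fix_of_mem_closure (CoR14.proj P Q (!b)) (CoR14.alt P Q (!!b) n)
        (CoR14.idem_proj P Q hP1 hQ1 (!b)) x hx2
    have hPQ : P x = x ∧ Q x = x := by
      cases b
      · exact ⟨by simpa [CoR14.proj] using h2, by simpa [CoR14.proj] using h1⟩
      · exact ⟨by simpa [CoR14.proj] using h1, by simpa [CoR14.proj] using h2⟩
    rw [hadj, hstar', hT, CoR14.alt_fix P Q x hPQ.1 hPQ.2, CoR14.alt_fix P Q x hPQ.1 hPQ.2]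
end

section
/- Let P and Q be orthogonal projections on a complex Hilbert space H and let T be an alternating product PQPQ⋯Q ending with Q (so T* = QP⋯P). Then closure(R(T)) ∩ closure(R(T*)) = R(P) ∩ R(Q), and both T and T* act as the identity on R(P) ∩ R(Q). -/
open ContinuousLinearMap

variable {H : Type*} [NormedAddCommGroup H] [InnerProductSpace ℂ H] [CompleteSpace H]

lemma mem_range_iff_of_idem (P : H →L[ℂ] H) (hP : IsIdempotentElem P) (x : H) :
    x ∈ LinearMap.range (P : H →ₗ[ℂ] H) ↔ P x = x := by
  constructor
  · rintro ⟨y, rfl⟩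
    have := congrFun (congrArg (DFunLike.coe) hP) y
    simpa [ContinuousLinearMap.mul_apply] using this
  · intro h; exact ⟨x, h⟩

lemma isClosed_range_of_idem (P : H →L[ℂ] H) (hP : IsIdempotentElem P) :
    IsClosed ((LinearMap.range (P : H →ₗ[ℂ] H) : Submodule ℂ H) : Set H) := by
  have h : (LinearMap.range (P : H →ₗ[ℂ] H) : Submodule ℂ H) = LinearMap.ker ((1 - P : H →L[ℂ] H) : H →ₗ[ℂ] H) := by
    ext x
    rw [mem_range_iff_of_idem P hP, LinearMap.mem_ker]
    constructor
    · intro h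
      simp [ContinuousLinearMap.sub_apply, h]
    · intro h
      have := congrArg (fun y => y + P x) h
      simpa [ContinuousLinearMap.sub_apply, sub_add_cancel] using this.symm
  rw [h]
  exact isClosed_ker (1 - P)

lemma fix_pow (P Q : H →L[ℂ] H) (x : H) (hPx : P x = x) (hQx : Q x = x) :
    ∀ m : ℕ, ((P * Q) ^ m) x = x := by
  intro m
  induction m with
  | zero => simp
  | succ k ih =>
      rw [pow_succ, ContinuousLinearMap.mul_apply, ContinuousLinearMap.mul_apply,
        hQx, hPx, ih]

theorem stmt15 (P Q : H →L[ℂ] H)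
    (hP1 : IsIdempotentElem P) (hP2 : IsSelfAdjoint P)
    (hQ1 : IsIdempotentElem Q) (hQ2 : IsSelfAdjoint Q)
    (n : ℕ) (hn : 1 ≤ n) :
    (let T := (P * Q) ^ n
     (LinearMap.range (T : H →ₗ[ℂ] H)).topologicalClosure ⊓
         (LinearMap.range ((adjoint T : H →L[ℂ] H) : H →ₗ[ℂ] H)).topologicalClosure =
       LinearMap.range (P : H →ₗ[ℂ] H) ⊓ LinearMap.range (Q : H →ₗ[ℂ] H) ∧
       ∀ x ∈ LinearMap.range (P : H →ₗ[ℂ] H) ⊓ LinearMap.range (Q : H →ₗ[ℂ] H), T x = x ∧ adjoint T x = x) := by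
  intro T
  have hT : T = (P * Q) ^ n := rfl
  obtain ⟨k, hk⟩ := Nat.exists_eq_add_of_le hn
  have hadj : adjoint T = (Q * P) ^ n := by
    rw [hT, ← star_eq_adjoint, star_pow, star_mul, hP2.star_eq, hQ2.star_eq]
  have hT' : T = (P * Q) * (P * Q) ^ k := by
    rw [hT, hk, pow_add, pow_one]
  have hadj' : adjoint T = (Q * P) * (Q * P) ^ k := by
    rw [hadj, hk, pow_add, pow_one]
  have hle1 : LinearMap.range (T : H →ₗ[ℂ] H) ≤ LinearMap.range (P : H →ₗ[ℂ] H) := by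
    rintro _ ⟨y, rfl⟩
    refine ⟨Q (((P * Q) ^ k : H →L[ℂ] H) y), ?_⟩
    rw [hT']
    rfl
  have hle2 : LinearMap.range ((adjoint T : H →L[ℂ] H) : H →ₗ[ℂ] H) ≤ LinearMap.range (Q : H →ₗ[ℂ] H) := by
    rintro _ ⟨y, rfl⟩
    refine ⟨P (((Q * P) ^ k : H →L[ℂ] H) y), ?_⟩
    rw [hadj']
    rfl
  have hc1 : (LinearMap.range (T : H →ₗ[ℂ] H)).topologicalClosure ≤ LinearMap.range (P : H →ₗ[ℂ] H) :=
    Submodule.topologicalClosure_minimal _ hle1 (isClosed_range_of_idem P hP1)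
  have hc2 : (LinearMap.range ((adjoint T : H →L[ℂ] H) : H →ₗ[ℂ] H)).topologicalClosure ≤ LinearMap.range (Q : H →ₗ[ℂ] H) :=
    Submodule.topologicalClosure_minimal _ hle2 (isClosed_range_of_idem Q hQ1)
  have hfix : ∀ x ∈ LinearMap.range (P : H →ₗ[ℂ] H) ⊓ LinearMap.range (Q : H →ₗ[ℂ] H), T x = x ∧ adjoint T x = x := by
    intro x hx
    rw [Submodule.mem_inf] at hx
    have hPx := (mem_range_iff_of_idem P hP1 x).mp hx.1
    have hQx := (mem_range_iff_of_idem Q hQ1 x).mp hx.2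
    constructor
    · rw [hT]; exact fix_pow P Q x hPx hQx n
    · rw [hadj]; exact fix_pow Q P x hQx hPx n
  refine ⟨le_antisymm (inf_le_inf hc1 hc2) ?_, hfix⟩
  intro x hx
  obtain ⟨h1, h2⟩ := hfix x hx
  rw [Submodule.mem_inf]
  exact ⟨Submodule.le_topologicalClosure _ ⟨x, h1⟩,
    Submodule.le_topologicalClosure _ ⟨x, h2⟩⟩
end

section
/- For any two orthogonal projections P and Q on a complex Hilbert space H, the product PQ is a CoR operator: PQ and its adjoint QP coincide on closure(R(PQ)) ∩ closure(R(QP)). -/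
open ContinuousLinearMap

variable {H : Type*} [NormedAddCommGroup H] [InnerProductSpace ℂ H] [CompleteSpace H]

theorem stmt16 (P Q : H →L[ℂ] H)
    (hP1 : IsIdempotentElem P) (hP2 : IsSelfAdjoint P)
    (hQ1 : IsIdempotentElem Q) (hQ2 : IsSelfAdjoint Q) :
    ∀ x ∈ (LinearMap.range ((P * Q : H →L[ℂ] H) : H →ₗ[ℂ] H)).topologicalClosure ⊓
        (LinearMap.range ((Q * P : H →L[ℂ] H) : H →ₗ[ℂ] H)).topologicalClosure,
      (P * Q) x = (Q * P) x := by
  have key : ∀ (A B : H →L[ℂ] H), IsIdempotentElem A →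
      ∀ x ∈ (LinearMap.range ((A * B : H →L[ℂ] H) : H →ₗ[ℂ] H)).topologicalClosure, A x = x := by
    intro A B hA x hx
    have hclosed : IsClosed {y : H | A y = y} :=
      isClosed_eq A.continuous continuous_id
    have hsub : (LinearMap.range ((A * B : H →L[ℂ] H) : H →ₗ[ℂ] H) : Set H) ⊆ {y : H | A y = y} := by
      rintro _ ⟨y, rfl⟩
      show A ((A * B) y) = (A * B) y
      rw [ContinuousLinearMap.mul_apply, ← ContinuousLinearMap.mul_apply A A, hA.eq]
    have hx' : x ∈ closure (LinearMap.range ((A * B : H →L[ℂ] H) : H →ₗ[ℂ] H) : Set H) := hx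
    exact closure_minimal hsub hclosed hx'
  intro x hx
  obtain ⟨hx1, hx2⟩ := hx
  have hPx : P x = x := key P Q hP1 x hx1
  have hQx : Q x = x := key Q P hQ1 x hx2
  simp [ContinuousLinearMap.mul_apply, hPx, hQx]
end

section
/- Let P and Q be orthogonal projections on a complex Hilbert space H such that the alternating product S = PQ⋯PQ (of some even length 2n, starting with P and ending with Q) has closed range. Then R(S + S*) is closed if and only if R(S) + R(S*) is closed, and in that case R(S) + R(S*) = R(S + S*), where S* = QP⋯QP. -/
open ContinuousLinearMap
open scoped InnerProductSpace ComplexConjugate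

set_option maxHeartbeats 2000000
set_option linter.unusedSectionVars false

noncomputable section

section AuxEF

variable {E F : Type*} [NormedAddCommGroup E] [InnerProductSpace ℂ E] [CompleteSpace E]
  [NormedAddCommGroup F] [InnerProductSpace ℂ F] [CompleteSpace F]

local notation "⟪" x ", " y "⟫" => @inner ℂ _ _ x y

lemma aux_ker_adjoint (T : E →L[ℂ] F) :
    LinearMap.ker (adjoint T).toLinearMap = (LinearMap.range T.toLinearMap)ᗮ := by
  ext y
  simp only [LinearMap.mem_ker, Submodule.mem_orthogonal, ContinuousLinearMap.coe_coe]
  constructor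
  · rintro h u ⟨x, rfl⟩
    rw [ContinuousLinearMap.coe_coe, ← adjoint_inner_right, h, inner_zero_right]
  · intro h
    have h2 : ∀ x : E, ⟪x, adjoint T y⟫ = 0 := by
      intro x
      rw [adjoint_inner_right]
      exact h _ ⟨x, rfl⟩
    have := h2 (adjoint T y)
    rwa [inner_self_eq_zero] at this

lemma aux_adjoint_closed_range {T : E →L[ℂ] F}
    (hT : IsClosed (LinearMap.range T.toLinearMap : Set F)) :
    IsClosed (LinearMap.range (adjoint T).toLinearMap : Set E) := by
  haveI : CompleteSpace (LinearMap.range T.toLinearMap) := hT.completeSpace_coe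
  -- surjective corestriction
  set T' : E →L[ℂ] LinearMap.range T.toLinearMap :=
    T.codRestrict (LinearMap.range T.toLinearMap) (fun x => LinearMap.mem_range_self _ x) with hT'
  have hsurj : Function.Surjective T' := by
    rintro ⟨y, x, rfl⟩
    exact ⟨x, rfl⟩
  obtain ⟨C, Cpos, hC⟩ := T'.exists_preimage_norm_le hsurj
  -- the adjoint restricted to range T is antilipschitz
  set G : (LinearMap.range T.toLinearMap) →L[ℂ] E := (adjoint T).comp (LinearMap.range T.toLinearMap).subtypeL with hG
  have hbound : ∀ y : LinearMap.range T.toLinearMap, ‖y‖ ≤ C * ‖G y‖ := by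
    intro y
    obtain ⟨x, hx, hxn⟩ := hC y
    rcases eq_or_ne y 0 with h0 | h0
    · simp [h0]
    have hy : (0:ℝ) < ‖y‖ := norm_pos_iff.2 h0
    have key : ‖y‖^2 ≤ ‖G y‖ * ‖x‖ := by
      have h1 : ⟪G y, x⟫ = ⟪(y:F), T x⟫ := by
        simp only [hG, comp_apply, Submodule.subtypeL_apply]
        exact adjoint_inner_left T x y
      have h2 : (T x : F) = y := by
        have := congrArg (Subtype.val) hx
        simpa [hT'] using this
      have h3 : ⟪G y, x⟫ = ((‖(y:F)‖ :ℂ))^2 := by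
        rw [h1, h2, inner_self_eq_norm_sq_to_K]; norm_num
      have h4 : ‖⟪G y, x⟫‖ ≤ ‖G y‖ * ‖x‖ := norm_inner_le_norm _ _
      rw [h3] at h4
      have h5 : ‖((‖(y:F)‖ :ℂ))^2‖ = ‖y‖^2 := by
        rw [norm_pow, Complex.norm_real, Real.norm_eq_abs, abs_of_nonneg (norm_nonneg _), Submodule.norm_coe]
      rwa [h5] at h4
    have step : ‖y‖ * ‖y‖ ≤ (C * ‖G y‖) * ‖y‖ := by
      have : ‖G y‖ * ‖x‖ ≤ ‖G y‖ * (C * ‖y‖) :=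
        mul_le_mul_of_nonneg_left hxn (norm_nonneg _)
      calc ‖y‖ * ‖y‖ = ‖y‖^2 := (sq ‖y‖).symm
        _ ≤ ‖G y‖ * ‖x‖ := key
        _ ≤ ‖G y‖ * (C * ‖y‖) := this
        _ = (C * ‖G y‖) * ‖y‖ := by ring
    exact le_of_mul_le_mul_right step hy
  have hanti : AntilipschitzWith (⟨C, le_of_lt Cpos⟩ : NNReal) G :=
    G.antilipschitz_of_bound (by intro x; exact hbound x)
  have hclosedG : IsClosed (LinearMap.range G.toLinearMap : Set E) := by
    have h := closed_range_of_antilipschitz hanti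
    rw [← h]
    exact (LinearMap.range G.toLinearMap).isClosed_topologicalClosure
  have hrange : LinearMap.range G.toLinearMap = LinearMap.range (adjoint T).toLinearMap := by
    apply le_antisymm
    · rintro _ ⟨y, rfl⟩; exact ⟨y, rfl⟩
    · rintro _ ⟨z, rfl⟩
      have hz : z - ((Submodule.orthogonalProjectionOnto (LinearMap.range T.toLinearMap)) z : F) ∈ (LinearMap.range T.toLinearMap)ᗮ :=
        Submodule.sub_starProjection_mem_orthogonal z
      rw [← aux_ker_adjoint] at hz
      refine ⟨Submodule.orthogonalProjectionOnto (LinearMap.range T.toLinearMap) z, ?_⟩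
      have h0 : adjoint T (z - ((Submodule.orthogonalProjectionOnto (LinearMap.range T.toLinearMap)) z : F)) = 0 := hz
      rw [map_sub, sub_eq_zero] at h0
      simp only [hG, comp_apply, Submodule.subtypeL_apply]
      exact h0.symm
  rw [← hrange]
  exact hclosedG


lemma aux_range_eq_ortho_ker_adjoint {T : E →L[ℂ] F}
    (hT : IsClosed (LinearMap.range T.toLinearMap : Set F)) :
    LinearMap.range T.toLinearMap = (LinearMap.ker (adjoint T).toLinearMap)ᗮ := by
  haveI : CompleteSpace (LinearMap.range T.toLinearMap) := hT.completeSpace_coe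
  rw [aux_ker_adjoint, Submodule.orthogonal_orthogonal]

lemma aux_coercive_surjective (T : E →L[ℂ] E)
    (h : ∀ x : E, ‖x‖^2 ≤ Complex.re ⟪T x, x⟫) : Function.Surjective T := by
  have hadj : ∀ x : E, ‖x‖^2 ≤ Complex.re ⟪adjoint T x, x⟫ := by
    intro x
    have : ⟪adjoint T x, x⟫ = conj ⟪T x, x⟫ := by
      rw [← inner_conj_symm, adjoint_inner_right]
    rw [this, Complex.conj_re]
    exact h x
  have hb : ∀ (R : E →L[ℂ] E), (∀ x : E, ‖x‖^2 ≤ Complex.re ⟪R x, x⟫) →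
      ∀ x : E, ‖x‖ ≤ ‖R x‖ := by
    intro R hR x
    rcases eq_or_ne x 0 with rfl | hx
    · simp
    have hxp : (0:ℝ) < ‖x‖ := norm_pos_iff.2 hx
    have h1 : ‖x‖^2 ≤ ‖R x‖ * ‖x‖ := by
      calc ‖x‖^2 ≤ Complex.re ⟪R x, x⟫ := hR x
        _ ≤ ‖⟪R x, x⟫‖ := Complex.re_le_norm _
        _ ≤ ‖R x‖ * ‖x‖ := norm_inner_le_norm _ _
    have := le_of_mul_le_mul_right (by calc ‖x‖ * ‖x‖ = ‖x‖^2 := (sq ‖x‖).symm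
      _ ≤ ‖R x‖ * ‖x‖ := h1) hxp
    exact this
  have hT1 : ∀ x : E, ‖x‖ ≤ 1 * ‖T x‖ := by simpa using hb T h
  have hanti : AntilipschitzWith 1 T := T.antilipschitz_of_bound (by simpa using hT1)
  have hclosed : IsClosed (LinearMap.range T.toLinearMap : Set E) := by
    have h := closed_range_of_antilipschitz hanti
    rw [← h]
    exact (LinearMap.range T.toLinearMap).isClosed_topologicalClosure
  have hkeradj : LinearMap.ker (adjoint T).toLinearMap = ⊥ := by
    rw [Submodule.eq_bot_iff]
    intro x hx
    have := hb (adjoint T) hadj x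
    rw [LinearMap.mem_ker, ContinuousLinearMap.coe_coe] at hx
    rw [hx] at this
    simpa using this
  have : LinearMap.range T.toLinearMap = ⊤ := by
    rw [aux_range_eq_ortho_ker_adjoint hclosed, hkeradj, Submodule.bot_orthogonal_eq_top]
  exact LinearMap.range_eq_top.1 this

end AuxEF

section AuxH

variable {H : Type*} [NormedAddCommGroup H] [InnerProductSpace ℂ H] [CompleteSpace H]

local notation "⟪" x ", " y "⟫" => @inner ℂ _ _ x y

section Projections

variable {P Q : H →L[ℂ] H}

lemma aux_proj_norm_le (hP1 : IsIdempotentElem P) (hP2 : IsSelfAdjoint P) (x : H) :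
    ‖P x‖ ≤ ‖x‖ := by
  rcases eq_or_ne (P x) 0 with h0 | h0
  · simp [h0]
  have hpos : (0:ℝ) < ‖P x‖ := norm_pos_iff.2 h0
  have hPP : P (P x) = P x := by
    have := congrArg (fun T => T x) hP1
    simpa [mul_apply] using this
  have h1 : ⟪P x, P x⟫ = ⟪P x, x⟫ := by
    have := adjoint_inner_right P (P x) x
    rw [hP2.adjoint_eq, hPP] at this
    exact this
  have h2 : ‖P x‖^2 ≤ ‖P x‖ * ‖x‖ := by
    calc ‖P x‖^2 = Complex.re ⟪P x, P x⟫ := by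
          rw [inner_self_eq_norm_sq_to_K]
          simp [← Complex.ofReal_pow]
      _ = Complex.re ⟪P x, x⟫ := by rw [h1]
      _ ≤ ‖⟪P x, x⟫‖ := Complex.re_le_norm _
      _ ≤ ‖P x‖ * ‖x‖ := norm_inner_le_norm _ _
  have h3 : ‖P x‖ * ‖P x‖ ≤ ‖P x‖ * ‖x‖ := by
    calc ‖P x‖ * ‖P x‖ = ‖P x‖^2 := (sq _).symm
      _ ≤ ‖P x‖ * ‖x‖ := h2
  exact le_of_mul_le_mul_left h3 hpos

lemma aux_P_mul_A (hP1 : IsIdempotentElem P) : P * (P*Q*P) = P*Q*P := by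
  rw [show P*(P*Q*P) = (P*P)*Q*P from by noncomm_ring, hP1]

lemma aux_P_mul_Apow (hP1 : IsIdempotentElem P) (k : ℕ) :
    P * (P*Q*P)^(k+1) = (P*Q*P)^(k+1) := by
  conv_lhs => rw [pow_succ', ← mul_assoc, aux_P_mul_A hP1]
  rw [← pow_succ']

lemma aux_I1 (hP1 : IsIdempotentElem P) (k : ℕ) :
    (P*Q)^(k+1) * P = (P*Q*P)^(k+1) := by
  induction k with
  | zero => simp [pow_one]
  | succ m ih =>
    rw [pow_succ' (P*Q) (m+1), mul_assoc, ih]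
    conv_lhs => rw [← aux_P_mul_Apow hP1 m, ← mul_assoc]
    rw [show P*Q*P = (P*Q*P) from rfl, ← pow_succ']

lemma aux_J (hP1 : IsIdempotentElem P) (k : ℕ) :
    (Q*P)^(k+1) * P = (Q*P) * (P*Q*P)^k := by
  induction k with
  | zero => rw [zero_add, pow_one, pow_zero, mul_one, mul_assoc, hP1]
  | succ m ih =>
    rw [pow_succ' (Q*P) (m+1), mul_assoc, ih, ← mul_assoc]
    rw [show (Q*P)*(Q*P) = Q*(P*Q*P) from by noncomm_ring]
    rw [mul_assoc, ← pow_succ']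
    conv_rhs => rw [mul_assoc, aux_P_mul_Apow hP1 m]

lemma aux_P_fix_range (hP1 : IsIdempotentElem P) (k : ℕ) (v : H)
    (hv : v ∈ LinearMap.range ((P*Q)^(k+1)).toLinearMap) : P v = v := by
  obtain ⟨x, rfl⟩ := hv
  have h : P * (P*Q)^(k+1) = (P*Q)^(k+1) := by
    rw [pow_succ', ← mul_assoc, ← mul_assoc, hP1]
  calc P (((P*Q)^(k+1)) x) = (P * (P*Q)^(k+1)) x := rfl
    _ = ((P*Q)^(k+1)) x := by rw [h]

lemma aux_fix_pow (k : ℕ) {v : H} (hPv : P v = v) (hQv : Q v = v) :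
    ((P*Q)^k) v = v := by
  induction k with
  | zero => simp
  | succ m ih =>
    rw [pow_succ, ContinuousLinearMap.mul_apply, ContinuousLinearMap.mul_apply, hQv, hPv, ih]

lemma aux_A_selfadjoint (hP2 : IsSelfAdjoint P) (hQ2 : IsSelfAdjoint Q) :
    IsSelfAdjoint (P*Q*P) := by
  rw [IsSelfAdjoint, star_mul, star_mul, hP2.star_eq, hQ2.star_eq, mul_assoc]

lemma aux_A_factor (hQ1 : IsIdempotentElem Q) : (P*Q)*(Q*P) = P*Q*P := by
  rw [show (P*Q)*(Q*P) = P*(Q*Q)*P from by noncomm_ring, hQ1]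

lemma aux_adjoint_QP (hP2 : IsSelfAdjoint P) (hQ2 : IsSelfAdjoint Q) :
    adjoint (Q*P) = P*Q := by
  rw [← star_eq_adjoint, star_mul, hP2.star_eq, hQ2.star_eq]

lemma aux_sym_inner {T : H →L[ℂ] H} (hT : IsSelfAdjoint T) (x y : H) :
    ⟪T x, y⟫ = ⟪x, T y⟫ := by
  have h := adjoint_inner_left T y x
  rwa [hT.adjoint_eq] at h

lemma aux_s1 (hP2 : IsSelfAdjoint P) (hQ2 : IsSelfAdjoint Q) (j : ℕ) (a : H) :
    Complex.re ⟪((P*Q*P)^(2*j)) a, a⟫ = ‖((P*Q*P)^j) a‖^2 := by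
  have hpow : (P*Q*P)^(2*j) = (P*Q*P)^j * (P*Q*P)^j := by
    rw [← pow_add, two_mul]
  rw [hpow, ContinuousLinearMap.mul_apply]
  rw [aux_sym_inner ((aux_A_selfadjoint hP2 hQ2).pow j) (((P*Q*P)^j) a) a]
  rw [← aux_sym_inner ((aux_A_selfadjoint hP2 hQ2).pow j) (((P*Q*P)^j) a) a]
  rw [aux_sym_inner ((aux_A_selfadjoint hP2 hQ2).pow j) (((P*Q*P)^j) a) a]
  rw [inner_self_eq_norm_sq_to_K]
  simp [← Complex.ofReal_pow]

lemma aux_s2 (hP2 : IsSelfAdjoint P) (hQ1 : IsIdempotentElem Q) (hQ2 : IsSelfAdjoint Q)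
    (j : ℕ) (a : H) :
    Complex.re ⟪((P*Q*P)^(2*j+1)) a, a⟫ = ‖(Q*P) (((P*Q*P)^j) a)‖^2 := by
  have hpow : (P*Q*P)^(2*j+1) = (P*Q*P)^j * ((P*Q)*(Q*P)) * (P*Q*P)^j := by
    rw [aux_A_factor hQ1, ← pow_succ, ← pow_add]
    congr 1
    omega
  rw [hpow]
  have happ : ((P*Q*P)^j * ((P*Q)*(Q*P)) * (P*Q*P)^j) a
      = ((P*Q*P)^j) ((P*Q) ((Q*P) (((P*Q*P)^j) a))) := rfl
  rw [happ]
  rw [aux_sym_inner ((aux_A_selfadjoint hP2 hQ2).pow j) ((P*Q) ((Q*P) (((P*Q*P)^j) a))) a]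
  have h := adjoint_inner_left (Q*P) (((P*Q*P)^j) a) ((Q*P) (((P*Q*P)^j) a))
  rw [aux_adjoint_QP hP2 hQ2] at h
  rw [h]
  rw [inner_self_eq_norm_sq_to_K]
  simp [← Complex.ofReal_pow]

lemma aux_chain (hP1 : IsIdempotentElem P) (hP2 : IsSelfAdjoint P)
    (hQ1 : IsIdempotentElem Q) (hQ2 : IsSelfAdjoint Q) (a : H) :
    Antitone (fun k => Complex.re ⟪((P*Q*P)^k) a, a⟫) := by
  have hsucc : ∀ k, Complex.re ⟪((P*Q*P)^(k+1)) a, a⟫ ≤ Complex.re ⟪((P*Q*P)^k) a, a⟫ := by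
    intro k
    rcases Nat.even_or_odd k with ⟨j, hj⟩ | ⟨j, hj⟩
    · subst hj
      rw [show j + j = 2*j from by ring]
      rw [aux_s1 hP2 hQ2 j a, aux_s2 hP2 hQ1 hQ2 j a]
      have h : ‖(Q*P) (((P*Q*P)^j) a)‖ ≤ ‖((P*Q*P)^j) a‖ := by
        calc ‖(Q*P) (((P*Q*P)^j) a)‖ = ‖Q (P (((P*Q*P)^j) a))‖ := rfl
          _ ≤ ‖P (((P*Q*P)^j) a)‖ := aux_proj_norm_le hQ1 hQ2 _
          _ ≤ ‖((P*Q*P)^j) a‖ := aux_proj_norm_le hP1 hP2 _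
      exact pow_le_pow_left₀ (norm_nonneg _) h 2
    · subst hj
      rw [show 2*j + 1 + 1 = 2*(j+1) from by ring]
      rw [aux_s1 hP2 hQ2 (j+1) a, aux_s2 hP2 hQ1 hQ2 j a]
      have hA : ((P*Q*P)^(j+1)) a = (P*Q) ((Q*P) (((P*Q*P)^j) a)) := by
        rw [show (P*Q*P)^(j+1) = ((P*Q)*(Q*P)) * (P*Q*P)^j from by
          rw [aux_A_factor hQ1, ← pow_succ']]
        rfl
      rw [hA]
      have h : ‖(P*Q) ((Q*P) (((P*Q*P)^j) a))‖ ≤ ‖(Q*P) (((P*Q*P)^j) a)‖ := by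
        calc ‖(P*Q) ((Q*P) (((P*Q*P)^j) a))‖ = ‖P (Q ((Q*P) (((P*Q*P)^j) a)))‖ := rfl
          _ ≤ ‖Q ((Q*P) (((P*Q*P)^j) a))‖ := aux_proj_norm_le hP1 hP2 _
          _ ≤ ‖(Q*P) (((P*Q*P)^j) a)‖ := aux_proj_norm_le hQ1 hQ2 _
      exact pow_le_pow_left₀ (norm_nonneg _) h 2
  exact antitone_nat_of_succ_le hsucc

lemma aux_coercive (hP1 : IsIdempotentElem P) (hP2 : IsSelfAdjoint P)
    (hQ1 : IsIdempotentElem Q) (hQ2 : IsSelfAdjoint Q) {n : ℕ} (hn : 1 ≤ n)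
    (a : H) (ha : P a = a) :
    ‖((Q*P)^n) a‖^2 ≤ Complex.re ⟪((P*Q)^n) a, a⟫ := by
  obtain ⟨m, rfl⟩ : ∃ m, n = m + 1 := ⟨n - 1, by omega⟩
  have hL : ((Q*P)^(m+1)) a = (Q*P) (((P*Q*P)^m) a) := by
    conv_lhs => rw [← ha]
    calc ((Q*P)^(m+1)) (P a) = ((Q*P)^(m+1) * P) a := rfl
      _ = ((Q*P) * (P*Q*P)^m) a := by rw [aux_J hP1 m]
      _ = (Q*P) (((P*Q*P)^m) a) := rfl
  have hR : ((P*Q)^(m+1)) a = ((P*Q*P)^(m+1)) a := by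
    conv_lhs => rw [← ha]
    calc ((P*Q)^(m+1)) (P a) = ((P*Q)^(m+1) * P) a := rfl
      _ = ((P*Q*P)^(m+1)) a := by rw [aux_I1 hP1 m]
  rw [hL, hR]
  rw [← aux_s2 hP2 hQ1 hQ2 m a]
  exact aux_chain hP1 hP2 hQ1 hQ2 a (by omega : m + 1 ≤ 2*m+1)

end Projections


theorem stmt17 (P Q : H →L[ℂ] H)
    (hP1 : IsIdempotentElem P) (hP2 : IsSelfAdjoint P)
    (hQ1 : IsIdempotentElem Q) (hQ2 : IsSelfAdjoint Q)
    (n : ℕ) (hn : 1 ≤ n) (hS : IsClosed (LinearMap.range (((P * Q) ^ n : H →L[ℂ] H) : H →ₗ[ℂ] H) : Set H)) :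
    (let S := (P * Q) ^ n
     (IsClosed (LinearMap.range ((S + adjoint S : H →L[ℂ] H) : H →ₗ[ℂ] H) : Set H) ↔
        IsClosed ((LinearMap.range (S : H →ₗ[ℂ] H) ⊔ LinearMap.range (adjoint S : H →ₗ[ℂ] H) : Submodule ℂ H) : Set H)) ∧
       (IsClosed (LinearMap.range ((S + adjoint S : H →L[ℂ] H) : H →ₗ[ℂ] H) : Set H) →
         LinearMap.range (S : H →ₗ[ℂ] H) ⊔ LinearMap.range (adjoint S : H →ₗ[ℂ] H) = LinearMap.range ((S + adjoint S : H →L[ℂ] H) : H →ₗ[ℂ] H))) := by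
  intro S
  obtain ⟨m, hm⟩ : ∃ m, n = m + 1 := ⟨n - 1, by omega⟩
  have hadj : adjoint S = (Q*P)^n := by
    show adjoint ((P*Q)^n) = (Q*P)^n
    rw [← star_eq_adjoint, star_pow, star_mul, hP2.star_eq, hQ2.star_eq]
  have hadj2 : adjoint ((Q*P)^n) = S := by
    show adjoint ((Q*P)^n) = (P*Q)^n
    rw [← star_eq_adjoint, star_pow, star_mul, hP2.star_eq, hQ2.star_eq]
  set A := LinearMap.range S.toLinearMap with hAdef
  set B := LinearMap.range (adjoint S).toLinearMap with hBdef
  have hA_closed : IsClosed (A : Set H) := hS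
  have hB_closed : IsClosed (B : Set H) := aux_adjoint_closed_range hS
  haveI : CompleteSpace A := hA_closed.completeSpace_coe
  haveI : CompleteSpace B := hB_closed.completeSpace_coe
  have hSm : S = (P*Q)^(m+1) := by rw [show S = (P*Q)^n from rfl, hm]
  have hStm : adjoint S = (Q*P)^(m+1) := by rw [hadj, hm]
  have hA_subP : ∀ v ∈ A, P v = v := by
    intro v hv
    rw [hAdef, hSm] at hv
    exact aux_P_fix_range hP1 m v hv
  have hB_subQ : ∀ v ∈ B, Q v = v := by
    intro v hv
    rw [hBdef, hStm] at hv
    exact aux_P_fix_range hQ1 m v hv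
  have hkerS : LinearMap.ker S.toLinearMap = Bᗮ := by
    have h1 := aux_ker_adjoint (adjoint S)
    rwa [adjoint_adjoint] at h1
  have hkerSt : LinearMap.ker (adjoint S).toLinearMap = Aᗮ := aux_ker_adjoint S
  have hfix : ∀ v, v ∈ A → v ∈ B → S v = v ∧ adjoint S v = v := by
    intro v hvA hvB
    have hPv := hA_subP v hvA
    have hQv := hB_subQ v hvB
    constructor
    · show ((P*Q)^n) v = v
      exact aux_fix_pow n hPv hQv
    · rw [hadj]
      exact aux_fix_pow n hQv hPv
  have hkerT : LinearMap.ker (S + adjoint S).toLinearMap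
      = LinearMap.ker S.toLinearMap ⊓ LinearMap.ker (adjoint S).toLinearMap := by
    ext x
    simp only [LinearMap.mem_ker, Submodule.mem_inf, ContinuousLinearMap.coe_coe, add_apply]
    constructor
    · intro hx
      have hveq : S x = -(adjoint S x) := eq_neg_of_add_eq_zero_left hx
      have hveq' : adjoint S x = -(S x) := by rw [hveq, neg_neg]
      have hvA : S x ∈ A := LinearMap.mem_range_self _ x
      have hvB : S x ∈ B := by
        rw [hveq]
        exact Submodule.neg_mem _ (LinearMap.mem_range_self _ x)
      obtain ⟨hSv, hStv⟩ := hfix (S x) hvA hvB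
      have c1 : ⟪S x, S x⟫ = ⟪x, S x⟫ := by
        have h := adjoint_inner_left (adjoint S) (S x) x
        rw [adjoint_adjoint] at h
        rw [h, hStv]
      have c2 : ⟪adjoint S x, S x⟫ = ⟪x, S x⟫ := by
        have h := adjoint_inner_left S (S x) x
        rw [h, hSv]
      rw [hveq', inner_neg_left] at c2
      have hzero : ⟪S x, S x⟫ = 0 := by linear_combination (c1 - c2) / 2
      have hv0 : S x = 0 := inner_self_eq_zero.mp hzero
      refine ⟨hv0, ?_⟩
      rw [hveq', hv0, neg_zero]
    · rintro ⟨h1, h2⟩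
      rw [h1, h2, add_zero]
  have hTsa : IsSelfAdjoint (S + adjoint S) := by
    rw [isSelfAdjoint_iff', map_add, adjoint_adjoint, add_comm]
  have hclosure : (LinearMap.ker (S + adjoint S).toLinearMap)ᗮ = (A ⊔ B).topologicalClosure := by
    rw [hkerT, hkerS, hkerSt, Submodule.inf_orthogonal, sup_comm,
      Submodule.orthogonal_orthogonal_eq_closure]
  have hrange_le : LinearMap.range (S + adjoint S).toLinearMap ≤ A ⊔ B := by
    rintro _ ⟨x, rfl⟩
    rw [ContinuousLinearMap.coe_coe, add_apply]
    exact Submodule.add_mem_sup (LinearMap.mem_range_self _ x) (LinearMap.mem_range_self _ x)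
  have heasy : IsClosed (LinearMap.range (S + adjoint S).toLinearMap : Set H) →
      A ⊔ B = LinearMap.range (S + adjoint S).toLinearMap := by
    intro h
    have h1 := aux_range_eq_ortho_ker_adjoint h
    rw [hTsa.adjoint_eq, hclosure] at h1
    refine le_antisymm ?_ hrange_le
    rw [h1]
    exact Submodule.le_topologicalClosure _
  have hhard : IsClosed ((A ⊔ B : Submodule ℂ H) : Set H) →
      A ⊔ B = LinearMap.range (S + adjoint S).toLinearMap := by
    intro hsum
    have hSmem : ∀ x : H, S x ∈ A := fun x => LinearMap.mem_range_self _ x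
    have hStmem : ∀ x : H, adjoint S x ∈ B := fun x => LinearMap.mem_range_self _ x
    set Sb : ↥B →L[ℂ] ↥A := (S.comp B.subtypeL).codRestrict A (fun b => hSmem b) with hSbdef
    have hSb_coe : ∀ b : ↥B, (Sb b : H) = S (b : H) := fun b => rfl
    have hSb_inj : LinearMap.ker Sb.toLinearMap = ⊥ := by
      rw [Submodule.eq_bot_iff]
      rintro b hb
      rw [LinearMap.mem_ker] at hb
      have h1 : S (b:H) = 0 := by
        have := congrArg (fun z : ↥A => (z:H)) hb
        simpa [hSb_coe] using this
      have h2 : (b:H) ∈ Bᗮ := by rw [← hkerS]; exact h1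
      have h3 : (b:H) ∈ B ⊓ Bᗮ := ⟨b.2, h2⟩
      rw [Submodule.inf_orthogonal_eq_bot] at h3
      exact Subtype.ext (by simpa using h3)
    have hSb_surj : LinearMap.range Sb.toLinearMap = ⊤ := by
      rw [LinearMap.range_eq_top]
      rintro ⟨a, x, rfl⟩
      refine ⟨Submodule.orthogonalProjectionOnto B x, ?_⟩
      apply Subtype.ext
      rw [ContinuousLinearMap.coe_coe, hSb_coe]
      show S ((Submodule.orthogonalProjectionOnto B x : H)) = S x
      have hmem : x - (Submodule.orthogonalProjectionOnto B x : H) ∈ LinearMap.ker S.toLinearMap := by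
        rw [hkerS]; exact Submodule.sub_starProjection_mem_orthogonal x
      rw [LinearMap.mem_ker] at hmem
      have h4 : S x - S ((Submodule.orthogonalProjectionOnto B x : H)) = 0 := by
        rw [← map_sub]; exact hmem
      exact (sub_eq_zero.mp h4).symm
    set VAB := ContinuousLinearEquiv.ofBijective Sb hSb_inj hSb_surj with hVABdef
    have hVeq : ∀ a : ↥A, S ((VAB.symm a : ↥B) : H) = (a : H) := by
      intro a
      have h := VAB.apply_symm_apply a
      have h2 := congrArg (fun z : ↥A => (z : H)) h
      rw [hVABdef] at h2 ⊢
      rw [ContinuousLinearEquiv.coeFn_ofBijective] at h2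
      exact h2
    set Stb : ↥A →L[ℂ] ↥B := ((adjoint S).comp A.subtypeL).codRestrict B (fun a => hStmem a)
      with hStbdef
    have hStb_coe : ∀ a : ↥A, (Stb a : H) = adjoint S (a : H) := fun a => rfl
    have hStb_inj : LinearMap.ker Stb.toLinearMap = ⊥ := by
      rw [Submodule.eq_bot_iff]
      rintro a ha
      rw [LinearMap.mem_ker] at ha
      have h1 : adjoint S (a:H) = 0 := by
        have := congrArg (fun z : ↥B => (z:H)) ha
        simpa [hStb_coe] using this
      have h2 : (a:H) ∈ Aᗮ := by rw [← hkerSt]; exact h1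
      have h3 : (a:H) ∈ A ⊓ Aᗮ := ⟨a.2, h2⟩
      rw [Submodule.inf_orthogonal_eq_bot] at h3
      exact Subtype.ext (by simpa using h3)
    have hStb_surj : LinearMap.range Stb.toLinearMap = ⊤ := by
      rw [LinearMap.range_eq_top]
      rintro ⟨b, x, rfl⟩
      refine ⟨Submodule.orthogonalProjectionOnto A x, ?_⟩
      apply Subtype.ext
      rw [ContinuousLinearMap.coe_coe, hStb_coe]
      show adjoint S ((Submodule.orthogonalProjectionOnto A x : H)) = adjoint S x
      have hmem : x - (Submodule.orthogonalProjectionOnto A x : H) ∈ LinearMap.ker (adjoint S).toLinearMap := by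
        rw [hkerSt]; exact Submodule.sub_starProjection_mem_orthogonal x
      rw [LinearMap.mem_ker] at hmem
      have h4 : adjoint S x - adjoint S ((Submodule.orthogonalProjectionOnto A x : H)) = 0 := by
        rw [← map_sub]; exact hmem
      exact (sub_eq_zero.mp h4).symm
    set WBA := ContinuousLinearEquiv.ofBijective Stb hStb_inj hStb_surj with hWBAdef
    have hWeq : ∀ b : ↥B, adjoint S ((WBA.symm b : ↥A) : H) = (b : H) := by
      intro b
      have h := WBA.apply_symm_apply b
      have h2 := congrArg (fun z : ↥B => (z : H)) h
      rw [hWBAdef] at h2 ⊢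
      rw [ContinuousLinearEquiv.coeFn_ofBijective] at h2
      exact h2
    set M := A ⊓ B with hMdef
    have hM_closed : IsClosed (M : Set H) := by
      have : (M : Set H) = (A : Set H) ∩ (B : Set H) := rfl
      rw [this]
      exact hA_closed.inter hB_closed
    haveI : CompleteSpace M := hM_closed.completeSpace_coe
    set ιA : ↥M →L[ℂ] ↥A := M.subtypeL.codRestrict A (fun v => v.2.1) with hiAdef
    set ιB : ↥M →L[ℂ] ↥B := M.subtypeL.codRestrict B (fun v => v.2.2) with hiBdef
    set Rop : ↥M →L[ℂ] ↥M := (Submodule.orthogonalProjectionOnto M).comp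
        (A.subtypeL.comp ((WBA.symm : ↥B →L[ℂ] ↥A).comp ιB)
          + B.subtypeL.comp ((VAB.symm : ↥A →L[ℂ] ↥B).comp ιA)) with hRopdef
    have hRop_apply : ∀ v : ↥M, Rop v = Submodule.orthogonalProjectionOnto M
        (((WBA.symm (ιB v) : ↥A) : H) + ((VAB.symm (ιA v) : ↥B) : H)) := fun v => rfl
    have hproj_inner : ∀ (z : H) (v : ↥M),
        ⟪((Submodule.orthogonalProjectionOnto M z : ↥M) : H), (v:H)⟫ = ⟪z, (v:H)⟫ := by
      intro z v
      have hz : z - ↑(Submodule.orthogonalProjectionOnto M z) ∈ Mᗮ :=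
        Submodule.sub_starProjection_mem_orthogonal z
      have h0 : ⟪z - ↑(Submodule.orthogonalProjectionOnto M z), (v:H)⟫ = 0 :=
        (Submodule.mem_orthogonal' _ _).mp hz (v:H) v.2
      calc ⟪((Submodule.orthogonalProjectionOnto M z : ↥M) : H), (v:H)⟫
          = ⟪z, (v:H)⟫ - ⟪z - ↑(Submodule.orthogonalProjectionOnto M z), (v:H)⟫ := by
            rw [inner_sub_left]; ring
        _ = ⟪z, (v:H)⟫ := by rw [h0, sub_zero]
    have hcoer : ∀ v : ↥M, ‖v‖^2 ≤ Complex.re ⟪Rop v, v⟫ := by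
      intro v
      have hAv : ((WBA.symm (ιB v) : ↥A) : H) ∈ A := (WBA.symm (ιB v)).2
      have hBv : ((VAB.symm (ιA v) : ↥B) : H) ∈ B := (VAB.symm (ιA v)).2
      have hW : adjoint S ((WBA.symm (ιB v) : ↥A) : H) = (v : H) := hWeq (ιB v)
      have hV : S ((VAB.symm (ιA v) : ↥B) : H) = (v : H) := hVeq (ιA v)
      have hsplit : ⟪Rop v, v⟫ = ⟪((WBA.symm (ιB v) : ↥A) : H), (v:H)⟫
          + ⟪((VAB.symm (ιA v) : ↥B) : H), (v:H)⟫ := by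
        calc ⟪Rop v, v⟫ = ⟪(Rop v : H), (v:H)⟫ := Submodule.coe_inner _ _ _
          _ = ⟪(((WBA.symm (ιB v) : ↥A) : H) + ((VAB.symm (ιA v) : ↥B) : H)), (v:H)⟫ := by
              rw [hRop_apply v]
              exact hproj_inner _ v
          _ = _ := inner_add_left _ _ _
      have ht1 : ‖(v:H)‖^2 ≤ Complex.re ⟪((WBA.symm (ιB v) : ↥A) : H), (v:H)⟫ := by
        have e1 : ⟪((WBA.symm (ιB v) : ↥A) : H), (v:H)⟫
            = ⟪S ((WBA.symm (ιB v) : ↥A) : H), ((WBA.symm (ιB v) : ↥A) : H)⟫ := by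
          rw [← hW]
          exact adjoint_inner_right S _ _
        have e2 := aux_coercive hP1 hP2 hQ1 hQ2 hn ((WBA.symm (ιB v) : ↥A) : H)
          (hA_subP _ hAv)
        have e3 : ‖(v:H)‖^2 = ‖((Q*P)^n) ((WBA.symm (ιB v) : ↥A) : H)‖^2 := by
          rw [← hW, hadj]
        rw [e1, e3]
        exact e2
      have ht2 : ‖(v:H)‖^2 ≤ Complex.re ⟪((VAB.symm (ιA v) : ↥B) : H), (v:H)⟫ := by
        have e1 : ⟪((VAB.symm (ιA v) : ↥B) : H), (v:H)⟫
            = ⟪adjoint S ((VAB.symm (ιA v) : ↥B) : H), ((VAB.symm (ιA v) : ↥B) : H)⟫ := by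
          rw [← hV]
          have h := adjoint_inner_right (adjoint S) ((VAB.symm (ιA v) : ↥B) : H)
            ((VAB.symm (ιA v) : ↥B) : H)
          rw [adjoint_adjoint] at h
          exact h
        have e2 := aux_coercive hQ1 hQ2 hP1 hP2 hn ((VAB.symm (ιA v) : ↥B) : H)
          (hB_subQ _ hBv)
        have e3 : ‖(v:H)‖^2 = ‖((P*Q)^n) ((VAB.symm (ιA v) : ↥B) : H)‖^2 := by
          rw [← hV]
        have e4 : Complex.re ⟪adjoint S ((VAB.symm (ιA v) : ↥B) : H),
            ((VAB.symm (ιA v) : ↥B) : H)⟫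
            = Complex.re ⟪((Q*P)^n) ((VAB.symm (ιA v) : ↥B) : H),
              ((VAB.symm (ιA v) : ↥B) : H)⟫ := by rw [hadj]
        rw [e1, e3, e4]
        exact e2
      have hnv : ‖v‖^2 = ‖(v:H)‖^2 := by rw [Submodule.norm_coe]
      rw [hsplit, Complex.add_re, hnv]
      have hge0 : (0:ℝ) ≤ ‖(v:H)‖^2 := sq_nonneg _
      linarith [ht1, ht2]
    have hRop_surj : Function.Surjective Rop := aux_coercive_surjective Rop hcoer
    refine le_antisymm ?_ hrange_le
    intro u hu
    obtain ⟨a, haA, b, hbB, rfl⟩ := Submodule.mem_sup.mp hu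
    obtain ⟨v, hv⟩ := hRop_surj (- Submodule.orthogonalProjectionOnto M
        (((WBA.symm ⟨b, hbB⟩ : ↥A) : H) - ((VAB.symm ⟨a, haA⟩ : ↥B) : H)))
    set α : H := ((WBA.symm ⟨b, hbB⟩ : ↥A) : H) + ((WBA.symm (ιB v) : ↥A) : H) with hαdef
    set β : H := ((VAB.symm ⟨a, haA⟩ : ↥B) : H) - ((VAB.symm (ιA v) : ↥B) : H) with hβdef
    have hαA : α ∈ A := A.add_mem (WBA.symm ⟨b, hbB⟩).2 (WBA.symm (ιB v)).2
    have hβB : β ∈ B := B.sub_mem (VAB.symm ⟨a, haA⟩).2 (VAB.symm (ιA v)).2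
    have hStα : adjoint S α = b + (v:H) := by
      rw [hαdef, map_add, hWeq ⟨b, hbB⟩, hWeq (ιB v)]
      rfl
    have hSβ : S β = a - (v:H) := by
      rw [hβdef, map_sub, hVeq ⟨a, haA⟩, hVeq (ιA v)]
      rfl
    have hαβM : α - β ∈ Mᗮ := by
      have hzero : Submodule.orthogonalProjectionOnto M (α - β) = 0 := by
        have hsplit2 : α - β
            = (((WBA.symm ⟨b, hbB⟩ : ↥A) : H) - ((VAB.symm ⟨a, haA⟩ : ↥B) : H))
            + (((WBA.symm (ιB v) : ↥A) : H) + ((VAB.symm (ιA v) : ↥B) : H)) := by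
          rw [hαdef, hβdef]; abel
        rw [hsplit2, map_add, ← hRop_apply v, hv]
        simp
      rwa [Submodule.orthogonalProjectionOnto_eq_zero_iff] at hzero
    set Pa : H →L[ℂ] H := A.subtypeL.comp (Submodule.orthogonalProjectionOnto A) with hPadef
    set Pb : H →L[ℂ] H := B.subtypeL.comp (Submodule.orthogonalProjectionOnto B) with hPbdef
    have hPa_sa : IsSelfAdjoint Pa := isSelfAdjoint_starProjection A
    have hPb_sa : IsSelfAdjoint Pb := isSelfAdjoint_starProjection B
    have hPa_mem : ∀ x : H, Pa x ∈ A := fun x => (Submodule.orthogonalProjectionOnto A x).2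
    have hPb_mem : ∀ x : H, Pb x ∈ B := fun x => (Submodule.orthogonalProjectionOnto B x).2
    have hPa_fix : ∀ x ∈ A, Pa x = x := by
      intro x hx
      exact (Submodule.starProjection_eq_self_iff (K := A)).mpr hx
    have hPb_fix : ∀ x ∈ B, Pb x = x := by
      intro x hx
      exact (Submodule.starProjection_eq_self_iff (K := B)).mpr hx
    set D : H →L[ℂ] WithLp 2 (H × H) :=
      (((WithLp.prodContinuousLinearEquiv 2 ℂ H H).symm :
          (H × H) →L[ℂ] WithLp 2 (H × H))).comp (Pa.prod Pb) with hDdef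
    set E2 : WithLp 2 (H × H) →L[ℂ] H :=
      (Pa.comp (ContinuousLinearMap.fst ℂ H H) + Pb.comp (ContinuousLinearMap.snd ℂ H H)).comp
        ((WithLp.prodContinuousLinearEquiv 2 ℂ H H : WithLp 2 (H × H) ≃L[ℂ] (H × H)) :
          WithLp 2 (H × H) →L[ℂ] (H × H)) with hE2def
    have hE2_apply : ∀ w : WithLp 2 (H × H), E2 w = Pa w.fst + Pb w.snd := fun w => rfl
    have hD_apply : ∀ x : H,
        D x = (WithLp.prodContinuousLinearEquiv 2 ℂ H H).symm (Pa x, Pb x) := fun x => rfl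
    have hDfst : ∀ x : H, (D x).fst = Pa x := fun x => rfl
    have hDsnd : ∀ x : H, (D x).snd = Pb x := fun x => rfl
    have hadjD : adjoint D = E2 := by
      symm
      rw [eq_adjoint_iff]
      intro w y
      rw [hE2_apply, WithLp.prod_inner_apply]
      change _ = ⟪w.fst, (D y).fst⟫ + ⟪w.snd, (D y).snd⟫
      rw [hDfst, hDsnd, inner_add_left]
      rw [aux_sym_inner hPa_sa, aux_sym_inner hPb_sa]
    have hrangeE2 : LinearMap.range E2.toLinearMap = A ⊔ B := by
      apply le_antisymm
      · rintro _ ⟨w, rfl⟩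
        rw [ContinuousLinearMap.coe_coe, hE2_apply]
        exact Submodule.add_mem_sup (hPa_mem _) (hPb_mem _)
      · intro w hw
        obtain ⟨a', ha', b', hb', rfl⟩ := Submodule.mem_sup.mp hw
        refine ⟨(WithLp.prodContinuousLinearEquiv 2 ℂ H H).symm (a', b'), ?_⟩
        rw [ContinuousLinearMap.coe_coe, hE2_apply]
        show Pa a' + Pb b' = a' + b'
        rw [hPa_fix a' ha', hPb_fix b' hb']
    have hclosedD : IsClosed (LinearMap.range D.toLinearMap : Set (WithLp 2 (H × H))) := by
      have h1 : IsClosed (LinearMap.range (adjoint D).toLinearMap : Set H) := by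
        rw [hadjD, hrangeE2]
        exact hsum
      have h2 := aux_adjoint_closed_range h1
      rwa [adjoint_adjoint] at h2
    have hrangeD := aux_range_eq_ortho_ker_adjoint hclosedD
    have htmem : (WithLp.prodContinuousLinearEquiv 2 ℂ H H).symm (α, β)
        ∈ LinearMap.range D.toLinearMap := by
      rw [hrangeD, Submodule.mem_orthogonal]
      intro w hw
      rw [LinearMap.mem_ker, hadjD] at hw
      rw [ContinuousLinearMap.coe_coe, hE2_apply] at hw
      have hm0B : Pa w.fst ∈ B := by
        rw [eq_neg_of_add_eq_zero_left hw]
        exact B.neg_mem (hPb_mem _)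
      have hm0M : Pa w.fst ∈ M := Submodule.mem_inf.mpr ⟨hPa_mem _, hm0B⟩
      rw [WithLp.prod_inner_apply]
      change ⟪w.fst, ((WithLp.prodContinuousLinearEquiv 2 ℂ H H).symm (α, β)).fst⟫
        + ⟪w.snd, ((WithLp.prodContinuousLinearEquiv 2 ℂ H H).symm (α, β)).snd⟫ = 0
      have hc1 : ((WithLp.prodContinuousLinearEquiv 2 ℂ H H).symm (α, β)).fst = α := rfl
      have hc2 : ((WithLp.prodContinuousLinearEquiv 2 ℂ H H).symm (α, β)).snd = β := rfl
      rw [hc1, hc2]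
      have g1 : ⟪Pa w.fst, α⟫ = ⟪w.fst, α⟫ := by
        rw [aux_sym_inner hPa_sa, hPa_fix α hαA]
      have g2 : ⟪Pb w.snd, β⟫ = ⟪w.snd, β⟫ := by
        rw [aux_sym_inner hPb_sa, hPb_fix β hβB]
      have hneg : Pb w.snd = -(Pa w.fst) := eq_neg_of_add_eq_zero_right hw
      have hM0 : ⟪Pa w.fst, α - β⟫ = 0 :=
        (Submodule.mem_orthogonal M (α - β)).mp hαβM (Pa w.fst) hm0M
      rw [inner_sub_right] at hM0
      rw [← g1, ← g2, hneg, inner_neg_left]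
      linear_combination hM0
    obtain ⟨x, hx⟩ := htmem
    have h1 : (WithLp.prodContinuousLinearEquiv 2 ℂ H H) (D x) = (Pa x, Pb x) := by
      rw [hD_apply x]
      exact ContinuousLinearEquiv.apply_symm_apply _ _
    have h2 : (WithLp.prodContinuousLinearEquiv 2 ℂ H H)
        ((WithLp.prodContinuousLinearEquiv 2 ℂ H H).symm (α, β)) = (α, β) :=
      ContinuousLinearEquiv.apply_symm_apply _ _
    rw [ContinuousLinearMap.coe_coe] at hx
    rw [hx, h2] at h1
    have hPax : Pa x = α := (congrArg Prod.fst h1).symm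
    have hPbx : Pb x = β := (congrArg Prod.snd h1).symm
    refine ⟨x, ?_⟩
    rw [ContinuousLinearMap.coe_coe, add_apply]
    have hSx : S x = S β := by
      have hmem : x - Pb x ∈ LinearMap.ker S.toLinearMap := by
        rw [hkerS]
        exact Submodule.sub_starProjection_mem_orthogonal x
      rw [LinearMap.mem_ker, map_sub, ContinuousLinearMap.coe_coe] at hmem
      rw [sub_eq_zero.mp hmem, hPbx]
    have hStx : adjoint S x = adjoint S α := by
      have hmem : x - Pa x ∈ LinearMap.ker (adjoint S).toLinearMap := by
        rw [hkerSt]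
        exact Submodule.sub_starProjection_mem_orthogonal x
      rw [LinearMap.mem_ker, map_sub, ContinuousLinearMap.coe_coe] at hmem
      rw [sub_eq_zero.mp hmem, hPax]
    rw [hSx, hStx, hSβ, hStα]
    abel
  refine ⟨⟨fun h => ?_, fun h => ?_⟩, fun h => heasy h⟩
  · rw [heasy h]
    exact h
  · rw [← hhard h]
    exact h

end AuxH
end
end

section
/- There exist orthogonal projections P, Q, R on C⁴ such that T = PQR is not a CoR operator: specifically, with P the projection onto span(e₁,e₂), Q = [[1/2,0,0,1/2],[0,1,0,0],[0,0,0,0],[1/2,0,0,1/2]], and R = [[1,0,0,0],[0,3/4,0,√3/4],[0,0,1,0],[0,√3/4,0,1/4]], the vector x = (1,0,0,0) lies in R(T) ∩ R(T*) but Tx ≠ T*x. -/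
open ContinuousLinearMap Matrix

noncomputable def P19 : Matrix (Fin 4) (Fin 4) ℂ :=
  !![1, 0, 0, 0; 0, 1, 0, 0; 0, 0, 0, 0; 0, 0, 0, 0]

noncomputable def Q19 : Matrix (Fin 4) (Fin 4) ℂ :=
  !![1/2, 0, 0, 1/2; 0, 1, 0, 0; 0, 0, 0, 0; 1/2, 0, 0, 1/2]

noncomputable def R19 : Matrix (Fin 4) (Fin 4) ℂ :=
  !![1, 0, 0, 0;
     0, 3/4, 0, (Real.sqrt 3 : ℂ)/4;
     0, 0, 1, 0;
     0, (Real.sqrt 3 : ℂ)/4, 0, 1/4]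

lemma sqrt3_sq : (Real.sqrt 3 : ℂ) * (Real.sqrt 3 : ℂ) = 3 := by
  norm_cast
  exact Real.mul_self_sqrt (by norm_num)

lemma hT : P19 * Q19 * R19 =
    !![1/2, (Real.sqrt 3 : ℂ)/8, 0, 1/8;
       0, 3/4, 0, (Real.sqrt 3 : ℂ)/4;
       0, 0, 0, 0; 0, 0, 0, 0] := by
  ext i j
  fin_cases i <;> fin_cases j <;>
    simp [P19, Q19, R19, Matrix.mul_apply, Fin.sum_univ_four,
      Matrix.vecHead, Matrix.vecTail] <;>
    first
      | ring1
      | linear_combination ((1 : ℂ)/16) * sqrt3_sq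
      | linear_combination (-(1 : ℂ)/16) * sqrt3_sq

lemma hTH : (P19 * Q19 * R19)ᴴ =
    !![1/2, 0, 0, 0;
       (Real.sqrt 3 : ℂ)/8, 3/4, 0, 0;
       0, 0, 0, 0;
       1/8, (Real.sqrt 3 : ℂ)/4, 0, 0] := by
  rw [hT]
  ext i j
  fin_cases i <;> fin_cases j <;>
    simp [Matrix.conjTranspose_apply, Matrix.vecHead, Matrix.vecTail]

lemma adj_eq (A : Matrix (Fin 4) (Fin 4) ℂ) :
    adjoint (toEuclideanCLM (𝕜 := ℂ) A) = toEuclideanCLM (𝕜 := ℂ) Aᴴ := by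
  rw [← Matrix.star_eq_conjTranspose, map_star]
  rfl

set_option maxHeartbeats 2000000 in
theorem stmt19 :
    P19ᴴ = P19 ∧ P19 * P19 = P19 ∧ Q19ᴴ = Q19 ∧ Q19 * Q19 = Q19 ∧
      R19ᴴ = R19 ∧ R19 * R19 = R19 ∧
      (let Tc := Matrix.toEuclideanCLM (𝕜 := ℂ) (P19 * Q19 * R19)
       let x : EuclideanSpace ℂ (Fin 4) := EuclideanSpace.single 0 1
       x ∈ LinearMap.range Tc.toLinearMap ⊓ LinearMap.range (adjoint Tc).toLinearMap ∧ Tc x ≠ adjoint Tc x) := by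
  refine ⟨?_, ?_, ?_, ?_, ?_, ?_, ?_⟩
  · ext i j; fin_cases i <;> fin_cases j <;>
      simp [P19, Matrix.vecHead, Matrix.vecTail]
  · ext i j; fin_cases i <;> fin_cases j <;>
      simp [P19, Matrix.mul_apply, Fin.sum_univ_four, Matrix.vecHead, Matrix.vecTail]
  · ext i j; fin_cases i <;> fin_cases j <;>
      simp [Q19, Matrix.vecHead, Matrix.vecTail]
  · ext i j; fin_cases i <;> fin_cases j <;>
      simp [Q19, Matrix.mul_apply, Fin.sum_univ_four, Matrix.vecHead, Matrix.vecTail] <;>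
      norm_num
  · ext i j; fin_cases i <;> fin_cases j <;>
      simp [R19, Matrix.vecHead, Matrix.vecTail]
  · ext i j; fin_cases i <;> fin_cases j <;>
      simp [R19, Matrix.mul_apply, Fin.sum_univ_four, Matrix.vecHead, Matrix.vecTail] <;>
      first
        | ring1
        | linear_combination ((1 : ℂ)/16) * sqrt3_sq
        | linear_combination (-(1 : ℂ)/16) * sqrt3_sq
  · intro Tc x
    have hTc : Tc = Matrix.toEuclideanCLM (𝕜 := ℂ) (P19 * Q19 * R19) := rfl
    have hx : x = (WithLp.equiv 2 (Fin 4 → ℂ)).symm ![1, 0, 0, 0] := by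
      ext i
      fin_cases i <;> simp [x, EuclideanSpace.single_apply]
    constructor
    · constructor
      · refine ⟨(WithLp.equiv 2 (Fin 4 → ℂ)).symm ![2, 0, 0, 0], ?_⟩
        show Tc _ = x
        rw [hx, hTc, WithLp.equiv_symm_apply, toEuclideanCLM_toLp, hT]
        congr 1
        funext i
        fin_cases i <;>
          simp [Matrix.mulVec, dotProduct, Fin.sum_univ_four,
            Matrix.vecHead, Matrix.vecTail] <;> norm_num
      · refine ⟨(WithLp.equiv 2 (Fin 4 → ℂ)).symm
          ![2, -(Real.sqrt 3 : ℂ)/3, 0, 0], ?_⟩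
        show adjoint Tc _ = x
        rw [hx, hTc, adj_eq, WithLp.equiv_symm_apply, toEuclideanCLM_toLp, hTH]
        congr 1
        funext i
        fin_cases i <;>
          simp [Matrix.mulVec, dotProduct, Fin.sum_univ_four,
            Matrix.vecHead, Matrix.vecTail] <;>
          first
            | ring1
            | linear_combination ((1 : ℂ)/12) * sqrt3_sq
            | linear_combination (-(1 : ℂ)/12) * sqrt3_sq
    · have hTx : Tc x = (WithLp.equiv 2 (Fin 4 → ℂ)).symm
          ![1/2, 0, 0, 0] := by
        rw [hx, hTc, WithLp.equiv_symm_apply, toEuclideanCLM_toLp, hT]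
        congr 1
        funext i
        fin_cases i <;>
          simp [Matrix.mulVec, dotProduct, Fin.sum_univ_four,
            Matrix.vecHead, Matrix.vecTail]
      have hTHx : adjoint Tc x = (WithLp.equiv 2 (Fin 4 → ℂ)).symm
          ![1/2, (Real.sqrt 3 : ℂ)/8, 0, 1/8] := by
        rw [hx, hTc, adj_eq, WithLp.equiv_symm_apply, toEuclideanCLM_toLp, hTH]
        congr 1
        funext i
        fin_cases i <;>
          simp [Matrix.mulVec, dotProduct, Fin.sum_univ_four,
            Matrix.vecHead, Matrix.vecTail]
      rw [hTx, hTHx]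
      intro h
      have h1 := congrFun (congrArg (WithLp.equiv 2 (Fin 4 → ℂ)) h) 1
      simp [Matrix.vecHead, Matrix.vecTail] at h1
      have h1' : (0:ℝ) = Real.sqrt 3 / 8 := by exact_mod_cast h1
      have h2 : (0:ℝ) < Real.sqrt 3 := Real.sqrt_pos.mpr (by norm_num)
      linarith
end
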